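/- arXiv:2209.08022 — 2 statements merged into one kernel-verified Lean document; each statement's English description precedes it below -/
import Mathlib

section
/- Let S be a polygraph and C = S* the free ω-category it generates. Then the triple (E(C), o, ξ), where E(C) = E(S)* is the free ω-category on the polygraph E(S) with its canonical origin o and expansion ξ, together with the inclusion ι : C → E(C), exhibits E(C) as the value at C of the left adjoint to the forgetful functor U : Exp → ωCat; that is, for every ω-category with expansion (D, o, ξ) and every ω-functor f : C → D, there is a unique morphism f̂ : (E(C), o, ξ) → (D, o, ξ) in Exp with f̂ ∘ ι = f. Consequently the expansion monad T = U∘F takes S* to E(S)*. -/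
/-! Formalization of notions from "Orientals as free algebras" (Ara–Lafont–Métayer),
following Burroni's expansion monad construction. Strict ω-categories are encoded
as a single set of cells with a dimension function, together with (total) source,
target, composition and unit operations, whose axioms are required to hold on the
appropriate domains of definition. -/

noncomputable section

namespace Orientals

open CategoryTheory

universe u v w

/-- The underlying data of a strict ω-category. `comp p x y` denotes the
`p`-composition `x ∘_p y` ("x after y"), meaningful when `p < dim x = dim y`
and the iterated `p`-source of `x` equals the iterated `p`-target of `y`. -/
structure PreOmegaCat : Type (u + 1) where
  Cell : Type u
  dim : Cell → ℕ
  src : Cell → Cell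
  tgt : Cell → Cell
  comp : ℕ → Cell → Cell → Cell
  unit : Cell → Cell

namespace PreOmegaCat

variable (C : PreOmegaCat.{u})

/-- Iterated source, down to dimension `p`. -/
def srcI (p : ℕ) (x : C.Cell) : C.Cell := C.src^[C.dim x - p] x

/-- Iterated target, down to dimension `p`. -/
def tgtI (p : ℕ) (x : C.Cell) : C.Cell := C.tgt^[C.dim x - p] x

/-- `x ∘_p y` is defined when `p < dim x = dim y` and `s_p x = t_p y`. -/
abbrev Composable (p : ℕ) (x y : C.Cell) : Prop :=
  p < C.dim x ∧ C.dim y = C.dim x ∧ C.srcI p x = C.tgtI p y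

/-- Pad a cell with iterated units up to dimension `m`. -/
def pad (m : ℕ) (x : C.Cell) : C.Cell := C.unit^[m - C.dim x] x

/-- Composition of two cells of possibly different dimensions, the lower
dimensional one being padded with units (the abbreviation `x ∘_q u` of the paper). -/
def mcomp (p : ℕ) (x y : C.Cell) : C.Cell :=
  C.comp p (C.pad (max (C.dim x) (C.dim y)) x) (C.pad (max (C.dim x) (C.dim y)) y)

end PreOmegaCat

namespace PreOmegaCat

/-- `foldComp b s k = b ∘_0 s 0 ∘_1 s 1 ∘_2 ⋯ ∘_{k-1} s (k-1)`, parenthesized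
with priority to the lowest dimensional compositions (i.e. left-nested). -/
def foldComp (C : PreOmegaCat.{u}) (b : C.Cell) (s : ℕ → C.Cell) : ℕ → C.Cell
  | 0 => b
  | k + 1 => C.mcomp k (foldComp C b s k) (s k)

end PreOmegaCat

/-- A strict ω-category: the data of a `PreOmegaCat` satisfying the globularity,
associativity, unit, interchange and functoriality-of-units laws on their domains
of definition. By convention, source and target fix the `0`-cells. -/
structure OmegaCat extends PreOmegaCat.{u} : Type (u + 1) where
  dim_src : ∀ x, dim x ≠ 0 → dim (src x) = dim x - 1
  dim_tgt : ∀ x, dim x ≠ 0 → dim (tgt x) = dim x - 1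
  src_dim0 : ∀ x, dim x = 0 → src x = x
  tgt_dim0 : ∀ x, dim x = 0 → tgt x = x
  glob_ss : ∀ x, 2 ≤ dim x → src (src x) = src (tgt x)
  glob_tt : ∀ x, 2 ≤ dim x → tgt (src x) = tgt (tgt x)
  dim_unit : ∀ x, dim (unit x) = dim x + 1
  src_unit : ∀ x, src (unit x) = x
  tgt_unit : ∀ x, tgt (unit x) = x
  dim_comp : ∀ p x y, toPreOmegaCat.Composable p x y → dim (comp p x y) = dim x
  src_comp_top : ∀ p x y, toPreOmegaCat.Composable p x y → dim x = p + 1 →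
    src (comp p x y) = src y
  tgt_comp_top : ∀ p x y, toPreOmegaCat.Composable p x y → dim x = p + 1 →
    tgt (comp p x y) = tgt x
  src_comp : ∀ p x y, toPreOmegaCat.Composable p x y → p + 1 < dim x →
    src (comp p x y) = comp p (src x) (src y)
  tgt_comp : ∀ p x y, toPreOmegaCat.Composable p x y → p + 1 < dim x →
    tgt (comp p x y) = comp p (tgt x) (tgt y)
  comp_assoc : ∀ p x y z, toPreOmegaCat.Composable p x y →
    toPreOmegaCat.Composable p y z →
    comp p (comp p x y) z = comp p x (comp p y z)
  comp_unit_src : ∀ p x, p < dim x →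
    comp p x (unit^[dim x - p] (toPreOmegaCat.srcI p x)) = x
  comp_unit_tgt : ∀ p x, p < dim x →
    comp p (unit^[dim x - p] (toPreOmegaCat.tgtI p x)) x = x
  interchange : ∀ p q x y x' y', q < p →
    toPreOmegaCat.Composable p x y → toPreOmegaCat.Composable p x' y' →
    toPreOmegaCat.Composable q x x' → toPreOmegaCat.Composable q y y' →
    comp q (comp p x y) (comp p x' y') = comp p (comp q x x') (comp q y y')
  unit_comp : ∀ p x y, toPreOmegaCat.Composable p x y →
    unit (comp p x y) = comp p (unit x) (unit y)

/-- A (strict) ω-functor: a map of cells preserving dimension, sources, targets,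
the defined compositions, and units. -/
@[ext]
structure OmegaFunctor (C D : OmegaCat.{u}) : Type u where
  map : C.Cell → D.Cell
  map_dim : ∀ x, D.dim (map x) = C.dim x
  map_src : ∀ x, map (C.src x) = D.src (map x)
  map_tgt : ∀ x, map (C.tgt x) = D.tgt (map x)
  map_comp : ∀ p x y, C.Composable p x y →
    map (C.comp p x y) = D.comp p (map x) (map y)
  map_unit : ∀ x, map (C.unit x) = D.unit (map x)

namespace OmegaFunctor

/-- The identity ω-functor. -/
def idF (C : OmegaCat.{u}) : OmegaFunctor C C where
  map := _root_.id
  map_dim _ := rfl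
  map_src _ := rfl
  map_tgt _ := rfl
  map_comp _ _ _ _ := rfl
  map_unit _ := rfl

theorem map_srcI {C D : OmegaCat.{u}} (f : OmegaFunctor C D) (p : ℕ) (x : C.Cell) :
    f.map (C.srcI p x) = D.srcI p (f.map x) := by
  show f.map (C.src^[C.dim x - p] x) = D.src^[D.dim (f.map x) - p] (f.map x)
  rw [f.map_dim]
  exact Function.Semiconj.iterate_right f.map_src (C.dim x - p) x

theorem map_tgtI {C D : OmegaCat.{u}} (f : OmegaFunctor C D) (p : ℕ) (x : C.Cell) :
    f.map (C.tgtI p x) = D.tgtI p (f.map x) := by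
  show f.map (C.tgt^[C.dim x - p] x) = D.tgt^[D.dim (f.map x) - p] (f.map x)
  rw [f.map_dim]
  exact Function.Semiconj.iterate_right f.map_tgt (C.dim x - p) x

theorem map_composable {C D : OmegaCat.{u}} (f : OmegaFunctor C D) {p : ℕ}
    {x y : C.Cell} (h : C.Composable p x y) : D.Composable p (f.map x) (f.map y) := by
  obtain ⟨h1, h2, h3⟩ := h
  refine ⟨?_, ?_, ?_⟩
  · rw [f.map_dim]; exact h1
  · rw [f.map_dim, f.map_dim]; exact h2
  · rw [← f.map_srcI, ← f.map_tgtI, h3]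

/-- Composition of ω-functors. -/
def compF {C D E : OmegaCat.{u}} (f : OmegaFunctor C D) (g : OmegaFunctor D E) :
    OmegaFunctor C E where
  map x := g.map (f.map x)
  map_dim x := by rw [g.map_dim, f.map_dim]
  map_src x := by rw [f.map_src, g.map_src]
  map_tgt x := by rw [f.map_tgt, g.map_tgt]
  map_comp p x y h := by
    rw [f.map_comp p x y h, g.map_comp p _ _ (f.map_composable h)]
  map_unit x := by rw [f.map_unit, g.map_unit]

end OmegaFunctor

/-- The category `ωCat` of strict ω-categories and strict ω-functors. -/
instance : Category.{u, u + 1} OmegaCat.{u} where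
  Hom := OmegaFunctor
  id := OmegaFunctor.idF
  comp := OmegaFunctor.compF
  id_comp f := by apply OmegaFunctor.ext; rfl
  comp_id f := by apply OmegaFunctor.ext; rfl
  assoc f g h := by apply OmegaFunctor.ext; rfl

/-- The underlying cell map of a morphism in `ωCat`. -/
def homMap {C D : OmegaCat.{u}} (f : C ⟶ D) : C.Cell → D.Cell := OmegaFunctor.map f

/-- The empty (initial) ω-category. -/
def emptyOmega : OmegaCat.{u} where
  Cell := PEmpty
  dim x := x.elim
  src x := x.elim
  tgt x := x.elim
  comp _ x _ := x.elim
  unit x := x.elim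
  dim_src x := x.elim
  dim_tgt x := x.elim
  src_dim0 x := x.elim
  tgt_dim0 x := x.elim
  glob_ss x := x.elim
  glob_tt x := x.elim
  dim_unit x := x.elim
  src_unit x := x.elim
  tgt_unit x := x.elim
  dim_comp _ x := x.elim
  src_comp_top _ x := x.elim
  tgt_comp_top _ x := x.elim
  src_comp _ x := x.elim
  tgt_comp _ x := x.elim
  comp_assoc _ x := x.elim
  comp_unit_src _ x := x.elim
  comp_unit_tgt _ x := x.elim
  interchange _ _ x := x.elim
  unit_comp _ x := x.elim

/-- An expansion on an ω-category `C`: an origin `orig` (a `0`-cell) together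
with, for each `n`-cell `x`, an `(n+1)`-cell `xi x` (written `ξ_x` in the paper)
with `ξ_x : orig → x` for `n = 0` and
`ξ_x : ξ_{t x_{n-1}} → x ∘_0 ξ_{s x_0} ∘_1 ⋯ ∘_{n-1} ξ_{s x_{n-1}}` for `n > 0`,
compatible with compositions and units, and degenerate on `orig` and on the
cells `ξ_u`. -/
structure Expansion (C : OmegaCat.{u}) : Type u where
  orig : C.Cell
  dim_orig : C.dim orig = 0
  xi : C.Cell → C.Cell
  dim_xi : ∀ x, C.dim (xi x) = C.dim x + 1
  xi_src0 : ∀ x, C.dim x = 0 → C.src (xi x) = orig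
  xi_src : ∀ x, C.dim x ≠ 0 → C.src (xi x) = xi (C.tgt x)
  xi_tgt : ∀ x, C.tgt (xi x) = C.foldComp x (fun i => xi (C.srcI i x)) (C.dim x)
  xi_comp : ∀ p x y, C.Composable p y x →
    xi (C.comp p y x) =
      C.mcomp (p + 1)
        (C.mcomp p (C.foldComp (C.tgtI (p + 1) y) (fun i => xi (C.srcI i x)) p) (xi x))
        (xi y)
  xi_unit : ∀ u, xi (C.unit u) = C.unit (xi u)
  xi_xi : ∀ u, xi (xi u) = C.unit (xi u)
  xi_orig : xi orig = C.unit orig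

/-- An object of the category `Exp`: an ω-category endowed with an expansion. -/
structure ExpCatObj : Type (u + 1) where
  cat : OmegaCat.{u}
  exp : Expansion cat

/-- A morphism of ω-categories with expansion: an ω-functor preserving the
origin and commuting with the expansions. -/
@[ext]
structure ExpHom (X Y : ExpCatObj.{u}) : Type u where
  func : OmegaFunctor X.cat Y.cat
  map_orig : func.map X.exp.orig = Y.exp.orig
  map_xi : ∀ x, func.map (X.exp.xi x) = Y.exp.xi (func.map x)

/-- The category `Exp` of ω-categories endowed with an expansion. -/
instance : Category.{u, u + 1} ExpCatObj.{u} where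
  Hom := ExpHom
  id X := ⟨OmegaFunctor.idF X.cat, rfl, fun _ => rfl⟩
  comp {X Y Z} f g :=
    ⟨OmegaFunctor.compF f.func g.func,
      by show g.func.map (f.func.map _) = _; rw [f.map_orig, g.map_orig],
      fun x => by show g.func.map (f.func.map _) = _; rw [f.map_xi, g.map_xi]; rfl⟩
  id_comp f := by apply ExpHom.ext; apply OmegaFunctor.ext; rfl
  comp_id f := by apply ExpHom.ext; apply OmegaFunctor.ext; rfl
  assoc f g h := by apply ExpHom.ext; apply OmegaFunctor.ext; rfl

/-- The forgetful functor `U : Exp → ωCat`. -/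
def forgetExp : ExpCatObj.{u} ⥤ OmegaCat.{u} where
  obj X := X.cat
  map f := f.func
  map_id _ := rfl
  map_comp _ _ := rfl

/-- The underlying ω-functor with expansion of a morphism in `Exp`. -/
def expHomOf {X Y : ExpCatObj.{u}} (f : X ⟶ Y) : ExpHom X Y := f

/-- An "`n`-functor" from `C` to the `n`-truncation of `D`: a map of cells whose
structure-preservation properties are only required on cells of dimension `≤ n`
(the values on higher cells being irrelevant). -/
structure PartFunc (C D : OmegaCat.{u}) (n : ℕ) : Type u where
  map : C.Cell → D.Cell
  map_dim : ∀ x, C.dim x ≤ n → D.dim (map x) = C.dim x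
  map_src : ∀ x, C.dim x ≤ n → map (C.src x) = D.src (map x)
  map_tgt : ∀ x, C.dim x ≤ n → map (C.tgt x) = D.tgt (map x)
  map_comp : ∀ p x y, C.dim x ≤ n → C.Composable p x y →
    map (C.comp p x y) = D.comp p (map x) (map y)
  map_unit : ∀ x, C.dim x + 1 ≤ n → map (C.unit x) = D.unit (map x)

/-- `C` is freely generated, in the sense of polygraphs, by the graded set of
cells `gen`: the generators of dimension `n` are exactly `gen n`, the `0`-cells
are exactly the `0`-generators, and for each `n` the universal property of free
extension holds: any `n`-functor to (the `n`-truncation of) an ω-category `D`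
together with a compatible assignment of the `(n+1)`-generators extends,
uniquely on cells of dimension `≤ n + 1`, to an `(n+1)`-functor. -/
def FreelyGeneratedBy (C : OmegaCat.{u}) (gen : ℕ → Set C.Cell) : Prop :=
  (∀ n x, x ∈ gen n → C.dim x = n) ∧
  (∀ x, C.dim x = 0 → x ∈ gen 0) ∧
  ∀ (n : ℕ) (D : OmegaCat.{u}) (f : PartFunc C D n) (e : C.Cell → D.Cell),
    (∀ a ∈ gen (n + 1), D.dim (e a) = n + 1 ∧
        D.src (e a) = f.map (C.src a) ∧ D.tgt (e a) = f.map (C.tgt a)) →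
    (∃ g : PartFunc C D (n + 1),
        (∀ x, C.dim x ≤ n → g.map x = f.map x) ∧ ∀ a ∈ gen (n + 1), g.map a = e a) ∧
    (∀ g g' : PartFunc C D (n + 1),
        ((∀ x, C.dim x ≤ n → g.map x = f.map x) ∧ ∀ a ∈ gen (n + 1), g.map a = e a) →
        ((∀ x, C.dim x ≤ n → g'.map x = f.map x) ∧ ∀ a ∈ gen (n + 1), g'.map a = e a) →
        ∀ x, C.dim x ≤ n + 1 → g.map x = g'.map x)

/-- An ω-category is an `n`-category when all its cells of dimension `> n`
are units. -/
def IsNCat (C : OmegaCat.{u}) (n : ℕ) : Prop :=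
  ∀ x, n < C.dim x → ∃ y, x = C.unit y

/-- The generators of the polygraph `E(S)` of the free expansion: in dimension
`0`, the (images of the) generators of `S` together with the origin; in
dimension `n+1`, the generators of `S` together with the cells `ξ_a = r_a`
for `a` a generator of dimension `n`. -/
def expandedGens (C C' : OmegaCat.{u}) (E : Expansion C') (ι : OmegaFunctor C C')
    (gen : ℕ → Set C.Cell) : ℕ → Set C'.Cell
  | 0 => (ι.map '' gen 0) ∪ {E.orig}
  | n + 1 => (ι.map '' gen (n + 1)) ∪ (E.xi '' (ι.map '' gen n))

/-- The canonical generators of `T C = E(S)*` for `C = S*` free on the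
polygraph `gen`, where `T = U ∘ F` is the expansion monad of an adjunction
`F ⊣ U` : the images under the unit `η : C → T C` of the generators of `S`,
the origin, and the cells `ξ_{η a}`. -/
def genT (F : OmegaCat.{u} ⥤ ExpCatObj.{u}) (adj : F ⊣ forgetExp)
    (C : OmegaCat.{u}) (gen : ℕ → Set C.Cell) :
    ℕ → Set ((F ⋙ forgetExp).obj C).Cell
  | 0 => (homMap (adj.unit.app C) '' gen 0) ∪ {(F.obj C).exp.orig}
  | n + 1 => (homMap (adj.unit.app C) '' gen (n + 1)) ∪
      ((F.obj C).exp.xi '' (homMap (adj.unit.app C) '' gen n))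



namespace OmegaCat

variable {C : OmegaCat.{u}}

theorem dim_src_le (x : C.Cell) : C.dim (C.src x) ≤ C.dim x := by
  by_cases h : C.dim x = 0
  · rw [C.src_dim0 x h]
  · rw [C.dim_src x h]; omega

theorem dim_tgt_le (x : C.Cell) : C.dim (C.tgt x) ≤ C.dim x := by
  by_cases h : C.dim x = 0
  · rw [C.tgt_dim0 x h]
  · rw [C.dim_tgt x h]; omega

theorem dim_src_iter (k : ℕ) (x : C.Cell) (h : k ≤ C.dim x) :
    C.dim (C.src^[k] x) = C.dim x - k := by
  induction k generalizing x with
  | zero => simp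
  | succ k ih =>
    rw [Function.iterate_succ_apply]
    have h0 : C.dim x ≠ 0 := by omega
    have := ih (C.src x) (by rw [C.dim_src x h0]; omega)
    rw [this, C.dim_src x h0]; omega

theorem dim_tgt_iter (k : ℕ) (x : C.Cell) (h : k ≤ C.dim x) :
    C.dim (C.tgt^[k] x) = C.dim x - k := by
  induction k generalizing x with
  | zero => simp
  | succ k ih =>
    rw [Function.iterate_succ_apply]
    have h0 : C.dim x ≠ 0 := by omega
    have := ih (C.tgt x) (by rw [C.dim_tgt x h0]; omega)
    rw [this, C.dim_tgt x h0]; omega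

theorem dim_srcI (p : ℕ) (x : C.Cell) (h : p ≤ C.dim x) : C.dim (C.srcI p x) = p := by
  unfold PreOmegaCat.srcI
  rw [dim_src_iter (C.dim x - p) x (by omega)]; omega

theorem dim_tgtI (p : ℕ) (x : C.Cell) (h : p ≤ C.dim x) : C.dim (C.tgtI p x) = p := by
  unfold PreOmegaCat.tgtI
  rw [dim_tgt_iter (C.dim x - p) x (by omega)]; omega

theorem srcI_of_le {p : ℕ} {x : C.Cell} (h : C.dim x ≤ p) : C.srcI p x = x := by
  unfold PreOmegaCat.srcI
  rw [Nat.sub_eq_zero_of_le h]; rfl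

theorem tgtI_of_le {p : ℕ} {x : C.Cell} (h : C.dim x ≤ p) : C.tgtI p x = x := by
  unfold PreOmegaCat.tgtI
  rw [Nat.sub_eq_zero_of_le h]; rfl

theorem srcI_self (x : C.Cell) : C.srcI (C.dim x) x = x := srcI_of_le le_rfl

theorem tgtI_self (x : C.Cell) : C.tgtI (C.dim x) x = x := tgtI_of_le le_rfl

theorem srcI_src {p : ℕ} {x : C.Cell} (h : p < C.dim x) :
    C.srcI p (C.src x) = C.srcI p x := by
  unfold PreOmegaCat.srcI
  have h0 : C.dim x ≠ 0 := by omega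
  rw [C.dim_src x h0]
  have : C.dim x - p = (C.dim x - 1 - p) + 1 := by omega
  rw [this, Function.iterate_succ_apply]

theorem tgtI_tgt {p : ℕ} {x : C.Cell} (h : p < C.dim x) :
    C.tgtI p (C.tgt x) = C.tgtI p x := by
  unfold PreOmegaCat.tgtI
  have h0 : C.dim x ≠ 0 := by omega
  rw [C.dim_tgt x h0]
  have : C.dim x - p = (C.dim x - 1 - p) + 1 := by omega
  rw [this, Function.iterate_succ_apply]

theorem srcI_tgt {p : ℕ} {x : C.Cell} (h : p + 2 ≤ C.dim x) :
    C.srcI p (C.tgt x) = C.srcI p x := by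
  unfold PreOmegaCat.srcI
  have h0 : C.dim x ≠ 0 := by omega
  rw [C.dim_tgt x h0]
  have e1 : C.dim x - 1 - p = (C.dim x - 2 - p) + 1 := by omega
  have e2 : C.dim x - p = (C.dim x - 2 - p) + 1 + 1 := by omega
  rw [e1, e2]
  simp only [Function.iterate_succ_apply]
  congr 1
  exact (C.glob_ss x (by omega)).symm

theorem tgtI_src {p : ℕ} {x : C.Cell} (h : p + 2 ≤ C.dim x) :
    C.tgtI p (C.src x) = C.tgtI p x := by
  unfold PreOmegaCat.tgtI
  have h0 : C.dim x ≠ 0 := by omega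
  rw [C.dim_src x h0]
  have e1 : C.dim x - 1 - p = (C.dim x - 2 - p) + 1 := by omega
  have e2 : C.dim x - p = (C.dim x - 2 - p) + 1 + 1 := by omega
  rw [e1, e2]
  simp only [Function.iterate_succ_apply]
  congr 1
  exact C.glob_tt x (by omega)

theorem srcI_srcI {q p : ℕ} {x : C.Cell} (hqp : q ≤ p) :
    C.srcI q (C.srcI p x) = C.srcI q x := by
  by_cases hp : C.dim x ≤ p
  · rw [srcI_of_le hp]
  · push_neg at hp
    show C.src^[C.dim (C.srcI p x) - q] (C.srcI p x) = _
    rw [dim_srcI p x (le_of_lt hp)]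
    unfold PreOmegaCat.srcI
    rw [← Function.iterate_add_apply]
    congr 1; omega

theorem tgtI_tgtI {q p : ℕ} {x : C.Cell} (hqp : q ≤ p) :
    C.tgtI q (C.tgtI p x) = C.tgtI q x := by
  by_cases hp : C.dim x ≤ p
  · rw [tgtI_of_le hp]
  · push_neg at hp
    show C.tgt^[C.dim (C.tgtI p x) - q] (C.tgtI p x) = _
    rw [dim_tgtI p x (le_of_lt hp)]
    unfold PreOmegaCat.tgtI
    rw [← Function.iterate_add_apply]
    congr 1; omega

theorem srcI_tgt_iter {q : ℕ} : ∀ (j : ℕ) (x : C.Cell), q + 1 + j ≤ C.dim x →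
    C.srcI q (C.tgt^[j] x) = C.srcI q x := by
  intro j
  induction j with
  | zero => intro x _; rfl
  | succ j ih =>
    intro x h
    rw [Function.iterate_succ_apply]
    have h0 : C.dim x ≠ 0 := by omega
    rw [ih (C.tgt x) (by rw [C.dim_tgt x h0]; omega)]
    exact srcI_tgt (by omega)

theorem tgtI_src_iter {q : ℕ} : ∀ (j : ℕ) (x : C.Cell), q + 1 + j ≤ C.dim x →
    C.tgtI q (C.src^[j] x) = C.tgtI q x := by
  intro j
  induction j with
  | zero => intro x _; rfl
  | succ j ih =>
    intro x h
    rw [Function.iterate_succ_apply]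
    have h0 : C.dim x ≠ 0 := by omega
    rw [ih (C.src x) (by rw [C.dim_src x h0]; omega)]
    exact tgtI_src (by omega)

theorem srcI_tgtI {q p : ℕ} {x : C.Cell} (hqp : q < p) :
    C.srcI q (C.tgtI p x) = C.srcI q x := by
  by_cases hp : C.dim x ≤ p
  · rw [tgtI_of_le hp]
  · exact srcI_tgt_iter (C.dim x - p) x (by omega)

theorem tgtI_srcI {q p : ℕ} {x : C.Cell} (hqp : q < p) :
    C.tgtI q (C.srcI p x) = C.tgtI q x := by
  by_cases hp : C.dim x ≤ p
  · rw [srcI_of_le hp]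
  · exact tgtI_src_iter (C.dim x - p) x (by omega)

/-! unit iterates -/

theorem dim_unit_iter (k : ℕ) (x : C.Cell) : C.dim (C.unit^[k] x) = C.dim x + k := by
  induction k generalizing x with
  | zero => simp
  | succ k ih =>
    rw [Function.iterate_succ_apply', C.dim_unit, ih]
    omega

theorem srcI_succ_eq_src {p : ℕ} {x : C.Cell} (h : C.dim x = p + 1) :
    C.srcI p x = C.src x := by
  unfold PreOmegaCat.srcI
  have e : C.dim x - p = 1 := by omega
  rw [e, Function.iterate_one]

theorem tgtI_succ_eq_tgt {p : ℕ} {x : C.Cell} (h : C.dim x = p + 1) :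
    C.tgtI p x = C.tgt x := by
  unfold PreOmegaCat.tgtI
  have e : C.dim x - p = 1 := by omega
  rw [e, Function.iterate_one]

theorem src_iter_unit_iter : ∀ (j k : ℕ) (x : C.Cell), j ≤ k →
    C.src^[j] (C.unit^[k] x) = C.unit^[k - j] x := by
  intro j
  induction j with
  | zero => intro k x _; simp
  | succ j ih =>
    intro k x h
    have : k = (k - 1) + 1 := by omega
    rw [Function.iterate_succ_apply, this, Function.iterate_succ_apply',
      C.src_unit, ih (k-1) x (by omega)]
    congr 1; omega

theorem tgt_iter_unit_iter : ∀ (j k : ℕ) (x : C.Cell), j ≤ k →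
    C.tgt^[j] (C.unit^[k] x) = C.unit^[k - j] x := by
  intro j
  induction j with
  | zero => intro k x _; simp
  | succ j ih =>
    intro k x h
    have : k = (k - 1) + 1 := by omega
    rw [Function.iterate_succ_apply, this, Function.iterate_succ_apply',
      C.tgt_unit, ih (k-1) x (by omega)]
    congr 1; omega

theorem srcI_unit_iter_high {p k : ℕ} {x : C.Cell} (h1 : C.dim x ≤ p)
    (h2 : p ≤ C.dim x + k) : C.srcI p (C.unit^[k] x) = C.unit^[p - C.dim x] x := by
  unfold PreOmegaCat.srcI
  rw [dim_unit_iter, src_iter_unit_iter (C.dim x + k - p) k x (by omega)]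
  congr 1; omega

theorem tgtI_unit_iter_high {p k : ℕ} {x : C.Cell} (h1 : C.dim x ≤ p)
    (h2 : p ≤ C.dim x + k) : C.tgtI p (C.unit^[k] x) = C.unit^[p - C.dim x] x := by
  unfold PreOmegaCat.tgtI
  rw [dim_unit_iter, tgt_iter_unit_iter (C.dim x + k - p) k x (by omega)]
  congr 1; omega

theorem srcI_unit_iter_low {p k : ℕ} {x : C.Cell} (h : p ≤ C.dim x) :
    C.srcI p (C.unit^[k] x) = C.srcI p x := by
  unfold PreOmegaCat.srcI
  rw [dim_unit_iter]
  have : C.dim x + k - p = (C.dim x - p) + k := by omega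
  rw [this, Function.iterate_add_apply, src_iter_unit_iter k k x le_rfl]
  simp

theorem tgtI_unit_iter_low {p k : ℕ} {x : C.Cell} (h : p ≤ C.dim x) :
    C.tgtI p (C.unit^[k] x) = C.tgtI p x := by
  unfold PreOmegaCat.tgtI
  rw [dim_unit_iter]
  have : C.dim x + k - p = (C.dim x - p) + k := by omega
  rw [this, Function.iterate_add_apply, tgt_iter_unit_iter k k x le_rfl]
  simp

theorem pad_of_dim_eq {m : ℕ} {x : C.Cell} (h : C.dim x = m) : C.pad m x = x := by
  unfold PreOmegaCat.pad
  rw [h, Nat.sub_self]; rfl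

theorem pad_eq_unit_iter (m : ℕ) (x : C.Cell) : C.pad m x = C.unit^[m - C.dim x] x := rfl

/-! composition vs boundaries -/

theorem composable_src {p : ℕ} {x y : C.Cell} (h : C.Composable p x y)
    (h2 : p + 1 < C.dim x) : C.Composable p (C.src x) (C.src y) := by
  obtain ⟨h1, hd, hst⟩ := h
  have hx0 : C.dim x ≠ 0 := by omega
  have hy0 : C.dim y ≠ 0 := by omega
  refine ⟨by rw [C.dim_src x hx0]; omega, by rw [C.dim_src x hx0, C.dim_src y hy0, hd], ?_⟩
  rw [srcI_src (by omega), tgtI_src (by omega), hst]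

theorem composable_tgt {p : ℕ} {x y : C.Cell} (h : C.Composable p x y)
    (h2 : p + 1 < C.dim x) : C.Composable p (C.tgt x) (C.tgt y) := by
  obtain ⟨h1, hd, hst⟩ := h
  have hx0 : C.dim x ≠ 0 := by omega
  have hy0 : C.dim y ≠ 0 := by omega
  refine ⟨by rw [C.dim_tgt x hx0]; omega, by rw [C.dim_tgt x hx0, C.dim_tgt y hy0, hd], ?_⟩
  rw [srcI_tgt (by omega), tgtI_tgt (by omega), hst]

theorem srcI_comp_high {p q : ℕ} : ∀ (k : ℕ) (x y : C.Cell), C.Composable p x y →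
    p + 1 ≤ q → C.dim x - q = k →
    C.srcI q (C.comp p x y) = C.comp p (C.srcI q x) (C.srcI q y) ∧
      C.Composable p (C.srcI q x) (C.srcI q y) := by
  intro k
  induction k with
  | zero =>
    intro x y h hq hk
    have hd := C.dim_comp p x y h
    have hdy : C.dim y = C.dim x := h.2.1
    rw [srcI_of_le (by omega), srcI_of_le (by omega), srcI_of_le (by omega)]
    exact ⟨rfl, h⟩
  | succ k ih =>
    intro x y h hq hk
    have hd := C.dim_comp p x y h
    have hdy : C.dim y = C.dim x := h.2.1
    have h2 : p + 1 < C.dim x := by omega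
    have hcs := composable_src h h2
    have hx0 : C.dim x ≠ 0 := by omega
    have ihh := ih (C.src x) (C.src y) hcs hq (by rw [C.dim_src x hx0]; omega)
    constructor
    · rw [← srcI_src (x := C.comp p x y) (by omega), C.src_comp p x y h h2,
        ihh.1, srcI_src (by omega), srcI_src (by omega)]
    · have := ihh.2
      rwa [srcI_src (by omega), srcI_src (by omega)] at this

theorem tgtI_comp_high {p q : ℕ} : ∀ (k : ℕ) (x y : C.Cell), C.Composable p x y →
    p + 1 ≤ q → C.dim x - q = k →
    C.tgtI q (C.comp p x y) = C.comp p (C.tgtI q x) (C.tgtI q y) ∧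
      C.Composable p (C.tgtI q x) (C.tgtI q y) := by
  intro k
  induction k with
  | zero =>
    intro x y h hq hk
    have hd := C.dim_comp p x y h
    have hdy : C.dim y = C.dim x := h.2.1
    rw [tgtI_of_le (by omega), tgtI_of_le (by omega), tgtI_of_le (by omega)]
    exact ⟨rfl, h⟩
  | succ k ih =>
    intro x y h hq hk
    have hd := C.dim_comp p x y h
    have hdy : C.dim y = C.dim x := h.2.1
    have h2 : p + 1 < C.dim x := by omega
    have hct := composable_tgt h h2
    have hx0 : C.dim x ≠ 0 := by omega
    have ihh := ih (C.tgt x) (C.tgt y) hct hq (by rw [C.dim_tgt x hx0]; omega)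
    constructor
    · rw [← tgtI_tgt (x := C.comp p x y) (by omega), C.tgt_comp p x y h h2,
        ihh.1, tgtI_tgt (by omega), tgtI_tgt (by omega)]
    · have := ihh.2
      rwa [tgtI_tgt (by omega), tgtI_tgt (by omega)] at this

theorem srcI_comp_top {p : ℕ} {x y : C.Cell} (h : C.Composable p x y) :
    C.srcI p (C.comp p x y) = C.srcI p y := by
  obtain ⟨h1, hd, hst⟩ := h
  by_cases htop : C.dim x = p + 1
  · have hd2 := C.dim_comp p x y ⟨h1, hd, hst⟩
    rw [srcI_succ_eq_src (hd2.trans htop), srcI_succ_eq_src (hd.trans htop)]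
    exact C.src_comp_top p x y ⟨h1, hd, hst⟩ htop
  · have h2 : p + 1 < C.dim x := by omega
    have hi := srcI_comp_high (C.dim x - (p+1)) x y ⟨h1, hd, hst⟩ le_rfl rfl
    rw [← srcI_srcI (x := C.comp p x y) (Nat.le_succ p), hi.1]
    have hds : C.dim (C.srcI (p+1) x) = p + 1 := dim_srcI _ _ (by omega)
    have hc2 := hi.2
    have : C.srcI p (C.comp p (C.srcI (p+1) x) (C.srcI (p+1) y)) =
        C.srcI p (C.srcI (p+1) y) := by
      have hd3 := C.dim_comp p _ _ hc2
      have hdy' : C.dim (C.srcI (p+1) y) = p + 1 := dim_srcI _ _ (by omega)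
      rw [srcI_succ_eq_src (hd3.trans hds), srcI_succ_eq_src hdy']
      exact C.src_comp_top p _ _ hc2 hds
    rw [this, srcI_srcI (Nat.le_succ p)]

theorem tgtI_comp_top {p : ℕ} {x y : C.Cell} (h : C.Composable p x y) :
    C.tgtI p (C.comp p x y) = C.tgtI p x := by
  obtain ⟨h1, hd, hst⟩ := h
  by_cases htop : C.dim x = p + 1
  · have hd2 := C.dim_comp p x y ⟨h1, hd, hst⟩
    rw [tgtI_succ_eq_tgt (hd2.trans htop), tgtI_succ_eq_tgt htop]
    exact C.tgt_comp_top p x y ⟨h1, hd, hst⟩ htop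
  · have h2 : p + 1 < C.dim x := by omega
    have hi := tgtI_comp_high (C.dim x - (p+1)) x y ⟨h1, hd, hst⟩ le_rfl rfl
    rw [← tgtI_tgtI (x := C.comp p x y) (Nat.le_succ p), hi.1]
    have hds : C.dim (C.tgtI (p+1) x) = p + 1 := dim_tgtI _ _ (by omega)
    have hc2 := hi.2
    have : C.tgtI p (C.comp p (C.tgtI (p+1) x) (C.tgtI (p+1) y)) =
        C.tgtI p (C.tgtI (p+1) x) := by
      have hd3 := C.dim_comp p _ _ hc2
      rw [tgtI_succ_eq_tgt (hd3.trans hds), tgtI_succ_eq_tgt hds]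
      exact C.tgt_comp_top p _ _ hc2 hds
    rw [this, tgtI_tgtI (Nat.le_succ p)]

theorem srcI_comp_low {p q : ℕ} {x y : C.Cell} (h : C.Composable p x y)
    (hq : q ≤ p) : C.srcI q (C.comp p x y) = C.srcI q y := by
  rw [← srcI_srcI (x := C.comp p x y) hq, srcI_comp_top h, srcI_srcI hq]

theorem tgtI_comp_low {p q : ℕ} {x y : C.Cell} (h : C.Composable p x y)
    (hq : q ≤ p) : C.tgtI q (C.comp p x y) = C.tgtI q x := by
  rw [← tgtI_tgtI (x := C.comp p x y) hq, tgtI_comp_top h, tgtI_tgtI hq]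

/-! composability closure lemmas -/

theorem composable_comp_left {p : ℕ} {x y z : C.Cell} (hxy : C.Composable p x y)
    (hyz : C.Composable p y z) : C.Composable p (C.comp p x y) z := by
  have hd := C.dim_comp p x y hxy
  refine ⟨by omega, by rw [hd]; exact hyz.2.1.trans hxy.2.1, ?_⟩
  rw [srcI_comp_top hxy, hyz.2.2]

theorem composable_comp_right {p : ℕ} {x y z : C.Cell} (hxy : C.Composable p x y)
    (hyz : C.Composable p y z) : C.Composable p x (C.comp p y z) := by
  have hd := C.dim_comp p y z hyz
  refine ⟨hxy.1, by rw [hd]; exact hxy.2.1, ?_⟩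
  rw [tgtI_comp_top hyz, hxy.2.2]

theorem composable_unit_srcI {p : ℕ} {x : C.Cell} (h : p < C.dim x) :
    C.Composable p x (C.unit^[C.dim x - p] (C.srcI p x)) := by
  refine ⟨h, ?_, ?_⟩
  · rw [dim_unit_iter, dim_srcI p x (by omega)]; omega
  · rw [tgtI_unit_iter_low (by rw [dim_srcI p x (by omega)])]
    rw [tgtI_of_le (by rw [dim_srcI p x (by omega)])]

theorem composable_unit_tgtI {p : ℕ} {x : C.Cell} (h : p < C.dim x) :
    C.Composable p (C.unit^[C.dim x - p] (C.tgtI p x)) x := by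
  have hd : C.dim (C.unit^[C.dim x - p] (C.tgtI p x)) = C.dim x := by
    rw [dim_unit_iter, dim_tgtI p x (by omega)]; omega
  refine ⟨by omega, by omega, ?_⟩
  rw [srcI_unit_iter_low (by rw [dim_tgtI p x (by omega)])]
  rw [srcI_of_le (by rw [dim_tgtI p x (by omega)])]

theorem composable_interchange_outer {p q : ℕ} {x y x' y' : C.Cell} (hqp : q < p)
    (h1 : C.Composable p x y) (h2 : C.Composable p x' y')
    (h3 : C.Composable q x x') (h4 : C.Composable q y y') :
    C.Composable q (C.comp p x y) (C.comp p x' y') := by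
  have hd1 := C.dim_comp p x y h1
  have hd2 := C.dim_comp p x' y' h2
  refine ⟨by omega, by rw [hd1, hd2]; exact h3.2.1, ?_⟩
  rw [srcI_comp_low h1 (le_of_lt hqp), tgtI_comp_low h2 (le_of_lt hqp), h4.2.2,
    ← tgtI_srcI (x := x') hqp, h2.2.2, tgtI_tgtI (le_of_lt hqp)]

theorem composable_interchange_inner {p q : ℕ} {x y x' y' : C.Cell} (hqp : q < p)
    (h1 : C.Composable p x y) (h2 : C.Composable p x' y')
    (h3 : C.Composable q x x') (h4 : C.Composable q y y') :
    C.Composable p (C.comp q x x') (C.comp q y y') := by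
  have hd1 := C.dim_comp q x x' h3
  have hd2 := C.dim_comp q y y' h4
  refine ⟨by omega, by rw [hd1, hd2]; exact h1.2.1, ?_⟩
  have hx := srcI_comp_high (C.dim x - p) x x' h3 (by omega) rfl
  have hy := tgtI_comp_high (C.dim y - p) y y' h4 (by omega) rfl
  rw [hx.1, hy.1, h1.2.2, h2.2.2]

end OmegaCat



namespace OmegaCat

variable {C : OmegaCat.{u}}

theorem dim_src_iter_le (k : ℕ) (x : C.Cell) : C.dim (C.src^[k] x) ≤ C.dim x := by
  induction k generalizing x with
  | zero => simp
  | succ k ih =>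
    rw [Function.iterate_succ_apply]
    exact (ih (C.src x)).trans (dim_src_le x)

theorem dim_tgt_iter_le (k : ℕ) (x : C.Cell) : C.dim (C.tgt^[k] x) ≤ C.dim x := by
  induction k generalizing x with
  | zero => simp
  | succ k ih =>
    rw [Function.iterate_succ_apply]
    exact (ih (C.tgt x)).trans (dim_tgt_le x)

end OmegaCat

namespace PartFunc

open OmegaCat

variable {C D : OmegaCat.{u}} {n : ℕ}

/-- Restriction of a partial functor to a lower level. -/
def restrict (g : PartFunc C D n) (k : ℕ) (hk : k ≤ n) : PartFunc C D k where
  map := g.map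
  map_dim x h := g.map_dim x (h.trans hk)
  map_src x h := g.map_src x (h.trans hk)
  map_tgt x h := g.map_tgt x (h.trans hk)
  map_comp p x y h hc := g.map_comp p x y (h.trans hk) hc
  map_unit x h := g.map_unit x (h.trans hk)

theorem map_src_iter (g : PartFunc C D n) :
    ∀ (k : ℕ) (x : C.Cell), C.dim x ≤ n → g.map (C.src^[k] x) = D.src^[k] (g.map x) := by
  intro k
  induction k with
  | zero => intro x _; rfl
  | succ k ih =>
    intro x h
    rw [Function.iterate_succ_apply', Function.iterate_succ_apply',
      g.map_src _ ((dim_src_iter_le k x).trans h), ih x h]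

theorem map_tgt_iter (g : PartFunc C D n) :
    ∀ (k : ℕ) (x : C.Cell), C.dim x ≤ n → g.map (C.tgt^[k] x) = D.tgt^[k] (g.map x) := by
  intro k
  induction k with
  | zero => intro x _; rfl
  | succ k ih =>
    intro x h
    rw [Function.iterate_succ_apply', Function.iterate_succ_apply',
      g.map_tgt _ ((dim_tgt_iter_le k x).trans h), ih x h]

theorem map_srcI (g : PartFunc C D n) (p : ℕ) (x : C.Cell) (h : C.dim x ≤ n) :
    g.map (C.srcI p x) = D.srcI p (g.map x) := by
  unfold PreOmegaCat.srcI
  rw [g.map_dim x h, map_src_iter g _ x h]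

theorem map_tgtI (g : PartFunc C D n) (p : ℕ) (x : C.Cell) (h : C.dim x ≤ n) :
    g.map (C.tgtI p x) = D.tgtI p (g.map x) := by
  unfold PreOmegaCat.tgtI
  rw [g.map_dim x h, map_tgt_iter g _ x h]

theorem map_unit_iter (g : PartFunc C D n) :
    ∀ (k : ℕ) (x : C.Cell), C.dim x + k ≤ n →
      g.map (C.unit^[k] x) = D.unit^[k] (g.map x) := by
  intro k
  induction k with
  | zero => intro x _; rfl
  | succ k ih =>
    intro x h
    rw [Function.iterate_succ_apply', Function.iterate_succ_apply',
      g.map_unit _ (by rw [dim_unit_iter]; omega), ih x (by omega)]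

theorem map_composable (g : PartFunc C D n) {p : ℕ} {x y : C.Cell}
    (hc : C.Composable p x y) (h : C.dim x ≤ n) :
    D.Composable p (g.map x) (g.map y) := by
  obtain ⟨h1, h2, h3⟩ := hc
  refine ⟨by rw [g.map_dim x h]; exact h1,
    by rw [g.map_dim x h, g.map_dim y (by omega)]; exact h2, ?_⟩
  rw [← map_srcI g p x h, ← map_tgtI g p y (by omega), h3]

/-- Precomposition of a partial functor with an ω-functor. -/
def precomp {C₀ : OmegaCat.{u}} (φ : OmegaFunctor C₀ C) (g : PartFunc C D n) :
    PartFunc C₀ D n where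
  map x := g.map (φ.map x)
  map_dim x h := by
    rw [g.map_dim _ (by rw [φ.map_dim]; exact h), φ.map_dim]
  map_src x h := by
    rw [φ.map_src, g.map_src _ (by rw [φ.map_dim]; exact h)]
  map_tgt x h := by
    rw [φ.map_tgt, g.map_tgt _ (by rw [φ.map_dim]; exact h)]
  map_comp p x y h hc := by
    rw [φ.map_comp p x y hc,
      g.map_comp p _ _ (by rw [φ.map_dim]; exact h) (φ.map_composable hc)]
  map_unit x h := by
    rw [φ.map_unit, g.map_unit _ (by rw [φ.map_dim]; exact h)]

/-- Postcomposition of a partial functor with an ω-functor. -/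
def postcomp {D₀ : OmegaCat.{u}} (g : PartFunc C D n) (φ : OmegaFunctor D D₀) :
    PartFunc C D₀ n where
  map x := φ.map (g.map x)
  map_dim x h := by rw [φ.map_dim, g.map_dim x h]
  map_src x h := by rw [g.map_src x h, φ.map_src]
  map_tgt x h := by rw [g.map_tgt x h, φ.map_tgt]
  map_comp p x y h hc := by
    rw [g.map_comp p x y h hc, φ.map_comp p _ _ (g.map_composable hc h)]
  map_unit x h := by rw [g.map_unit x h, φ.map_unit]

end PartFunc

/-- The partial functor underlying an ω-functor. -/
def OmegaFunctor.toPart {C D : OmegaCat.{u}} (f : OmegaFunctor C D) (n : ℕ) :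
    PartFunc C D n where
  map := f.map
  map_dim x _ := f.map_dim x
  map_src x _ := f.map_src x
  map_tgt x _ := f.map_tgt x
  map_comp p x y _ hc := f.map_comp p x y hc
  map_unit x _ := f.map_unit x

namespace OmegaCat

variable {C : OmegaCat.{u}}

/-- Certificate that the data `(b, s)` form a well-formed "cone fold" of length `k`
over a base of dimension `m`. -/
structure FoldCert (C : OmegaCat.{u}) (b : C.Cell) (s : ℕ → C.Cell) (m k : ℕ) :
    Prop where
  hb : C.dim b = m
  hk : k ≤ m
  hsdim : ∀ i, i < k → C.dim (s i) = i + 1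
  hstgt : ∀ i, i < k → C.tgt (s i) = C.foldComp (C.srcI i b) s i

theorem foldComp_zero (b : C.Cell) (s : ℕ → C.Cell) : C.foldComp b s 0 = b := rfl

theorem foldComp_succ (b : C.Cell) (s : ℕ → C.Cell) (k : ℕ) :
    C.foldComp b s (k+1) = C.mcomp k (C.foldComp b s k) (s k) := rfl

theorem foldComp_ext {b : C.Cell} {s s' : ℕ → C.Cell} :
    ∀ (k : ℕ), (∀ i, i < k → s i = s' i) → C.foldComp b s k = C.foldComp b s' k := by
  intro k
  induction k with
  | zero => intro _; rfl
  | succ k ih =>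
    intro h
    rw [foldComp_succ, foldComp_succ, ih (fun i hi => h i (by omega)), h k (by omega)]

theorem FoldCert.weaken {b : C.Cell} {s : ℕ → C.Cell} {m k : ℕ}
    (hc : FoldCert C b s m k) (j : ℕ) (hj : j ≤ k) : FoldCert C b s m j :=
  ⟨hc.hb, hj.trans hc.hk, fun i hi => hc.hsdim i (by omega),
    fun i hi => hc.hstgt i (by omega)⟩

theorem FoldCert.srcI_base {b : C.Cell} {s : ℕ → C.Cell} {m k : ℕ}
    (hc : FoldCert C b s m k) {q : ℕ} (hq1 : k ≤ q) (hq2 : q ≤ m) :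
    FoldCert C (C.srcI q b) s q k := by
  refine ⟨by rw [← hc.hb] at hq2; exact dim_srcI q b hq2, hq1, hc.hsdim, ?_⟩
  intro i hi
  rw [hc.hstgt i hi, srcI_srcI (by omega)]

theorem FoldCert.tgtI_base {b : C.Cell} {s : ℕ → C.Cell} {m k : ℕ}
    (hc : FoldCert C b s m k) {q : ℕ} (hq1 : k ≤ q) (hq2 : q ≤ m) :
    FoldCert C (C.tgtI q b) s q k := by
  refine ⟨by rw [← hc.hb] at hq2; exact dim_tgtI q b hq2, hq1, hc.hsdim, ?_⟩
  intro i hi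
  rw [hc.hstgt i hi]
  congr 1
  rw [srcI_tgtI (by omega)]

/-- The master lemma on cone folds: dimension, iterated sources and targets,
and step-wise decompositions with their composability. -/
theorem fold_mega : ∀ (k : ℕ) (b : C.Cell) (m : ℕ) {s : ℕ → C.Cell},
    FoldCert C b s m k →
    C.dim (C.foldComp b s k) = m ∧
    (∀ q, k ≤ q → C.srcI q (C.foldComp b s k) = C.foldComp (C.srcI q b) s k) ∧
    (∀ q, k ≤ q → C.tgtI q (C.foldComp b s k) = C.foldComp (C.tgtI q b) s k) ∧
    (∀ j, j < k →
      C.foldComp b s (j+1) =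
        C.comp j (C.foldComp b s j) (C.unit^[m - j - 1] (s j)) ∧
      C.Composable j (C.foldComp b s j) (C.unit^[m - j - 1] (s j))) := by
  intro k
  induction k with
  | zero =>
    intro b m s hc
    exact ⟨hc.hb, fun q _ => rfl, fun q _ => rfl, fun j hj => absurd hj (by omega)⟩
  | succ k ih =>
    intro b m s hc
    have hck := hc.weaken k (by omega)
    have hkm : k + 1 ≤ m := hc.hk
    have hsk : C.dim (s k) = k + 1 := hc.hsdim k (by omega)
    -- the one-step unfolding, for an arbitrary base with certificate
    have step : ∀ (b' : C.Cell) (m' : ℕ), FoldCert C b' s m' (k+1) →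
        C.foldComp b' s (k+1) =
          C.comp k (C.foldComp b' s k) (C.unit^[m' - k - 1] (s k)) ∧
        C.Composable k (C.foldComp b' s k) (C.unit^[m' - k - 1] (s k)) := by
      intro b' m' hc'
      have hck' := hc'.weaken k (by omega)
      have ih' := ih b' m' hck'
      have hdimf : C.dim (C.foldComp b' s k) = m' := ih'.1
      have hkm' : k + 1 ≤ m' := hc'.hk
      have hdimu : C.dim (C.unit^[m' - k - 1] (s k)) = m' := by
        rw [dim_unit_iter, hc'.hsdim k (by omega)]; omega
      have hcomp : C.Composable k (C.foldComp b' s k) (C.unit^[m' - k - 1] (s k)) := by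
        refine ⟨by omega, by omega, ?_⟩
        rw [ih'.2.1 k le_rfl, tgtI_unit_iter_low (by rw [hc'.hsdim k (by omega)]; omega),
          tgtI_succ_eq_tgt (hc'.hsdim k (by omega)), hc'.hstgt k (by omega)]
      constructor
      · rw [foldComp_succ]
        unfold PreOmegaCat.mcomp
        have hmax : max (C.dim (C.foldComp b' s k)) (C.dim (s k)) = m' := by
          rw [hdimf, hc'.hsdim k (by omega)]; omega
        rw [hmax, pad_of_dim_eq hdimf, pad_eq_unit_iter, hc'.hsdim k (by omega),
          Nat.sub_sub]
      · exact hcomp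
    obtain ⟨hstep, hcomp⟩ := step b m hc
    have ih0 := ih b m hck
    have hdim : C.dim (C.foldComp b s (k+1)) = m := by
      rw [hstep, C.dim_comp _ _ _ hcomp, ih0.1]
    refine ⟨hdim, ?_, ?_, ?_⟩
    · intro q hq
      by_cases hqm : m ≤ q
      · rw [srcI_of_le (by omega), srcI_of_le (by rw [hc.hb]; omega)]
      · push_neg at hqm
        have hcs := hc.srcI_base (q := q) (by omega) (by omega)
        have hdsq : C.dim (C.srcI q b) = q := dim_srcI q b (by rw [hc.hb]; omega)
        rw [hstep]
        have hhigh := srcI_comp_high (C.dim (C.foldComp b s k) - q) _ _ hcomp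
          (by omega) rfl
        rw [hhigh.1, ih0.2.1 q (by omega),
          srcI_unit_iter_high (by rw [hsk]; omega) (by rw [hsk]; omega), hsk,
          (step (C.srcI q b) q hcs).1, Nat.sub_sub]
    · intro q hq
      by_cases hqm : m ≤ q
      · rw [tgtI_of_le (by omega), tgtI_of_le (by rw [hc.hb]; omega)]
      · push_neg at hqm
        have hcs := hc.tgtI_base (q := q) (by omega) (by omega)
        have hdsq : C.dim (C.tgtI q b) = q := dim_tgtI q b (by rw [hc.hb]; omega)
        rw [hstep]
        have hhigh := tgtI_comp_high (C.dim (C.foldComp b s k) - q) _ _ hcomp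
          (by omega) rfl
        rw [hhigh.1, ih0.2.2.1 q (by omega),
          tgtI_unit_iter_high (by rw [hsk]; omega) (by rw [hsk]; omega), hsk,
          (step (C.tgtI q b) q hcs).1, Nat.sub_sub]
    · intro j hj
      by_cases hjk : j < k
      · exact ih0.2.2.2 j hjk
      · have : j = k := by omega
        subst this
        exact ⟨hstep, hcomp⟩

/-- Mapping a cone fold through a partial functor. -/
theorem fold_map {D : OmegaCat.{u}} {N : ℕ} (g : PartFunc C D N) :
    ∀ (k : ℕ) (b : C.Cell) (m : ℕ) {s : ℕ → C.Cell},
    FoldCert C b s m k → m ≤ N →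
    g.map (C.foldComp b s k) = D.foldComp (g.map b) (fun i => g.map (s i)) k ∧
    FoldCert D (g.map b) (fun i => g.map (s i)) m k := by
  intro k
  induction k using Nat.strong_induction_on with
  | _ k ih =>
    intro b m s hc hN
    cases k with
    | zero =>
      exact ⟨rfl, ⟨by rw [g.map_dim b (by rw [hc.hb]; exact hN)]; exact hc.hb,
        by omega, fun i hi => absurd hi (by omega), fun i hi => absurd hi (by omega)⟩⟩
    | succ k =>
      have hck := hc.weaken k (by omega)
      have hkm : k + 1 ≤ m := hc.hk
      have hsk : C.dim (s k) = k + 1 := hc.hsdim k (by omega)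
      have mega := fold_mega (k+1) b m hc
      have megak := fold_mega k b m hck
      obtain ⟨ihm, ihc⟩ := ih k (by omega) b m hck hN
      have hcD : FoldCert D (g.map b) (fun i => g.map (s i)) m (k+1) := by
        refine ⟨ihc.hb, hkm, ?_, ?_⟩
        · intro i hi
          rw [g.map_dim _ (by rw [hc.hsdim i hi]; omega), hc.hsdim i hi]
        · intro i hi
          have hcsi : FoldCert C (C.srcI i b) s i i :=
            (hc.weaken i (by omega)).srcI_base le_rfl (by omega)
          have ihi := ih i (by omega) (C.srcI i b) i hcsi (by omega)
          show D.tgt (g.map (s i)) = _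
          rw [← g.map_tgt _ (by rw [hc.hsdim i hi]; omega), hc.hstgt i hi, ihi.1,
            PartFunc.map_srcI g i b (by rw [hc.hb]; exact hN)]
      refine ⟨?_, hcD⟩
      have megaD := fold_mega (k+1) (g.map b) m hcD
      rw [(mega.2.2.2 k (by omega)).1,
        g.map_comp _ _ _ (by rw [megak.1]; exact hN) (mega.2.2.2 k (by omega)).2,
        ihm, PartFunc.map_unit_iter g _ _ (by rw [hsk]; omega),
        (megaD.2.2.2 k (by omega)).1]

end OmegaCat



namespace OmegaCat

variable {C : OmegaCat.{u}} (E : Expansion C)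

/-- The canonical cone certificate attached to the expansion. -/
theorem xi_cert (x : C.Cell) (k : ℕ) (hk : k ≤ C.dim x) :
    FoldCert C x (fun i => E.xi (C.srcI i x)) (C.dim x) k := by
  refine ⟨rfl, hk, ?_, ?_⟩
  · intro i hi
    try simp only []
    rw [E.dim_xi, dim_srcI i x (by omega)]
  · intro i hi
    try simp only []
    have hd : C.dim (C.srcI i x) = i := dim_srcI i x (by omega)
    rw [E.xi_tgt (C.srcI i x), hd]
    exact foldComp_ext i (fun j hj => by
      try simp only []
      rw [srcI_srcI (by omega)])

theorem srcI_xi_aux : ∀ (r : ℕ) (z : C.Cell), r ≤ C.dim z →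
    C.srcI (C.dim z + 1 - r) (E.xi z) = E.xi (C.tgtI (C.dim z - r) z) := by
  intro r
  induction r with
  | zero =>
    intro z _
    rw [Nat.sub_zero, Nat.sub_zero, srcI_of_le (by rw [E.dim_xi]), tgtI_self]
  | succ r ih =>
    intro z hr
    have h0 : C.dim z ≠ 0 := by omega
    have hq : C.dim z + 1 - (r + 1) = C.dim z - r := by omega
    rw [hq]
    have hlt : C.dim z - r < C.dim (E.xi z) := by rw [E.dim_xi]; omega
    rw [← srcI_src hlt, E.xi_src z h0]
    have hdt : C.dim (C.tgt z) = C.dim z - 1 := C.dim_tgt z h0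
    have hih := ih (C.tgt z) (by omega)
    rw [hdt] at hih
    have e1 : C.dim z - 1 + 1 - r = C.dim z - r := by omega
    have e2 : C.dim z - 1 - r = C.dim z - (r + 1) := by omega
    rw [e1, e2] at hih
    rw [hih]
    congr 1
    have e3 : C.dim z - (r+1) < C.dim z := by omega
    exact tgtI_tgt e3

theorem srcI_xi {q : ℕ} {z : C.Cell} (hq1 : 1 ≤ q) (hq2 : q ≤ C.dim z + 1) :
    C.srcI q (E.xi z) = E.xi (C.tgtI (q - 1) z) := by
  have h := srcI_xi_aux E (C.dim z + 1 - q) z (by omega)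
  have e1 : C.dim z + 1 - (C.dim z + 1 - q) = q := by omega
  have e2 : C.dim z - (C.dim z + 1 - q) = q - 1 := by omega
  rw [e1, e2] at h
  exact h

theorem srcI_xi_zero (z : C.Cell) : C.srcI 0 (E.xi z) = E.orig := by
  by_cases h0 : C.dim z = 0
  · rw [srcI_succ_eq_src (by rw [E.dim_xi, h0])]
    exact E.xi_src0 z h0
  · rw [← srcI_srcI (x := E.xi z) (q := 0) (p := 1) (by omega),
      srcI_xi E (le_refl 1) (by omega)]
    have hd0 : C.dim (C.tgtI (1-1) z) = 0 := dim_tgtI 0 z (by omega)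
    rw [srcI_succ_eq_src (by rw [E.dim_xi, hd0])]
    exact E.xi_src0 _ hd0

theorem tgtI_xi {q : ℕ} {z : C.Cell} (hq : q ≤ C.dim z) :
    C.tgtI q (E.xi z) =
      C.foldComp (C.tgtI q z) (fun i => E.xi (C.srcI i z)) q := by
  have hlt : q < C.dim (E.xi z) := by rw [E.dim_xi]; omega
  rw [← tgtI_tgt hlt, E.xi_tgt z]
  have desc : ∀ (k : ℕ), q ≤ k → k ≤ C.dim z →
      C.tgtI q (C.foldComp z (fun i => E.xi (C.srcI i z)) k) =
        C.foldComp (C.tgtI q z) (fun i => E.xi (C.srcI i z)) q := by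
    intro k
    induction k with
    | zero =>
      intro hq1 _
      have hq0 : q = 0 := by omega
      subst hq0
      rfl
    | succ k ihk =>
      intro hq1 hk1
      have mega := fold_mega (k+1) z (C.dim z) (xi_cert E z (k+1) hk1)
      by_cases hqk : q ≤ k
      · rw [(mega.2.2.2 k (by omega)).1,
          tgtI_comp_low (mega.2.2.2 k (by omega)).2 hqk]
        exact ihk hqk (by omega)
      · have hq2 : q = k + 1 := by omega
        rw [hq2]
        exact mega.2.2.1 (k+1) le_rfl
  exact desc (C.dim z) hq le_rfl

/-- The cone `A` appearing in the compatibility of `ξ` with composition. -/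
theorem xi_comp_certA {p : ℕ} {x y : C.Cell} (h : C.Composable p y x) :
    FoldCert C (C.tgtI (p+1) y) (fun i => E.xi (C.srcI i x)) (p+1) p := by
  obtain ⟨hp, hdx, hst⟩ := h
  have hsrc_eq : ∀ i, i < p → C.srcI i y = C.srcI i x := by
    intro i hi
    rw [← srcI_srcI (x := y) (q := i) (p := p) (by omega), hst, srcI_tgtI hi]
  refine ⟨dim_tgtI (p+1) y (by omega), by omega, ?_, ?_⟩
  · intro i hi
    try simp only []
    rw [E.dim_xi, dim_srcI i x (by omega)]
  · intro i hi
    try simp only []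
    have hdz : C.dim (C.srcI i x) = i := dim_srcI i x (by omega)
    rw [E.xi_tgt (C.srcI i x), hdz]
    have e1 : C.srcI i (C.tgtI (p+1) y) = C.srcI i x := by
      rw [srcI_tgtI (by omega), hsrc_eq i hi]
    rw [e1]
    exact foldComp_ext i (fun j hj => by
      try simp only []
      rw [srcI_srcI (by omega)])

set_option maxHeartbeats 1000000 in
/-- The `xi_comp` law, written with explicit (unpadded) compositions, together
with the composability of its pieces. -/
theorem xi_comp_shape {p : ℕ} {x y : C.Cell} (h : C.Composable p y x) :
    E.xi (C.comp p y x) =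
      C.comp (p+1)
        (C.comp p
          (C.unit^[C.dim y - p]
            (C.foldComp (C.tgtI (p+1) y) (fun i => E.xi (C.srcI i x)) p))
          (E.xi x))
        (E.xi y) ∧
    C.Composable p
      (C.unit^[C.dim y - p]
        (C.foldComp (C.tgtI (p+1) y) (fun i => E.xi (C.srcI i x)) p))
      (E.xi x) ∧
    C.Composable (p+1)
      (C.comp p
        (C.unit^[C.dim y - p]
          (C.foldComp (C.tgtI (p+1) y) (fun i => E.xi (C.srcI i x)) p))
        (E.xi x))
      (E.xi y) := by
  have hp : p < C.dim y := h.1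
  have hdx : C.dim x = C.dim y := h.2.1
  have hst : C.srcI p y = C.tgtI p x := h.2.2
  have hsrc_eq : ∀ i, i < p → C.srcI i y = C.srcI i x := by
    intro i hi
    rw [← srcI_srcI (x := y) (q := i) (p := p) (by omega), hst, srcI_tgtI hi]
  have certA := xi_comp_certA E h
  have megaA := fold_mega p _ (p+1) certA
  have hdimA : C.dim (C.foldComp (C.tgtI (p+1) y) (fun i => E.xi (C.srcI i x)) p)
      = p + 1 := megaA.1
  have hdimtow : C.dim (C.unit^[C.dim y - p]
      (C.foldComp (C.tgtI (p+1) y) (fun i => E.xi (C.srcI i x)) p)) = C.dim y + 1 := by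
    rw [dim_unit_iter, hdimA]; omega
  have hcomp1 : C.Composable p
      (C.unit^[C.dim y - p]
        (C.foldComp (C.tgtI (p+1) y) (fun i => E.xi (C.srcI i x)) p))
      (E.xi x) := by
    refine ⟨by rw [hdimtow]; omega, by rw [E.dim_xi, hdx, hdimtow], ?_⟩
    rw [srcI_unit_iter_low (by rw [hdimA]; omega), megaA.2.1 p le_rfl,
      srcI_tgtI (by omega), hst, tgtI_xi E (z := x) (by omega)]
  have hdin : C.dim (C.comp p
      (C.unit^[C.dim y - p]
        (C.foldComp (C.tgtI (p+1) y) (fun i => E.xi (C.srcI i x)) p))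
      (E.xi x)) = C.dim y + 1 :=
    (C.dim_comp _ _ _ hcomp1).trans hdimtow
  have certY : FoldCert C (C.tgtI (p+1) y) (fun i => E.xi (C.srcI i y)) (p+1) (p+1) := by
    refine ⟨dim_tgtI (p+1) y (by omega), le_refl _, ?_, ?_⟩
    · intro i hi
      try simp only []
      rw [E.dim_xi, dim_srcI i y (by omega)]
    · intro i hi
      try simp only []
      have hdz : C.dim (C.srcI i y) = i := dim_srcI i y (by omega)
      rw [E.xi_tgt (C.srcI i y), hdz]
      have e1 : C.srcI i (C.tgtI (p+1) y) = C.srcI i y := srcI_tgtI (by omega)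
      rw [e1]
      exact foldComp_ext i (fun j hj => by
        try simp only []
        rw [srcI_srcI (by omega)])
  have megaY := fold_mega (p+1) _ (p+1) certY
  have hfoldY : C.foldComp (C.tgtI (p+1) y) (fun i => E.xi (C.srcI i y)) p =
      C.foldComp (C.tgtI (p+1) y) (fun i => E.xi (C.srcI i x)) p :=
    foldComp_ext p (fun i hi => by
      try simp only []
      rw [hsrc_eq i hi])
  have htgtxiy : C.tgtI (p+1) (E.xi y) =
      C.comp p (C.foldComp (C.tgtI (p+1) y) (fun i => E.xi (C.srcI i x)) p)
        (E.xi (C.tgtI p x)) := by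
    have hstep := (megaY.2.2.2 p (by omega)).1
    have e0 : p + 1 - p - 1 = 0 := by omega
    rw [e0] at hstep
    rw [tgtI_xi E (z := y) (by omega), hstep, hfoldY]
    show C.comp p _ (E.xi (C.srcI p y)) = _
    rw [hst]
  have hcomp2 : C.Composable (p+1)
      (C.comp p
        (C.unit^[C.dim y - p]
          (C.foldComp (C.tgtI (p+1) y) (fun i => E.xi (C.srcI i x)) p))
        (E.xi x))
      (E.xi y) := by
    refine ⟨by rw [hdin]; omega, by rw [E.dim_xi, hdin], ?_⟩
    have hhigh := srcI_comp_high (q := p+1)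
      (C.dim (C.unit^[C.dim y - p]
        (C.foldComp (C.tgtI (p+1) y) (fun i => E.xi (C.srcI i x)) p)) - (p+1))
      _ _ hcomp1 le_rfl rfl
    rw [hhigh.1]
    have hsrctow : C.srcI (p+1) (C.unit^[C.dim y - p]
        (C.foldComp (C.tgtI (p+1) y) (fun i => E.xi (C.srcI i x)) p)) =
        C.foldComp (C.tgtI (p+1) y) (fun i => E.xi (C.srcI i x)) p := by
      rw [srcI_unit_iter_low (by rw [hdimA]), srcI_of_le (by rw [hdimA])]
    have hsx : C.srcI (p+1) (E.xi x) = E.xi (C.tgtI p x) := by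
      have hh := srcI_xi E (q := p+1) (z := x) (by omega) (by omega)
      simpa using hh
    rw [hsrctow, hsx, htgtxiy]
  have hshape : E.xi (C.comp p y x) =
      C.comp (p+1)
        (C.comp p
          (C.unit^[C.dim y - p]
            (C.foldComp (C.tgtI (p+1) y) (fun i => E.xi (C.srcI i x)) p))
          (E.xi x))
        (E.xi y) := by
    rw [E.xi_comp p x y h]
    have hinner : C.mcomp p
        (C.foldComp (C.tgtI (p+1) y) (fun i => E.xi (C.srcI i x)) p) (E.xi x) =
        C.comp p
          (C.unit^[C.dim y - p]
            (C.foldComp (C.tgtI (p+1) y) (fun i => E.xi (C.srcI i x)) p))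
          (E.xi x) := by
      unfold PreOmegaCat.mcomp
      have hmax : max (C.dim (C.foldComp (C.tgtI (p+1) y)
          (fun i => E.xi (C.srcI i x)) p)) (C.dim (E.xi x)) = C.dim y + 1 := by
        rw [hdimA, E.dim_xi, hdx]; omega
      rw [hmax, pad_eq_unit_iter, pad_of_dim_eq (by rw [E.dim_xi, hdx]), hdimA]
      have e : C.dim y + 1 - (p+1) = C.dim y - p := by omega
      rw [e]
    rw [hinner]
    unfold PreOmegaCat.mcomp
    have hmax2 : max (C.dim (C.comp p
        (C.unit^[C.dim y - p]
          (C.foldComp (C.tgtI (p+1) y) (fun i => E.xi (C.srcI i x)) p))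
        (E.xi x))) (C.dim (E.xi y)) = C.dim y + 1 := by
      rw [hdin, E.dim_xi]; omega
    rw [hmax2, pad_of_dim_eq hdin, pad_of_dim_eq (by rw [E.dim_xi])]
  exact ⟨hshape, hcomp1, hcomp2⟩

set_option maxHeartbeats 1000000 in
/-- Mapping `ξ` of a composition through a partial functor that is already
known to commute with `ξ` on the factors and on the relevant sources. -/
theorem map_xi_comp {D : OmegaCat.{u}} (ED : Expansion D) {N : ℕ}
    (g : PartFunc C D N) {p : ℕ} {x y : C.Cell} (h : C.Composable p y x)
    (hN : C.dim y + 1 ≤ N)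
    (hx : g.map (E.xi x) = ED.xi (g.map x))
    (hy : g.map (E.xi y) = ED.xi (g.map y))
    (hfaces : ∀ i, i < p → g.map (E.xi (C.srcI i x)) = ED.xi (g.map (C.srcI i x))) :
    g.map (E.xi (C.comp p y x)) = ED.xi (g.map (C.comp p y x)) := by
  obtain ⟨hsh, hc1, hc2⟩ := xi_comp_shape E h
  have hp : p < C.dim y := h.1
  have hdx : C.dim x = C.dim y := h.2.1
  have hcg : D.Composable p (g.map y) (g.map x) := g.map_composable h (by omega)
  obtain ⟨hshD, hcD1, hcD2⟩ := xi_comp_shape ED hcg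
  have certA := xi_comp_certA E h
  have hmapA := fold_map g p (C.tgtI (p+1) y) (p+1) certA (by omega)
  have hdimA : C.dim (C.foldComp (C.tgtI (p+1) y) (fun i => E.xi (C.srcI i x)) p)
      = p + 1 := (fold_mega p _ (p+1) certA).1
  have hdin : C.dim (C.comp p
      (C.unit^[C.dim y - p]
        (C.foldComp (C.tgtI (p+1) y) (fun i => E.xi (C.srcI i x)) p))
      (E.xi x)) = C.dim y + 1 := by
    rw [C.dim_comp _ _ _ hc1, dim_unit_iter, hdimA]; omega
  rw [hsh, g.map_comp _ _ _ (by rw [hdin]; exact hN) hc2,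
    g.map_comp _ _ _ (by rw [dim_unit_iter, hdimA]; omega) hc1,
    PartFunc.map_unit_iter g _ _ (by rw [hdimA]; omega),
    hmapA.1, hx, hy, g.map_comp p y x (by omega) h, hshD]
  have hbase : D.foldComp (g.map (C.tgtI (p+1) y))
      (fun i => g.map (E.xi (C.srcI i x))) p =
      D.foldComp (D.tgtI (p+1) (g.map y))
        (fun i => ED.xi (D.srcI i (g.map x))) p := by
    rw [PartFunc.map_tgtI g _ y (by omega)]
    exact foldComp_ext p (fun i hi => by
      show g.map (E.xi (C.srcI i x)) = ED.xi (D.srcI i (g.map x))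
      rw [hfaces i hi, PartFunc.map_srcI g i x (by omega)])
  have hexp : D.dim (g.map y) = C.dim y := g.map_dim y (by omega)
  rw [hexp]
  show D.comp (p+1) (D.comp p (D.unit^[C.dim y - p]
      (D.foldComp (g.map (C.tgtI (p+1) y))
        (fun i => g.map (E.xi (C.srcI i x))) p)) (ED.xi (g.map x)))
      (ED.xi (g.map y)) = _
  rw [hbase]

end OmegaCat



namespace OmegaCat

variable {C : OmegaCat.{u}}

theorem srcI_unit {p : ℕ} {x : C.Cell} (h : p ≤ C.dim x) :
    C.srcI p (C.unit x) = C.srcI p x := by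
  unfold PreOmegaCat.srcI
  rw [C.dim_unit]
  have e : C.dim x + 1 - p = (C.dim x - p) + 1 := by omega
  rw [e, Function.iterate_succ_apply, C.src_unit]

theorem tgtI_unit {p : ℕ} {x : C.Cell} (h : p ≤ C.dim x) :
    C.tgtI p (C.unit x) = C.tgtI p x := by
  unfold PreOmegaCat.tgtI
  rw [C.dim_unit]
  have e : C.dim x + 1 - p = (C.dim x - p) + 1 := by omega
  rw [e, Function.iterate_succ_apply, C.tgt_unit]

theorem composable_unit {p : ℕ} {x y : C.Cell} (h : C.Composable p x y) :
    C.Composable p (C.unit x) (C.unit y) := by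
  obtain ⟨hp, hd, hst⟩ := h
  refine ⟨by rw [C.dim_unit]; omega, by rw [C.dim_unit, C.dim_unit, hd], ?_⟩
  rw [srcI_unit (by omega), tgtI_unit (by omega), hst]

end OmegaCat

/-- Uniqueness of partial functors out of a freely generated ω-category that
agree on the generators. -/
theorem part_unique {C D : OmegaCat.{u}} {gen : ℕ → Set C.Cell}
    (hC : FreelyGeneratedBy C gen) :
    ∀ (n : ℕ) (g g' : PartFunc C D n),
      (∀ k, k ≤ n → ∀ a ∈ gen k, g.map a = g'.map a) →
      ∀ x, C.dim x ≤ n → g.map x = g'.map x := by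
  intro n
  induction n with
  | zero =>
    intro g g' hag x hx
    exact hag 0 le_rfl x (hC.2.1 x (by omega))
  | succ n ih =>
    intro g g' hag x hx
    have hcompat : ∀ a ∈ gen (n+1), D.dim (g.map a) = n + 1 ∧
        D.src (g.map a) = (g.restrict n (by omega)).map (C.src a) ∧
        D.tgt (g.map a) = (g.restrict n (by omega)).map (C.tgt a) := by
      intro a ha
      have hda : C.dim a = n+1 := hC.1 _ _ ha
      exact ⟨by rw [g.map_dim a (by omega), hda],
        (g.map_src a (by omega)).symm, (g.map_tgt a (by omega)).symm⟩
    have huniq := (hC.2.2 n D (g.restrict n (by omega)) g.map hcompat).2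
    refine huniq g g' ⟨fun z hz => rfl, fun a ha => rfl⟩
      ⟨?_, fun a ha => (hag (n+1) le_rfl a ha).symm⟩ x hx
    intro z hz
    exact ih (g'.restrict n (by omega)) (g.restrict n (by omega))
      (fun k hk a ha => (hag k (by omega) a ha).symm) z hz

namespace OmegaCat

/-- Closure of a predicate on cells under the ω-category operations. -/
structure Closed (C : OmegaCat.{u}) (Φ : C.Cell → Prop) : Prop where
  hsrc : ∀ x, Φ x → Φ (C.src x)
  htgt : ∀ x, Φ x → Φ (C.tgt x)
  hunit : ∀ x, Φ x → Φ (C.unit x)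
  hcomp : ∀ p x y, C.Composable p x y → Φ x → Φ y → Φ (C.comp p x y)

variable (C : OmegaCat.{u}) (Φ : C.Cell → Prop) (hc : Closed C Φ)

open scoped Classical in
/-- The guarded composition on the subcategory of cells satisfying `Φ`. -/
def subComp (p : ℕ) (z w : {z : C.Cell // Φ z}) : {z : C.Cell // Φ z} :=
  if h : C.Composable p z.1 w.1 then
    ⟨C.comp p z.1 w.1, hc.hcomp p _ _ h z.2 w.2⟩ else z

/-- The underlying data of the sub-ω-category of cells satisfying `Φ`. -/
@[reducible]
def subPre : PreOmegaCat.{u} where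
  Cell := {z : C.Cell // Φ z}
  dim z := C.dim z.1
  src z := ⟨C.src z.1, hc.hsrc _ z.2⟩
  tgt z := ⟨C.tgt z.1, hc.htgt _ z.2⟩
  comp := subComp C Φ hc
  unit z := ⟨C.unit z.1, hc.hunit _ z.2⟩

theorem subPre_comp : (subPre C Φ hc).comp = subComp C Φ hc := rfl

theorem subComp_pos {p : ℕ} {z w : {z : C.Cell // Φ z}}
    (h : C.Composable p z.1 w.1) :
    subComp C Φ hc p z w = ⟨C.comp p z.1 w.1, hc.hcomp p _ _ h z.2 w.2⟩ := by
  unfold subComp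
  rw [dif_pos h]

theorem subPre_src_iter (k : ℕ) (z : (subPre C Φ hc).Cell) :
    ((subPre C Φ hc).src^[k] z).1 = C.src^[k] z.1 := by
  induction k generalizing z with
  | zero => rfl
  | succ k ihk =>
    rw [Function.iterate_succ_apply, Function.iterate_succ_apply]
    exact ihk _

theorem subPre_tgt_iter (k : ℕ) (z : (subPre C Φ hc).Cell) :
    ((subPre C Φ hc).tgt^[k] z).1 = C.tgt^[k] z.1 := by
  induction k generalizing z with
  | zero => rfl
  | succ k ihk =>
    rw [Function.iterate_succ_apply, Function.iterate_succ_apply]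
    exact ihk _

theorem subPre_unit_iter (k : ℕ) (z : (subPre C Φ hc).Cell) :
    ((subPre C Φ hc).unit^[k] z).1 = C.unit^[k] z.1 := by
  induction k generalizing z with
  | zero => rfl
  | succ k ihk =>
    rw [Function.iterate_succ_apply, Function.iterate_succ_apply]
    exact ihk _

theorem subPre_srcI (p : ℕ) (z : (subPre C Φ hc).Cell) :
    ((subPre C Φ hc).srcI p z).1 = C.srcI p z.1 :=
  subPre_src_iter C Φ hc _ z

theorem subPre_tgtI (p : ℕ) (z : (subPre C Φ hc).Cell) :
    ((subPre C Φ hc).tgtI p z).1 = C.tgtI p z.1 :=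
  subPre_tgt_iter C Φ hc _ z

theorem subPre_composable {p : ℕ} {z w : (subPre C Φ hc).Cell} :
    (subPre C Φ hc).Composable p z w ↔ C.Composable p z.1 w.1 := by
  constructor
  · rintro ⟨h1, h2, h3⟩
    refine ⟨h1, h2, ?_⟩
    have h4 := congrArg Subtype.val h3
    rwa [subPre_srcI, subPre_tgtI] at h4
  · rintro ⟨h1, h2, h3⟩
    refine ⟨h1, h2, ?_⟩
    apply Subtype.ext
    rw [subPre_srcI, subPre_tgtI]
    exact h3

/-- The sub-ω-category of cells satisfying a closed predicate `Φ`. -/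
def subOmega : OmegaCat.{u} where
  toPreOmegaCat := subPre C Φ hc
  dim_src z h := C.dim_src z.1 h
  dim_tgt z h := C.dim_tgt z.1 h
  src_dim0 z h := Subtype.ext (C.src_dim0 z.1 h)
  tgt_dim0 z h := Subtype.ext (C.tgt_dim0 z.1 h)
  glob_ss z h := Subtype.ext (C.glob_ss z.1 h)
  glob_tt z h := Subtype.ext (C.glob_tt z.1 h)
  dim_unit z := C.dim_unit z.1
  src_unit z := Subtype.ext (C.src_unit z.1)
  tgt_unit z := Subtype.ext (C.tgt_unit z.1)
  dim_comp p z w hzw := by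
    have hcc := (subPre_composable C Φ hc).mp hzw
    show C.dim (subComp C Φ hc p z w).1 = C.dim z.1
    rw [subComp_pos C Φ hc hcc]
    exact C.dim_comp p z.1 w.1 hcc
  src_comp_top p z w hzw htop := by
    have hcc := (subPre_composable C Φ hc).mp hzw
    show (subPre C Φ hc).src (subComp C Φ hc p z w) = (subPre C Φ hc).src w
    rw [subComp_pos C Φ hc hcc]
    exact Subtype.ext (C.src_comp_top p z.1 w.1 hcc htop)
  tgt_comp_top p z w hzw htop := by
    have hcc := (subPre_composable C Φ hc).mp hzw
    show (subPre C Φ hc).tgt (subComp C Φ hc p z w) = (subPre C Φ hc).tgt z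
    rw [subComp_pos C Φ hc hcc]
    exact Subtype.ext (C.tgt_comp_top p z.1 w.1 hcc htop)
  src_comp p z w hzw hlt := by
    have hcc := (subPre_composable C Φ hc).mp hzw
    show (subPre C Φ hc).src (subComp C Φ hc p z w) =
      subComp C Φ hc p ((subPre C Φ hc).src z) ((subPre C Φ hc).src w)
    rw [subComp_pos C Φ hc hcc, subComp_pos C Φ hc (composable_src hcc hlt)]
    exact Subtype.ext (C.src_comp p z.1 w.1 hcc hlt)
  tgt_comp p z w hzw hlt := by
    have hcc := (subPre_composable C Φ hc).mp hzw
    show (subPre C Φ hc).tgt (subComp C Φ hc p z w) =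
      subComp C Φ hc p ((subPre C Φ hc).tgt z) ((subPre C Φ hc).tgt w)
    rw [subComp_pos C Φ hc hcc, subComp_pos C Φ hc (composable_tgt hcc hlt)]
    exact Subtype.ext (C.tgt_comp p z.1 w.1 hcc hlt)
  comp_assoc p x y z h1 h2 := by
    have h1c := (subPre_composable C Φ hc).mp h1
    have h2c := (subPre_composable C Φ hc).mp h2
    show subComp C Φ hc p (subComp C Φ hc p x y) z =
      subComp C Φ hc p x (subComp C Φ hc p y z)
    rw [subComp_pos C Φ hc h1c, subComp_pos C Φ hc h2c,
      subComp_pos C Φ hc (composable_comp_left h1c h2c),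
      subComp_pos C Φ hc (composable_comp_right h1c h2c)]
    exact Subtype.ext (C.comp_assoc p x.1 y.1 z.1 h1c h2c)
  comp_unit_src p z h := by
    have hval : ((subPre C Φ hc).unit^[(subPre C Φ hc).dim z - p]
        ((subPre C Φ hc).srcI p z)).1 =
        C.unit^[C.dim z.1 - p] (C.srcI p z.1) := by
      rw [subPre_unit_iter, subPre_srcI]
    have hcc : C.Composable p z.1 ((subPre C Φ hc).unit^[(subPre C Φ hc).dim z - p]
        ((subPre C Φ hc).srcI p z)).1 := by
      rw [hval]; exact composable_unit_srcI h
    show subComp C Φ hc p z _ = z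
    rw [subComp_pos C Φ hc hcc]
    apply Subtype.ext
    show C.comp p z.1 _ = z.1
    rw [hval]
    exact C.comp_unit_src p z.1 h
  comp_unit_tgt p z h := by
    have hval : ((subPre C Φ hc).unit^[(subPre C Φ hc).dim z - p]
        ((subPre C Φ hc).tgtI p z)).1 =
        C.unit^[C.dim z.1 - p] (C.tgtI p z.1) := by
      rw [subPre_unit_iter, subPre_tgtI]
    have hcc : C.Composable p ((subPre C Φ hc).unit^[(subPre C Φ hc).dim z - p]
        ((subPre C Φ hc).tgtI p z)).1 z.1 := by
      rw [hval]; exact composable_unit_tgtI h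
    show subComp C Φ hc p _ z = z
    rw [subComp_pos C Φ hc hcc]
    apply Subtype.ext
    show C.comp p _ z.1 = z.1
    rw [hval]
    exact C.comp_unit_tgt p z.1 h
  interchange p q x y x' y' hqp h1 h2 h3 h4 := by
    have h1c := (subPre_composable C Φ hc).mp h1
    have h2c := (subPre_composable C Φ hc).mp h2
    have h3c := (subPre_composable C Φ hc).mp h3
    have h4c := (subPre_composable C Φ hc).mp h4
    show subComp C Φ hc q (subComp C Φ hc p x y) (subComp C Φ hc p x' y') =
      subComp C Φ hc p (subComp C Φ hc q x x') (subComp C Φ hc q y y')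
    rw [subComp_pos C Φ hc h1c, subComp_pos C Φ hc h2c, subComp_pos C Φ hc h3c,
      subComp_pos C Φ hc h4c,
      subComp_pos C Φ hc (composable_interchange_outer hqp h1c h2c h3c h4c),
      subComp_pos C Φ hc (composable_interchange_inner hqp h1c h2c h3c h4c)]
    exact Subtype.ext (C.interchange p q x.1 y.1 x'.1 y'.1 hqp h1c h2c h3c h4c)
  unit_comp p z w hzw := by
    have hcc := (subPre_composable C Φ hc).mp hzw
    show (subPre C Φ hc).unit (subComp C Φ hc p z w) =
      subComp C Φ hc p ((subPre C Φ hc).unit z) ((subPre C Φ hc).unit w)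
    rw [subComp_pos C Φ hc hcc, subComp_pos C Φ hc (composable_unit hcc)]
    exact Subtype.ext (C.unit_comp p z.1 w.1 hcc)

/-- The inclusion of the sub-ω-category into the ambient one. -/
def subInclusion : OmegaFunctor (subOmega C Φ hc) C where
  map z := z.1
  map_dim z := rfl
  map_src z := rfl
  map_tgt z := rfl
  map_comp p z w hzw := by
    have hcc := (subPre_composable C Φ hc).mp hzw
    show (subComp C Φ hc p z w).1 = C.comp p z.1 w.1
    rw [subComp_pos C Φ hc hcc]
  map_unit z := rfl


/-- Induction principle for freely generated ω-categories. -/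
theorem free_induction {C : OmegaCat.{u}} {gen : ℕ → Set C.Cell}
    (hC : FreelyGeneratedBy C gen) (Φ : C.Cell → Prop)
    (h0 : ∀ x, C.dim x = 0 → Φ x)
    (hcl : Closed C Φ)
    (hgen : ∀ m, (∀ y, C.dim y ≤ m → Φ y) → ∀ a ∈ gen (m+1), Φ a) :
    ∀ x, Φ x := by
  classical
  have hjunk : ∀ x : C.Cell, Φ (C.srcI 0 x) :=
    fun x => h0 _ (dim_srcI 0 x (Nat.zero_le _))
  -- the canonical lift of a cell, when it satisfies Φ
  let lift : C.Cell → (subOmega C Φ hcl).Cell := fun x =>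
    if hx : Φ x then ⟨x, hx⟩ else ⟨C.srcI 0 x, hjunk x⟩
  have lift_pos : ∀ {x : C.Cell} (hx : Φ x), lift x = ⟨x, hx⟩ := by
    intro x hx
    simp only [lift]; exact dif_pos hx
  have tower : ∀ m : ℕ, ∃ P : PartFunc C (subOmega C Φ hcl) m,
      ∀ x, C.dim x ≤ m → (P.map x).1 = x := by
    intro m
    induction m with
    | zero =>
      refine ⟨⟨lift, ?_, ?_, ?_, ?_, ?_⟩, ?_⟩
      · intro x hx
        rw [lift_pos (h0 x (by omega))]
        rfl
      · intro x hx
        have h0x : C.dim x = 0 := by omega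
        rw [C.src_dim0 x h0x, lift_pos (h0 x h0x)]
        exact Subtype.ext (C.src_dim0 x h0x).symm
      · intro x hx
        have h0x : C.dim x = 0 := by omega
        rw [C.tgt_dim0 x h0x, lift_pos (h0 x h0x)]
        exact Subtype.ext (C.tgt_dim0 x h0x).symm
      · intro p x y hx hcxy
        exact absurd hcxy.1 (by omega)
      · intro x hx
        exact absurd hx (by omega)
      · intro x hx
        show (lift x).1 = x
        rw [lift_pos (h0 x (by omega))]
    | succ m ihm =>
      obtain ⟨P, hP⟩ := ihm
      have hΦm : ∀ y, C.dim y ≤ m → Φ y := by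
        intro y hy
        have := (P.map y).2
        rwa [hP y hy] at this
      have hcompat : ∀ a ∈ gen (m+1), (subOmega C Φ hcl).dim (lift a) = m + 1 ∧
          (subOmega C Φ hcl).src (lift a) = P.map (C.src a) ∧
          (subOmega C Φ hcl).tgt (lift a) = P.map (C.tgt a) := by
        intro a ha
        have hda : C.dim a = m + 1 := hC.1 _ _ ha
        have hΦa : Φ a := hgen m hΦm a ha
        rw [lift_pos hΦa]
        have hds : C.dim (C.src a) ≤ m := by
          rw [C.dim_src a (by omega)]; omega
        have hdt : C.dim (C.tgt a) ≤ m := by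
          rw [C.dim_tgt a (by omega)]; omega
        refine ⟨hda, ?_, ?_⟩
        · apply Subtype.ext
          show C.src a = (P.map (C.src a)).1
          rw [hP _ hds]
        · apply Subtype.ext
          show C.tgt a = (P.map (C.tgt a)).1
          rw [hP _ hdt]
      obtain ⟨g, hg1, hg2⟩ := (hC.2.2 m (subOmega C Φ hcl) P lift hcompat).1
      refine ⟨g, ?_⟩
      have := part_unique hC (m+1) (g.postcomp (subInclusion C Φ hcl))
        ((OmegaFunctor.idF C).toPart (m+1)) ?_
      · intro x hx
        exact this x hx
      · intro k hk a ha
        show (g.map a).1 = a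
        by_cases hkm : k ≤ m
        · have hda : C.dim a = k := hC.1 _ _ ha
          rw [hg1 a (by omega), hP a (by omega)]
        · have hkm1 : k = m + 1 := by omega
          subst hkm1
          rw [hg2 a ha, lift_pos (hgen m hΦm a ha)]
  intro x
  obtain ⟨P, hP⟩ := tower (C.dim x)
  have h2 := (P.map x).2
  rwa [hP x le_rfl] at h2

end OmegaCat


open OmegaCat

/-- Cells of the ω-category with a single cell in every dimension `< n` and the
monoid `ℕ` in dimensions `≥ n` (units above). -/
def DmonCell (n : ℕ) : Type u := ULift.{u} {p : ℕ × ℕ // p.1 < n → p.2 = 0}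

/-- The cell of weight `0` in each dimension. -/
def dzc (n d : ℕ) : DmonCell.{u} n := ⟨⟨(d, 0), fun _ => rfl⟩⟩

/-- The cell of weight `1` in dimension `n`. -/
def doc (n : ℕ) : DmonCell.{u} n := ⟨⟨(n, 1), fun h => absurd h (lt_irrefl n)⟩⟩

theorem dmon_cell_ext {n : ℕ} {z w : DmonCell.{u} n} (h : z.down.1 = w.down.1) :
    z = w :=
  congrArg ULift.up (Subtype.ext h)

/-- The underlying data of the `ℕ`-weighted discriminating ω-category. -/
@[reducible]
def dmonPre (n : ℕ) : PreOmegaCat.{u} where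
  Cell := DmonCell.{u} n
  dim z := z.down.1.1
  src z := ⟨⟨(z.down.1.1 - 1, if z.down.1.1 - 1 < n then 0 else z.down.1.2),
    fun h => if_pos h⟩⟩
  tgt z := ⟨⟨(z.down.1.1 - 1, if z.down.1.1 - 1 < n then 0 else z.down.1.2),
    fun h => if_pos h⟩⟩
  comp p z w :=
    ⟨⟨(z.down.1.1, if p < n ∧ z.down.1.1 = w.down.1.1
        then z.down.1.2 + w.down.1.2 else z.down.1.2), by
      intro h
      by_cases hcc : p < n ∧ z.down.1.1 = w.down.1.1
      · rw [if_pos hcc, z.down.2 h, w.down.2 (hcc.2 ▸ h)]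
      · rw [if_neg hcc]
        exact z.down.2 h⟩⟩
  unit z := ⟨⟨(z.down.1.1 + 1, z.down.1.2), fun h => z.down.2 (by omega)⟩⟩

theorem dmon_src_val {n : ℕ} (z : DmonCell.{u} n) :
    ((dmonPre n).src z).down.1 =
      (z.down.1.1 - 1, if z.down.1.1 - 1 < n then 0 else z.down.1.2) := rfl

theorem dmon_tgt_val {n : ℕ} (z : DmonCell.{u} n) :
    ((dmonPre n).tgt z).down.1 =
      (z.down.1.1 - 1, if z.down.1.1 - 1 < n then 0 else z.down.1.2) := rfl

theorem dmon_comp_val {n p : ℕ} (z w : DmonCell.{u} n) :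
    ((dmonPre n).comp p z w).down.1 =
      (z.down.1.1, if p < n ∧ z.down.1.1 = w.down.1.1
        then z.down.1.2 + w.down.1.2 else z.down.1.2) := rfl

theorem dmon_unit_val {n : ℕ} (z : DmonCell.{u} n) :
    ((dmonPre n).unit z).down.1 = (z.down.1.1 + 1, z.down.1.2) := rfl

theorem dmon_src_iter {n : ℕ} : ∀ (j : ℕ) (z : DmonCell.{u} n),
    ((dmonPre n).src^[j] z).down.1 =
      (z.down.1.1 - j, if z.down.1.1 - j < n then 0 else z.down.1.2) := by
  intro j
  induction j with
  | zero =>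
    intro z
    rw [Function.iterate_zero, id_eq, Nat.sub_zero]
    refine Prod.ext rfl ?_
    by_cases h : z.down.1.1 < n
    · rw [if_pos h, z.down.2 h]
    · rw [if_neg h]
  | succ j ih =>
    intro z
    rw [Function.iterate_succ_apply, ih, dmon_src_val]
    show ((z.down.1.1 - 1 - j : ℕ), _) = _
    refine Prod.ext (by omega) ?_
    show (if z.down.1.1 - 1 - j < n then 0
        else if z.down.1.1 - 1 < n then 0 else z.down.1.2) =
      (if z.down.1.1 - (j+1) < n then 0 else z.down.1.2)
    by_cases h1 : z.down.1.1 - 1 - j < n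
    · rw [if_pos h1, if_pos (show z.down.1.1 - (j+1) < n by omega)]
    · rw [if_neg h1, if_neg (show ¬ z.down.1.1 - 1 < n by omega),
        if_neg (show ¬ z.down.1.1 - (j+1) < n by omega)]

theorem dmon_unit_iter {n : ℕ} : ∀ (j : ℕ) (z : DmonCell.{u} n),
    ((dmonPre n).unit^[j] z).down.1 = (z.down.1.1 + j, z.down.1.2) := by
  intro j
  induction j with
  | zero => intro z; rfl
  | succ j ih =>
    intro z
    rw [Function.iterate_succ_apply']
    show ((((dmonPre n).unit^[j] z)).down.1.1 + 1,
      (((dmonPre n).unit^[j] z)).down.1.2) = _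
    rw [ih]
    rfl

theorem dmon_srcI {n : ℕ} (q : ℕ) (z : DmonCell.{u} n) :
    ((dmonPre n).srcI q z).down.1 = (z.down.1.1 - (z.down.1.1 - q),
      if z.down.1.1 - (z.down.1.1 - q) < n then 0 else z.down.1.2) :=
  dmon_src_iter _ z

theorem dmon_tgtI {n : ℕ} (q : ℕ) (z : DmonCell.{u} n) :
    ((dmonPre n).tgtI q z).down.1 = (z.down.1.1 - (z.down.1.1 - q),
      if z.down.1.1 - (z.down.1.1 - q) < n then 0 else z.down.1.2) :=
  dmon_src_iter _ z

/-- The discriminating ω-category: trivial below dimension `n`, the additive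
monoid `ℕ` in dimension `n`, units above. -/
@[reducible]
def dmon (n : ℕ) : OmegaCat.{u} where
  toPreOmegaCat := dmonPre.{u} n
  dim_src z h := rfl
  dim_tgt z h := rfl
  src_dim0 z h := by
    apply dmon_cell_ext
    rw [dmon_src_val]
    have hd : z.down.1.1 = 0 := h
    refine Prod.ext (by omega) ?_
    show (if z.down.1.1 - 1 < n then 0 else z.down.1.2) = z.down.1.2
    by_cases hn : z.down.1.1 - 1 < n
    · rw [if_pos hn]
      exact (z.down.2 (by omega)).symm
    · rw [if_neg hn]
  tgt_dim0 z h := by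
    apply dmon_cell_ext
    rw [dmon_tgt_val]
    have hd : z.down.1.1 = 0 := h
    refine Prod.ext (by omega) ?_
    show (if z.down.1.1 - 1 < n then 0 else z.down.1.2) = z.down.1.2
    by_cases hn : z.down.1.1 - 1 < n
    · rw [if_pos hn]
      exact (z.down.2 (by omega)).symm
    · rw [if_neg hn]
  glob_ss z h := rfl
  glob_tt z h := rfl
  dim_unit z := rfl
  src_unit z := by
    apply dmon_cell_ext
    rw [dmon_src_val, dmon_unit_val]
    refine Prod.ext (by show z.down.1.1 + 1 - 1 = z.down.1.1; omega) ?_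
    show (if z.down.1.1 + 1 - 1 < n then 0 else z.down.1.2) = z.down.1.2
    by_cases hn : z.down.1.1 + 1 - 1 < n
    · rw [if_pos hn]
      exact (z.down.2 (by omega)).symm
    · rw [if_neg hn]
  tgt_unit z := by
    apply dmon_cell_ext
    rw [dmon_tgt_val, dmon_unit_val]
    refine Prod.ext (by show z.down.1.1 + 1 - 1 = z.down.1.1; omega) ?_
    show (if z.down.1.1 + 1 - 1 < n then 0 else z.down.1.2) = z.down.1.2
    by_cases hn : z.down.1.1 + 1 - 1 < n
    · rw [if_pos hn]
      exact (z.down.2 (by omega)).symm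
    · rw [if_neg hn]
  dim_comp p z w hc := rfl
  src_comp_top := by
    intro p z w hc htop
    have hd : w.down.1.1 = z.down.1.1 := hc.2.1
    have hdz : z.down.1.1 = p + 1 := htop
    have hp1 : p < z.down.1.1 := hc.1
    have hsnd : ¬ p < n → z.down.1.2 = w.down.1.2 := by
      intro hp
      have h3 : ((dmonPre n).srcI p z).down.1 = ((dmonPre n).tgtI p w).down.1 :=
        congrArg (fun c => c.down.1) hc.2.2
      rw [dmon_srcI, dmon_tgtI] at h3
      have h4 : (if z.down.1.1 - (z.down.1.1 - p) < n then 0 else z.down.1.2) =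
          (if w.down.1.1 - (w.down.1.1 - p) < n then 0 else w.down.1.2) :=
        congrArg Prod.snd h3
      have hz2 : ¬ z.down.1.1 - (z.down.1.1 - p) < n := by omega
      have hw2 : ¬ w.down.1.1 - (w.down.1.1 - p) < n := by omega
      rwa [if_neg hz2, if_neg hw2] at h4
    apply dmon_cell_ext
    rw [dmon_src_val, dmon_src_val, dmon_comp_val]
    refine Prod.ext (by show z.down.1.1 - 1 = w.down.1.1 - 1; omega) ?_
    show (if z.down.1.1 - 1 < n then 0
        else if p < n ∧ z.down.1.1 = w.down.1.1
          then z.down.1.2 + w.down.1.2 else z.down.1.2) =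
      (if w.down.1.1 - 1 < n then 0 else w.down.1.2)
    split_ifs with h1 h2 h3 h3
    · rfl
    · omega
    · omega
    · omega
    · omega
    · exact hsnd (by omega)
  tgt_comp_top := by
    intro p z w hc htop
    have hd : w.down.1.1 = z.down.1.1 := hc.2.1
    have hdz : z.down.1.1 = p + 1 := htop
    apply dmon_cell_ext
    rw [dmon_tgt_val, dmon_tgt_val, dmon_comp_val]
    refine Prod.ext rfl ?_
    show (if z.down.1.1 - 1 < n then 0
        else if p < n ∧ z.down.1.1 = w.down.1.1
          then z.down.1.2 + w.down.1.2 else z.down.1.2) =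
      (if z.down.1.1 - 1 < n then 0 else z.down.1.2)
    split_ifs with h1 h2
    · rfl
    · omega
    · rfl
  src_comp := by
    intro p z w hc hlt
    have hd : w.down.1.1 = z.down.1.1 := hc.2.1
    have hlt' : p + 1 < z.down.1.1 := hlt
    apply dmon_cell_ext
    rw [dmon_src_val, dmon_comp_val, dmon_comp_val, dmon_src_val, dmon_src_val]
    refine Prod.ext rfl ?_
    show (if z.down.1.1 - 1 < n then 0
        else if p < n ∧ z.down.1.1 = w.down.1.1
          then z.down.1.2 + w.down.1.2 else z.down.1.2) =
      (if p < n ∧ z.down.1.1 - 1 = w.down.1.1 - 1 then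
          (if z.down.1.1 - 1 < n then 0 else z.down.1.2) +
            (if w.down.1.1 - 1 < n then 0 else w.down.1.2)
        else (if z.down.1.1 - 1 < n then 0 else z.down.1.2))
    split_ifs with h1 h2 h2 h3 h4 h5 <;> omega
  tgt_comp := by
    intro p z w hc hlt
    have hd : w.down.1.1 = z.down.1.1 := hc.2.1
    have hlt' : p + 1 < z.down.1.1 := hlt
    apply dmon_cell_ext
    rw [dmon_tgt_val, dmon_comp_val, dmon_comp_val, dmon_tgt_val, dmon_tgt_val]
    refine Prod.ext rfl ?_
    show (if z.down.1.1 - 1 < n then 0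
        else if p < n ∧ z.down.1.1 = w.down.1.1
          then z.down.1.2 + w.down.1.2 else z.down.1.2) =
      (if p < n ∧ z.down.1.1 - 1 = w.down.1.1 - 1 then
          (if z.down.1.1 - 1 < n then 0 else z.down.1.2) +
            (if w.down.1.1 - 1 < n then 0 else w.down.1.2)
        else (if z.down.1.1 - 1 < n then 0 else z.down.1.2))
    split_ifs with h1 h2 h2 h3 h4 h5 <;> omega
  comp_assoc := by
    intro p x y z h1 h2
    have hd1 : y.down.1.1 = x.down.1.1 := h1.2.1
    have hd2 : z.down.1.1 = y.down.1.1 := h2.2.1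
    apply dmon_cell_ext
    rw [dmon_comp_val, dmon_comp_val, dmon_comp_val, dmon_comp_val]
    refine Prod.ext rfl ?_
    show (if p < n ∧ x.down.1.1 = z.down.1.1 then
          (if p < n ∧ x.down.1.1 = y.down.1.1
            then x.down.1.2 + y.down.1.2 else x.down.1.2) + z.down.1.2
        else (if p < n ∧ x.down.1.1 = y.down.1.1
          then x.down.1.2 + y.down.1.2 else x.down.1.2)) =
      (if p < n ∧ x.down.1.1 = y.down.1.1 then
          x.down.1.2 + (if p < n ∧ y.down.1.1 = z.down.1.1
            then y.down.1.2 + z.down.1.2 else y.down.1.2)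
        else x.down.1.2)
    split_ifs with a1 a2 a3 a3 a4 <;> omega
  comp_unit_src := by
    intro p z h
    have hp : p < z.down.1.1 := h
    have hval : ((dmonPre n).unit^[(dmonPre n).dim z - p]
        ((dmonPre n).srcI p z)).down.1 =
        (z.down.1.1, if z.down.1.1 - (z.down.1.1 - p) < n
          then 0 else z.down.1.2) := by
      rw [dmon_unit_iter, dmon_srcI]
      refine Prod.ext ?_ rfl
      show z.down.1.1 - (z.down.1.1 - p) + (z.down.1.1 - p) = z.down.1.1
      omega
    apply dmon_cell_ext
    rw [dmon_comp_val, hval]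
    refine Prod.ext rfl ?_
    show (if p < n ∧ z.down.1.1 = z.down.1.1 then
        z.down.1.2 + (if z.down.1.1 - (z.down.1.1 - p) < n then 0 else z.down.1.2)
      else z.down.1.2) = z.down.1.2
    split_ifs with a1 a2 <;> omega
  comp_unit_tgt := by
    intro p z h
    have hp : p < z.down.1.1 := h
    have hval : ((dmonPre n).unit^[(dmonPre n).dim z - p]
        ((dmonPre n).tgtI p z)).down.1 =
        (z.down.1.1, if z.down.1.1 - (z.down.1.1 - p) < n
          then 0 else z.down.1.2) := by
      rw [dmon_unit_iter, dmon_tgtI]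
      refine Prod.ext ?_ rfl
      show z.down.1.1 - (z.down.1.1 - p) + (z.down.1.1 - p) = z.down.1.1
      omega
    apply dmon_cell_ext
    rw [dmon_comp_val, hval]
    refine Prod.ext rfl ?_
    show (if p < n ∧ z.down.1.1 = z.down.1.1 then
        (if z.down.1.1 - (z.down.1.1 - p) < n then 0 else z.down.1.2) + z.down.1.2
      else (if z.down.1.1 - (z.down.1.1 - p) < n then 0 else z.down.1.2)) = z.down.1.2
    split_ifs with a1 a2 a3 <;> omega
  interchange := by
    intro p q x y x' y' hqp h1 h2 h3 h4
    have hd1 : y.down.1.1 = x.down.1.1 := h1.2.1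
    have hd2 : y'.down.1.1 = x'.down.1.1 := h2.2.1
    have hd3 : x'.down.1.1 = x.down.1.1 := h3.2.1
    have hd4 : y'.down.1.1 = y.down.1.1 := h4.2.1
    apply dmon_cell_ext
    rw [dmon_comp_val, dmon_comp_val, dmon_comp_val, dmon_comp_val,
      dmon_comp_val, dmon_comp_val]
    refine Prod.ext rfl ?_
    show (if q < n ∧ x.down.1.1 = x'.down.1.1 then
          (if p < n ∧ x.down.1.1 = y.down.1.1
            then x.down.1.2 + y.down.1.2 else x.down.1.2) +
            (if p < n ∧ x'.down.1.1 = y'.down.1.1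
              then x'.down.1.2 + y'.down.1.2 else x'.down.1.2)
        else (if p < n ∧ x.down.1.1 = y.down.1.1
          then x.down.1.2 + y.down.1.2 else x.down.1.2)) =
      (if p < n ∧ x.down.1.1 = y.down.1.1 then
          (if q < n ∧ x.down.1.1 = x'.down.1.1
            then x.down.1.2 + x'.down.1.2 else x.down.1.2) +
            (if q < n ∧ y.down.1.1 = y'.down.1.1
              then y.down.1.2 + y'.down.1.2 else y.down.1.2)
        else (if q < n ∧ x.down.1.1 = x'.down.1.1
          then x.down.1.2 + x'.down.1.2 else x.down.1.2))
    split_ifs with a1 a2 a3 a3 a4 a5 a6 a7 <;> omega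
  unit_comp := by
    intro p z w hc
    have hd : w.down.1.1 = z.down.1.1 := hc.2.1
    apply dmon_cell_ext
    rw [dmon_unit_val, dmon_comp_val, dmon_comp_val, dmon_unit_val, dmon_unit_val]
    refine Prod.ext rfl ?_
    show (if p < n ∧ z.down.1.1 = w.down.1.1
        then z.down.1.2 + w.down.1.2 else z.down.1.2) =
      (if p < n ∧ z.down.1.1 + 1 = w.down.1.1 + 1
        then z.down.1.2 + w.down.1.2 else z.down.1.2)
    split_ifs with a1 a2 a2 <;> omega

/-! client-side value lemmas, stated over `dmon n` -/

theorem dmonC_dim {n : ℕ} (z : DmonCell.{u} n) : (dmon n).dim z = z.down.1.1 := rfl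

theorem dmonC_src_val {n : ℕ} (z : DmonCell.{u} n) :
    ((dmon n).src z).down.1 =
      (z.down.1.1 - 1, if z.down.1.1 - 1 < n then 0 else z.down.1.2) := rfl

theorem dmonC_tgt_val {n : ℕ} (z : DmonCell.{u} n) :
    ((dmon n).tgt z).down.1 =
      (z.down.1.1 - 1, if z.down.1.1 - 1 < n then 0 else z.down.1.2) := rfl

theorem dmonC_comp_val {n p : ℕ} (z w : DmonCell.{u} n) :
    ((dmon n).comp p z w).down.1 =
      (z.down.1.1, if p < n ∧ z.down.1.1 = w.down.1.1
        then z.down.1.2 + w.down.1.2 else z.down.1.2) := rfl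

theorem dmonC_unit_val {n : ℕ} (z : DmonCell.{u} n) :
    ((dmon n).unit z).down.1 = (z.down.1.1 + 1, z.down.1.2) := rfl

theorem dmonC_unit_iter {n : ℕ} (j : ℕ) (z : DmonCell.{u} n) :
    ((dmon n).unit^[j] z).down.1 = (z.down.1.1 + j, z.down.1.2) :=
  dmon_unit_iter j z

/-- Any two `dmon` cells of the same dimension `< n` are equal. -/
theorem dmon_eq_of_lt {n : ℕ} {z w : DmonCell.{u} n} (hd : z.down.1.1 = w.down.1.1)
    (hn : z.down.1.1 < n) : z = w := by
  apply dmon_cell_ext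
  refine Prod.ext hd ?_
  rw [z.down.2 hn, w.down.2 (hd ▸ hn)]

theorem dzc_val (n d : ℕ) : (dzc.{u} n d).down.1 = (d, 0) := rfl

/-- The trivial partial functor into `dmon n`. -/
def trivPart (C : OmegaCat.{u}) (n m : ℕ) : PartFunc C (dmon.{u} n) m where
  map x := dzc n (C.dim x)
  map_dim x _ := rfl
  map_src x _ := by
    apply dmon_cell_ext
    show (C.dim (C.src x), (0:ℕ)) = ((dmon.{u} n).src (dzc.{u} n (C.dim x))).down.1
    rw [dmonC_src_val, dzc_val]
    refine Prod.ext ?_ ?_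
    · show C.dim (C.src x) = C.dim x - 1
      by_cases h0 : C.dim x = 0
      · rw [C.src_dim0 x h0, h0]
      · exact C.dim_src x h0
    · show (0 : ℕ) = if C.dim x - 1 < n then 0 else 0
      rw [ite_self]
  map_tgt x _ := by
    apply dmon_cell_ext
    show (C.dim (C.tgt x), (0:ℕ)) = ((dmon.{u} n).tgt (dzc.{u} n (C.dim x))).down.1
    rw [dmonC_tgt_val, dzc_val]
    refine Prod.ext ?_ ?_
    · show C.dim (C.tgt x) = C.dim x - 1
      by_cases h0 : C.dim x = 0
      · rw [C.tgt_dim0 x h0, h0]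
      · exact C.dim_tgt x h0
    · show (0 : ℕ) = if C.dim x - 1 < n then 0 else 0
      rw [ite_self]
  map_comp p x y _ hc := by
    apply dmon_cell_ext
    show (C.dim (C.comp p x y), (0:ℕ)) =
      ((dmon.{u} n).comp p (dzc.{u} n (C.dim x)) (dzc.{u} n (C.dim y))).down.1
    rw [dmonC_comp_val, dzc_val, dzc_val]
    refine Prod.ext ?_ ?_
    · show C.dim (C.comp p x y) = C.dim x
      exact C.dim_comp p x y hc
    · show (0 : ℕ) = if p < n ∧ C.dim x = C.dim y then 0 + 0 else 0
      split_ifs <;> rfl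
  map_unit x _ := by
    apply dmon_cell_ext
    show (C.dim (C.unit x), (0:ℕ)) = ((dmon.{u} n).unit (dzc.{u} n (C.dim x))).down.1
    rw [dmonC_unit_val, dzc_val]
    exact Prod.ext (C.dim_unit x) rfl

/-- Weight-zero cells absorb in folds based at a cell of dimension `n`. -/
theorem dmon_fold_triv {n : ℕ} (w : DmonCell.{u} n) (hw : w.down.1.1 = n) :
    ∀ (k : ℕ) (s : ℕ → DmonCell.{u} n), k ≤ n →
      (∀ i, i < k → (s i).down.1 = (i+1, 0)) →
      (dmon n).foldComp w s k = w := by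
  intro k
  induction k with
  | zero => intro s _ _; rfl
  | succ k ih =>
    intro s hk hs
    rw [foldComp_succ, ih s (by omega) (fun i hi => hs i (by omega))]
    unfold PreOmegaCat.mcomp
    have hds : (dmon n).dim (s k) = k + 1 := by
      show (s k).down.1.1 = k + 1
      rw [hs k (by omega)]
    have hmax : max ((dmon n).dim w) ((dmon n).dim (s k)) = n := by
      rw [dmonC_dim, dmonC_dim, hw]
      have h1 : (s k).down.1.1 = k + 1 := hds
      omega
    rw [hmax, pad_of_dim_eq hw, pad_eq_unit_iter]
    have hval : ((dmon n).unit^[n - (dmon n).dim (s k)] (s k)).down.1 = (n, 0) := by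
      rw [dmonC_unit_iter]
      have h1 : (s k).down.1.1 = k + 1 := hds
      have h2 : (s k).down.1.2 = 0 := by
        have := congrArg Prod.snd (hs k (by omega))
        exact this
      refine Prod.ext ?_ h2
      show (s k).down.1.1 + (n - (dmon n).dim (s k)) = n
      rw [dmonC_dim]
      omega
    apply dmon_cell_ext
    rw [dmonC_comp_val, hval]
    refine Prod.ext rfl ?_
    have h1 := congrArg Prod.fst hval
    have h2 := congrArg Prod.snd hval
    split_ifs with a1
    · show w.down.1.2 + 0 = w.down.1.2
      omega
    · rfl


open OmegaCat

theorem doc_val (n : ℕ) : (doc.{u} n).down.1 = (n, 1) := rfl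

section Disjoint

variable {C C' : OmegaCat.{u}} {gen : ℕ → Set C.Cell}
  (hC : FreelyGeneratedBy C gen) (E : Expansion C') (ι : OmegaFunctor C C')
  (hι : Function.Injective ι.map)
  (hC' : FreelyGeneratedBy C' (expandedGens C C' E ι gen))

theorem mem_iota {k : ℕ} {a : C.Cell} (ha : a ∈ gen k) :
    ι.map a ∈ expandedGens C C' E ι gen k := by
  cases k with
  | zero => exact Or.inl ⟨a, ha, rfl⟩
  | succ k => exact Or.inl ⟨a, ha, rfl⟩

theorem mem_orig : E.orig ∈ expandedGens C C' E ι gen 0 := Or.inr rfl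

theorem mem_xi {k : ℕ} {a : C.Cell} (ha : a ∈ gen k) :
    E.xi (ι.map a) ∈ expandedGens C C' E ι gen (k + 1) :=
  Or.inr ⟨ι.map a, ⟨a, ha, rfl⟩, rfl⟩

/-- `ξ` is injective on `0`-cells. -/
theorem xi_inj_dim0 {z z' : C'.Cell} (h0 : C'.dim z = 0) (h0' : C'.dim z' = 0)
    (h : E.xi z = E.xi z') : z = z' := by
  have hz2 : C'.tgt (E.xi z) = z := by
    rw [E.xi_tgt z, h0]
    rfl
  have hz2' : C'.tgt (E.xi z') = z' := by
    rw [E.xi_tgt z', h0']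
    rfl
  calc z = C'.tgt (E.xi z) := hz2.symm
    _ = C'.tgt (E.xi z') := by rw [h]
    _ = z' := hz2'

include hC hι hC'

/-- The origin is not in the image of `ι`. -/
theorem orig_not_iota : ∀ c : C.Cell, C.dim c = 0 → ι.map c ≠ E.orig := by
  intro c hc heq
  classical
  have hcompat : ∀ a ∈ expandedGens C C' E ι gen 1,
      (dmon.{u} 1).dim ((fun _ : C'.Cell => doc.{u} 1) a) = 0 + 1 ∧
      (dmon.{u} 1).src ((fun _ : C'.Cell => doc.{u} 1) a) =
        (trivPart C' 1 0).map (C'.src a) ∧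
      (dmon.{u} 1).tgt ((fun _ : C'.Cell => doc.{u} 1) a) =
        (trivPart C' 1 0).map (C'.tgt a) := by
    intro a ha
    have hda : C'.dim a = 1 := hC'.1 _ _ ha
    have hds : C'.dim (C'.src a) = 0 := by
      rw [C'.dim_src a (by omega)]; omega
    have hdt : C'.dim (C'.tgt a) = 0 := by
      rw [C'.dim_tgt a (by omega)]; omega
    refine ⟨rfl, ?_, ?_⟩
    · apply dmon_cell_ext
      show ((dmon.{u} 1).src (doc.{u} 1)).down.1 = (dzc.{u} 1 (C'.dim (C'.src a))).down.1
      rw [dmonC_src_val, doc_val, dzc_val, hds]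
      refine Prod.ext (by omega) ?_
      rw [if_pos (by omega)]
    · apply dmon_cell_ext
      show ((dmon.{u} 1).tgt (doc.{u} 1)).down.1 = (dzc.{u} 1 (C'.dim (C'.tgt a))).down.1
      rw [dmonC_tgt_val, doc_val, dzc_val, hdt]
      refine Prod.ext (by omega) ?_
      rw [if_pos (by omega)]
  obtain ⟨g, hg1, hg2⟩ :=
    (hC'.2.2 0 (dmon.{u} 1) (trivPart C' 1 0) (fun _ => doc.{u} 1) hcompat).1
  have hzmem : E.xi (ι.map c) ∈ expandedGens C C' E ι gen 1 :=
    mem_xi E ι (hC.2.1 c hc)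
  have h1 : g.map (E.xi (ι.map c)) = doc.{u} 1 := hg2 _ hzmem
  have h2 : g.map (E.xi (ι.map c)) = (dmon.{u} 1).unit (dzc.{u} 1 0) := by
    rw [heq, E.xi_orig, g.map_unit E.orig (by rw [E.dim_orig]),
      hg1 E.orig (by rw [E.dim_orig])]
    show (dmon.{u} 1).unit (dzc.{u} 1 (C'.dim E.orig)) =
      (dmon.{u} 1).unit (dzc.{u} 1 0)
    rw [E.dim_orig]
  have h3 := h1.symm.trans h2
  have h4 : (1 : ℕ) = 0 := congrArg (fun z : DmonCell.{u} 1 => z.down.1.2) h3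
  omega

/-- No cell in the image of `ι` is of the form `ξ_{ι y}`. -/
theorem iota_ne_xi : ∀ x y : C.Cell, ι.map x ≠ E.xi (ι.map y) := by
  have main : ∀ n, ∀ x y : C.Cell, C.dim x = n → ι.map x ≠ E.xi (ι.map y) := by
    intro n
    induction n using Nat.strong_induction_on with
    | _ n ih =>
      intro x y hdx heq
      have hdims : C.dim x = C.dim y + 1 := by
        have h := congrArg C'.dim heq
        rw [ι.map_dim, E.dim_xi, ι.map_dim] at h
        exact h
      have hsrc := congrArg C'.src heq
      rw [← ι.map_src] at hsrc
      by_cases h0 : C.dim y = 0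
      · rw [E.xi_src0 _ (by rw [ι.map_dim]; exact h0)] at hsrc
        exact orig_not_iota hC E ι hι hC' (C.src x)
          (by rw [C.dim_src x (by omega)]; omega) hsrc
      · rw [E.xi_src _ (by rw [ι.map_dim]; exact h0), ← ι.map_tgt] at hsrc
        exact ih (C.dim (C.src x)) (by rw [C.dim_src x (by omega)]; omega)
          (C.src x) (C.tgt y) rfl hsrc
  intro x y
  exact main (C.dim x) x y rfl

set_option maxHeartbeats 2000000 in
/-- `ξ ∘ ι` is injective on generators of positive dimension. -/
theorem xi_iota_inj (m : ℕ) {b b' : C.Cell}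
    (hb : b ∈ gen (m + 1)) (hb' : b' ∈ gen (m + 1))
    (heq : E.xi (ι.map b) = E.xi (ι.map b')) : b = b' := by
  classical
  by_contra hne
  have hdb : C.dim b = m + 1 := hC.1 _ _ hb
  have hdb' : C.dim b' = m + 1 := hC.1 _ _ hb'
  -- the discriminating partial functor
  have hcompat : ∀ a ∈ expandedGens C C' E ι gen (m+1),
      (dmon.{u} (m+1)).dim
        ((fun z : C'.Cell => if z = ι.map b then doc.{u} (m+1)
          else dzc.{u} (m+1) (m+1)) a) = m + 1 ∧
      (dmon.{u} (m+1)).src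
        ((fun z : C'.Cell => if z = ι.map b then doc.{u} (m+1)
          else dzc.{u} (m+1) (m+1)) a) = (trivPart C' (m+1) m).map (C'.src a) ∧
      (dmon.{u} (m+1)).tgt
        ((fun z : C'.Cell => if z = ι.map b then doc.{u} (m+1)
          else dzc.{u} (m+1) (m+1)) a) = (trivPart C' (m+1) m).map (C'.tgt a) := by
    intro a ha
    have hda : C'.dim a = m + 1 := hC'.1 _ _ ha
    have hds : C'.dim (C'.src a) = m := by
      rw [C'.dim_src a (by omega)]; omega
    have hdt : C'.dim (C'.tgt a) = m := by
      rw [C'.dim_tgt a (by omega)]; omega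
    have hgen3 : ∀ v : DmonCell.{u} (m+1), v.down.1.1 = m + 1 →
        (dmon.{u} (m+1)).dim v = m + 1 ∧
        (dmon.{u} (m+1)).src v = (trivPart C' (m+1) m).map (C'.src a) ∧
        (dmon.{u} (m+1)).tgt v = (trivPart C' (m+1) m).map (C'.tgt a) := by
      intro v hv
      refine ⟨hv, ?_, ?_⟩
      · apply dmon_cell_ext
        rw [dmonC_src_val, hv]
        show (m + 1 - 1, if m + 1 - 1 < m + 1 then 0 else v.down.1.2) =
          (dzc.{u} (m+1) (C'.dim (C'.src a))).down.1
        rw [dzc_val, hds, if_pos (by omega)]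
        exact Prod.ext (by omega) rfl
      · apply dmon_cell_ext
        rw [dmonC_tgt_val, hv]
        show (m + 1 - 1, if m + 1 - 1 < m + 1 then 0 else v.down.1.2) =
          (dzc.{u} (m+1) (C'.dim (C'.tgt a))).down.1
        rw [dzc_val, hdt, if_pos (by omega)]
        exact Prod.ext (by omega) rfl
    by_cases hz : a = ι.map b
    · have hev : (fun z : C'.Cell => if z = ι.map b then doc.{u} (m+1)
          else dzc.{u} (m+1) (m+1)) a = doc.{u} (m+1) := by
        show (if a = ι.map b then _ else _) = _
        rw [if_pos hz]
      rw [hev]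
      exact hgen3 _ rfl
    · have hev : (fun z : C'.Cell => if z = ι.map b then doc.{u} (m+1)
          else dzc.{u} (m+1) (m+1)) a = dzc.{u} (m+1) (m+1) := by
        show (if a = ι.map b then _ else _) = _
        rw [if_neg hz]
      rw [hev]
      exact hgen3 _ rfl
  obtain ⟨g, hg1, hg2⟩ := (hC'.2.2 m (dmon.{u} (m+1)) (trivPart C' (m+1) m)
    (fun z : C'.Cell => if z = ι.map b then doc.{u} (m+1) else dzc.{u} (m+1) (m+1))
    hcompat).1
  have htriv : ∀ z : C'.Cell, C'.dim z ≤ m →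
      g.map z = dzc.{u} (m+1) (C'.dim z) := fun z hz => hg1 z hz
  have hgenval : ∀ (a : C.Cell), a ∈ gen m →
      g.map (E.xi (ι.map a)) = dzc.{u} (m+1) (m+1) := by
    intro a ha
    rw [hg2 _ (mem_xi E ι ha)]
    show (if E.xi (ι.map a) = ι.map b then doc.{u} (m+1) else dzc.{u} (m+1) (m+1)) = _
    rw [if_neg (fun hh => iota_ne_xi hC E ι hι hC' b a hh.symm)]
  -- the key computation: ξ of a composition maps to a weight-zero cell
  have key : ∀ (p : ℕ) (u v : C.Cell), C.Composable p u v → C.dim u = m →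
      g.map (E.xi (ι.map u)) = dzc.{u} (m+1) (m+1) →
      g.map (E.xi (ι.map v)) = dzc.{u} (m+1) (m+1) →
      g.map (E.xi (ι.map (C.comp p u v))) = dzc.{u} (m+1) (m+1) := by
    intro p u v hcuv hdu hu hv
    have hcuv' : C'.Composable p (ι.map u) (ι.map v) := ι.map_composable hcuv
    obtain ⟨hsh, hc1, hc2⟩ := xi_comp_shape E hcuv'
    have hp : p < m := by
      have := hcuv.1; omega
    have hdu' : C'.dim (ι.map u) = m := by rw [ι.map_dim]; exact hdu
    have hdimA : C'.dim (C'.foldComp (C'.tgtI (p+1) (ι.map u))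
        (fun i => E.xi (C'.srcI i (ι.map v))) p) = p + 1 :=
      (fold_mega p _ (p+1) (xi_comp_certA E hcuv')).1
    have hdin : C'.dim (C'.comp p
        (C'.unit^[C'.dim (ι.map u) - p]
          (C'.foldComp (C'.tgtI (p+1) (ι.map u))
            (fun i => E.xi (C'.srcI i (ι.map v))) p))
        (E.xi (ι.map v))) = m + 1 := by
      rw [C'.dim_comp _ _ _ hc1, dim_unit_iter, hdimA, hdu']; omega
    rw [ι.map_comp p u v hcuv, hsh,
      g.map_comp _ _ _ (by rw [hdin]) hc2,
      g.map_comp _ _ _ (by rw [dim_unit_iter, hdimA, hdu']; omega) hc1,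
      PartFunc.map_unit_iter g _ _ (by rw [hdimA, hdu']; omega),
      hu, hv, htriv _ (by rw [hdimA]; omega), hdimA, hdu']
    have e1 : ((dmon.{u} (m+1)).unit^[m - p] (dzc.{u} (m+1) (p+1))) =
        dzc.{u} (m+1) (m+1) := by
      apply dmon_cell_ext
      rw [dmonC_unit_iter, dzc_val, dzc_val]
      refine Prod.ext ?_ rfl
      show p + 1 + (m - p) = m + 1
      omega
    rw [e1]
    have e2 : ((dmon.{u} (m+1)).comp p (dzc.{u} (m+1) (m+1)) (dzc.{u} (m+1) (m+1)))
        = dzc.{u} (m+1) (m+1) := by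
      apply dmon_cell_ext
      show ((m+1 : ℕ), if p < m+1 ∧ (m+1 : ℕ) = m+1 then 0 + 0 else (0:ℕ)) =
        ((m+1 : ℕ), (0:ℕ))
      rw [if_pos ⟨by omega, rfl⟩]
    rw [e2]
    apply dmon_cell_ext
    show ((m+1 : ℕ), if p + 1 < m+1 ∧ (m+1 : ℕ) = m+1 then 0 + 0 else (0:ℕ)) =
      ((m+1 : ℕ), (0:ℕ))
    by_cases hq : p + 1 < m + 1
    · rw [if_pos ⟨hq, rfl⟩]
    · rw [if_neg (fun hh => hq hh.1)]
  -- the vanishing of weights on ξ of m-dimensional faces, by induction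
  have hW : ∀ x : C.Cell, (∀ q, q ≤ C.dim x → q = m →
      g.map (E.xi (ι.map (C.srcI q x))) = dzc.{u} (m+1) (m+1) ∧
      g.map (E.xi (ι.map (C.tgtI q x))) = dzc.{u} (m+1) (m+1)) := by
    apply free_induction hC
    · -- dimension 0
      intro x hx0 q hq hqm
      rw [srcI_of_le (by omega), tgtI_of_le (by omega)]
      have hxg : x ∈ gen 0 := hC.2.1 x hx0
      have hxm : x ∈ gen m := by
        have hm0 : m = 0 := by omega
        rw [hm0]
        exact hxg
      exact ⟨hgenval x hxm, hgenval x hxm⟩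
    · -- closure
      refine ⟨?_, ?_, ?_, ?_⟩
      · -- src
        intro x hΦ q hq hqm
        by_cases h0 : C.dim x = 0
        · rw [C.src_dim0 x h0]
          rw [C.src_dim0 x h0] at hq
          exact hΦ q hq hqm
        · have hdsx : C.dim (C.src x) = C.dim x - 1 := C.dim_src x h0
          have hql : q < C.dim x := by omega
          constructor
          · rw [srcI_src hql]
            exact (hΦ q (by omega) hqm).1
          · by_cases htop : q = C.dim x - 1
            · rw [tgtI_of_le (by omega)]
              have hsx : C.src x = C.srcI q x := (srcI_succ_eq_src (by omega)).symm
              rw [hsx]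
              exact (hΦ q (by omega) hqm).1
            · rw [tgtI_src (by omega)]
              exact (hΦ q (by omega) hqm).2
      · -- tgt
        intro x hΦ q hq hqm
        by_cases h0 : C.dim x = 0
        · rw [C.tgt_dim0 x h0]
          rw [C.tgt_dim0 x h0] at hq
          exact hΦ q hq hqm
        · have hdsx : C.dim (C.tgt x) = C.dim x - 1 := C.dim_tgt x h0
          have hql : q < C.dim x := by omega
          constructor
          · by_cases htop : q = C.dim x - 1
            · rw [srcI_of_le (by omega)]
              have hsx : C.tgt x = C.tgtI q x := (tgtI_succ_eq_tgt (by omega)).symm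
              rw [hsx]
              exact (hΦ q (by omega) hqm).2
            · rw [srcI_tgt (by omega)]
              exact (hΦ q (by omega) hqm).1
          · rw [tgtI_tgt hql]
            exact (hΦ q (by omega) hqm).2
      · -- unit
        intro x hΦ q hq hqm
        have hdu : C.dim (C.unit x) = C.dim x + 1 := C.dim_unit x
        by_cases hcase : q ≤ C.dim x
        · constructor
          · rw [srcI_unit hcase]
            exact (hΦ q hcase hqm).1
          · rw [tgtI_unit hcase]
            exact (hΦ q hcase hqm).2
        · have hqd : q = C.dim x + 1 := by omega
          rw [srcI_of_le (by omega), tgtI_of_le (by omega)]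
          have hval : g.map (E.xi (ι.map (C.unit x))) = dzc.{u} (m+1) (m+1) := by
            rw [ι.map_unit, E.xi_unit,
              g.map_unit _ (by rw [E.dim_xi, ι.map_dim]; omega),
              htriv _ (by rw [E.dim_xi, ι.map_dim]; omega)]
            apply dmon_cell_ext
            rw [dmonC_unit_val, dzc_val, dzc_val]
            refine Prod.ext ?_ rfl
            show C'.dim (E.xi (ι.map x)) + 1 = m + 1
            rw [E.dim_xi, ι.map_dim]
            omega
          exact ⟨hval, hval⟩
      · -- comp
        intro p x y hcxy hΦx hΦy q hq hqm
        have hdc : C.dim (C.comp p x y) = C.dim x := C.dim_comp p x y hcxy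
        have hdy : C.dim y = C.dim x := hcxy.2.1
        by_cases hqp : q ≤ p
        · constructor
          · rw [srcI_comp_low hcxy hqp]
            exact (hΦy q (by omega) hqm).1
          · rw [tgtI_comp_low hcxy hqp]
            exact (hΦx q (by omega) hqm).2
        · have hq1 : p + 1 ≤ q := by omega
          have hhighs := srcI_comp_high (C.dim x - q) x y hcxy hq1 rfl
          have hhight := tgtI_comp_high (C.dim x - q) x y hcxy hq1 rfl
          constructor
          · rw [hhighs.1]
            exact key p _ _ hhighs.2 (by rw [dim_srcI q x (by omega)]; omega)
              (hΦx q (by omega) hqm).1 (hΦy q (by omega) hqm).1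
          · rw [hhight.1]
            exact key p _ _ hhight.2 (by rw [dim_tgtI q x (by omega)]; omega)
              (hΦx q (by omega) hqm).2 (hΦy q (by omega) hqm).2
    · -- generators
      intro m' hyp a ha q hq hqm
      have hda : C.dim a = m' + 1 := hC.1 _ _ ha
      by_cases hql : q ≤ m'
      · have hds : C.dim (C.srcI q a) = q := dim_srcI q a (by omega)
        have hdt : C.dim (C.tgtI q a) = q := dim_tgtI q a (by omega)
        have hface := hyp (C.srcI q a) (by omega)
        have hface' := hyp (C.tgtI q a) (by omega)
        constructor
        · have h1 := (hface q (by omega) hqm).1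
          rwa [srcI_of_le (by omega)] at h1
        · have h1 := (hface' q (by omega) hqm).1
          rwa [srcI_of_le (by omega)] at h1
      · have hqe : q = m' + 1 := by omega
        rw [srcI_of_le (by omega), tgtI_of_le (by omega)]
        have hmem : a ∈ gen m := by
          have hmm : m = m' + 1 := by omega
          rw [hmm]
          exact ha
        exact ⟨hgenval a hmem, hgenval a hmem⟩
  -- final contradiction: compare both target cones
  have hFnb : C'.tgt (E.xi (ι.map b)) = C'.tgt (E.xi (ι.map b')) := by rw [heq]
  rw [E.xi_tgt (ι.map b), E.xi_tgt (ι.map b')] at hFnb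
  have hdib : C'.dim (ι.map b) = m + 1 := by rw [ι.map_dim, hdb]
  have hdib' : C'.dim (ι.map b') = m + 1 := by rw [ι.map_dim, hdb']
  have hmap := congrArg g.map hFnb
  rw [(fold_map g (C'.dim (ι.map b)) (ι.map b) (C'.dim (ι.map b))
      (xi_cert E (ι.map b) _ le_rfl) (by omega)).1,
    (fold_map g (C'.dim (ι.map b')) (ι.map b') (C'.dim (ι.map b'))
      (xi_cert E (ι.map b') _ le_rfl) (by omega)).1] at hmap
  have hmap2 : (dmon.{u} (m+1)).foldComp (g.map (ι.map b))
      (fun i => g.map (E.xi (C'.srcI i (ι.map b)))) (C'.dim (ι.map b)) =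
      (dmon.{u} (m+1)).foldComp (g.map (ι.map b'))
        (fun i => g.map (E.xi (C'.srcI i (ι.map b')))) (C'.dim (ι.map b')) := hmap
  have hgb : g.map (ι.map b) = doc.{u} (m+1) := by
    rw [hg2 _ (mem_iota E ι hb)]
    show (if ι.map b = ι.map b then doc.{u} (m+1) else _) = _
    rw [if_pos rfl]
  have hgb' : g.map (ι.map b') = dzc.{u} (m+1) (m+1) := by
    rw [hg2 _ (mem_iota E ι hb')]
    show (if ι.map b' = ι.map b then _ else dzc.{u} (m+1) (m+1)) = _
    rw [if_neg (fun hh => hne (hι hh).symm)]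
  have hsvals : ∀ (c : C.Cell), c ∈ gen (m+1) → ∀ i, i < C'.dim (ι.map c) →
      (g.map (E.xi (C'.srcI i (ι.map c)))).down.1 = (i+1, 0) := by
    intro c hcg i hi
    have hdc : C.dim c = m + 1 := hC.1 _ _ hcg
    have hdic : C'.dim (ι.map c) = m + 1 := by rw [ι.map_dim, hdc]
    have hdsi : C'.dim (C'.srcI i (ι.map c)) = i := dim_srcI i _ (by omega)
    by_cases him : i < m
    · rw [htriv _ (by rw [E.dim_xi, hdsi]; omega), dzc_val, E.dim_xi, hdsi]
    · have hieq : i = m := by omega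
      subst hieq
      have hsb : C'.srcI i (ι.map c) = ι.map (C.srcI i c) := (ι.map_srcI i c).symm
      have hWc := (hW c i (by omega) rfl).1
      rw [hsb, hWc, dzc_val]
  have hev1 : (dmon.{u} (m+1)).foldComp (g.map (ι.map b))
      (fun i => g.map (E.xi (C'.srcI i (ι.map b)))) (C'.dim (ι.map b)) =
      g.map (ι.map b) :=
    dmon_fold_triv _ (by rw [hgb]; rfl) _ _ (by omega) (hsvals b hb)
  have hev2 : (dmon.{u} (m+1)).foldComp (g.map (ι.map b'))
      (fun i => g.map (E.xi (C'.srcI i (ι.map b')))) (C'.dim (ι.map b')) =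
      g.map (ι.map b') :=
    dmon_fold_triv _ (by rw [hgb']; rfl) _ _ (by omega) (hsvals b' hb')
  rw [hev1, hev2, hgb, hgb'] at hmap2
  have hfin : (1 : ℕ) = 0 :=
    congrArg (fun z : DmonCell.{u} (m+1) => z.down.1.2) hmap2
  omega

end Disjoint


open OmegaCat

section Main

variable {C C' : OmegaCat.{u}} {gen : ℕ → Set C.Cell}
  (hC : FreelyGeneratedBy C gen) (E : Expansion C') (ι : OmegaFunctor C C')
  (hι : Function.Injective ι.map)
  (hC' : FreelyGeneratedBy C' (expandedGens C C' E ι gen))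
  {D : OmegaCat.{u}} (ED : Expansion D) (f : OmegaFunctor C D)

include hC hι hC'

/-- injectivity of `ξ ∘ ι` on generators, in all dimensions -/
theorem xi_iota_inj' (n : ℕ) {b b' : C.Cell} (hb : b ∈ gen n) (hb' : b' ∈ gen n)
    (heq : E.xi (ι.map b) = E.xi (ι.map b')) : b = b' := by
  cases n with
  | zero =>
    refine hι (xi_inj_dim0 E ?_ ?_ heq)
    · rw [ι.map_dim]; exact hC.1 _ _ hb
    · rw [ι.map_dim]; exact hC.1 _ _ hb'
  | succ m => exact xi_iota_inj hC E ι hι hC' m hb hb' heq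

set_option maxHeartbeats 4000000 in
/-- the tower of partial functors realizing the universal property level by level -/
theorem tower : ∀ n : ℕ, ∃ g : PartFunc C' D n,
    (∀ x : C.Cell, C.dim x ≤ n → g.map (ι.map x) = f.map x) ∧
    g.map E.orig = ED.orig ∧
    (∀ x : C'.Cell, C'.dim x + 1 ≤ n → g.map (E.xi x) = ED.xi (g.map x)) := by
  intro n
  classical
  induction n with
  | zero =>
    let m0 : C'.Cell → D.Cell := fun z =>
      if h : ∃ c : C.Cell, ι.map c = z then f.map (Classical.choose h) else ED.orig
    have hio : ∀ c : C.Cell, m0 (ι.map c) = f.map c := by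
      intro c
      have hex : ∃ c' : C.Cell, ι.map c' = ι.map c := ⟨c, rfl⟩
      have hc0 : Classical.choose hex = c := hι (Classical.choose_spec hex)
      show (if h : ∃ c' : C.Cell, ι.map c' = ι.map c then f.map (Classical.choose h)
        else ED.orig) = f.map c
      rw [dif_pos hex, hc0]
    have hor : m0 E.orig = ED.orig := by
      show (if h : ∃ c : C.Cell, ι.map c = E.orig then f.map (Classical.choose h)
        else ED.orig) = ED.orig
      rw [dif_neg]
      rintro ⟨c, hc⟩
      exact orig_not_iota hC E ι hι hC' c
        (by rw [← ι.map_dim, hc]; exact E.dim_orig) hc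
    have hdim : ∀ z, C'.dim z = 0 → D.dim (m0 z) = 0 := by
      intro z hz0
      rcases hC'.2.1 z hz0 with ⟨c, hc, rfl⟩ | ho
      · rw [hio c, f.map_dim, ← ι.map_dim]
        exact hz0
      · have ho' : z = E.orig := ho
        subst ho'
        rw [hor, ED.dim_orig]
    refine ⟨⟨m0, ?_, ?_, ?_, ?_, ?_⟩, fun x hx => hio x, hor,
      fun x hx => absurd hx (by omega)⟩
    · intro z hz
      rw [hdim z (by omega)]
      omega
    · intro z hz
      rw [C'.src_dim0 z (by omega), D.src_dim0 _ (hdim z (by omega))]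
    · intro z hz
      rw [C'.tgt_dim0 z (by omega), D.tgt_dim0 _ (hdim z (by omega))]
    · intro p z w hz hcc
      exact absurd hcc.1 (by omega)
    · intro z hz
      exact absurd hz (by omega)
  | succ n ihn =>
    obtain ⟨T, hio, hor, hxi⟩ := ihn
    let e : C'.Cell → D.Cell := fun z =>
      if h1 : ∃ b : C.Cell, b ∈ gen n ∧ z = E.xi (ι.map b)
        then ED.xi (T.map (ι.map (Classical.choose h1)))
        else if h2 : ∃ a : C.Cell, a ∈ gen (n+1) ∧ z = ι.map a
          then f.map (Classical.choose h2)
          else T.map z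
    have eval1 : ∀ b, b ∈ gen n → e (E.xi (ι.map b)) = ED.xi (T.map (ι.map b)) := by
      intro b hb
      have hex : ∃ b' : C.Cell, b' ∈ gen n ∧ E.xi (ι.map b) = E.xi (ι.map b') :=
        ⟨b, hb, rfl⟩
      have hs := Classical.choose_spec hex
      have hbb : Classical.choose hex = b :=
        xi_iota_inj' hC E ι hι hC' n hs.1 hb hs.2.symm
      show (if h1 : ∃ b' : C.Cell, b' ∈ gen n ∧ E.xi (ι.map b) = E.xi (ι.map b')
          then ED.xi (T.map (ι.map (Classical.choose h1)))
          else if h2 : ∃ a : C.Cell, a ∈ gen (n+1) ∧ E.xi (ι.map b) = ι.map a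
            then f.map (Classical.choose h2)
            else T.map (E.xi (ι.map b))) = ED.xi (T.map (ι.map b))
      rw [dif_pos hex, hbb]
    have eval2 : ∀ a, a ∈ gen (n+1) → e (ι.map a) = f.map a := by
      intro a ha
      have hnot : ¬ ∃ b : C.Cell, b ∈ gen n ∧ ι.map a = E.xi (ι.map b) := by
        rintro ⟨b, hb, hab⟩
        exact iota_ne_xi hC E ι hι hC' a b hab
      have hex : ∃ a' : C.Cell, a' ∈ gen (n+1) ∧ ι.map a = ι.map a' := ⟨a, ha, rfl⟩
      have hs := Classical.choose_spec hex
      have haa : Classical.choose hex = a := (hι hs.2).symm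
      show (if h1 : ∃ b : C.Cell, b ∈ gen n ∧ ι.map a = E.xi (ι.map b)
          then ED.xi (T.map (ι.map (Classical.choose h1)))
          else if h2 : ∃ a' : C.Cell, a' ∈ gen (n+1) ∧ ι.map a = ι.map a'
            then f.map (Classical.choose h2)
            else T.map (ι.map a)) = f.map a
      rw [dif_neg hnot, dif_pos hex, haa]
    have hcompat : ∀ a ∈ expandedGens C C' E ι gen (n+1),
        D.dim (e a) = n + 1 ∧ D.src (e a) = T.map (C'.src a) ∧
        D.tgt (e a) = T.map (C'.tgt a) := by
      rintro a (⟨a₀, ha₀, rfl⟩ | ⟨w, ⟨b, hb, rfl⟩, rfl⟩)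
      · rw [eval2 a₀ ha₀]
        have hda : C.dim a₀ = n + 1 := hC.1 _ _ ha₀
        refine ⟨by rw [f.map_dim, hda], ?_, ?_⟩
        · rw [← f.map_src, ← ι.map_src,
            hio (C.src a₀) (by rw [C.dim_src a₀ (by omega)]; omega)]
        · rw [← f.map_tgt, ← ι.map_tgt,
            hio (C.tgt a₀) (by rw [C.dim_tgt a₀ (by omega)]; omega)]
      · rw [eval1 b hb]
        have hdb : C.dim b = n := hC.1 _ _ hb
        have hdiota : C'.dim (ι.map b) = n := by rw [ι.map_dim, hdb]
        have hdT : D.dim (T.map (ι.map b)) = n := by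
          rw [T.map_dim _ (by omega), hdiota]
        refine ⟨by rw [ED.dim_xi, hdT], ?_, ?_⟩
        · cases n with
          | zero =>
            rw [ED.xi_src0 _ hdT, E.xi_src0 _ hdiota, hor]
          | succ m =>
            rw [ED.xi_src _ (by omega), E.xi_src _ (by omega),
              ← T.map_tgt _ (by omega),
              hxi (C'.tgt (ι.map b)) (by rw [C'.dim_tgt _ (by omega)]; omega)]
        · rw [ED.xi_tgt (T.map (ι.map b)), E.xi_tgt (ι.map b)]
          have hcert := xi_cert E (ι.map b) (C'.dim (ι.map b)) le_rfl
          have hfm := fold_map T (C'.dim (ι.map b)) (ι.map b) (C'.dim (ι.map b))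
            hcert (by omega)
          rw [hfm.1, hdT, hdiota]
          refine foldComp_ext n (fun i hi => ?_)
          show ED.xi (D.srcI i (T.map (ι.map b))) = T.map (E.xi (C'.srcI i (ι.map b)))
          rw [hxi (C'.srcI i (ι.map b)) (by rw [dim_srcI i _ (by omega)]; omega),
            PartFunc.map_srcI T i (ι.map b) (by omega)]
    obtain ⟨g', hg1, hg2⟩ := (hC'.2.2 n D T e hcompat).1
    have hio' : ∀ x : C.Cell, C.dim x ≤ n + 1 → g'.map (ι.map x) = f.map x := by
      have hag : ∀ k, k ≤ n + 1 → ∀ a ∈ gen k,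
          (PartFunc.precomp ι g').map a = (f.toPart (n+1)).map a := by
        intro k hk a ha
        show g'.map (ι.map a) = f.map a
        by_cases hkn : k ≤ n
        · rw [hg1 _ (by rw [ι.map_dim, hC.1 _ _ ha]; omega)]
          exact hio a (by rw [hC.1 _ _ ha]; omega)
        · have hk1 : k = n + 1 := by omega
          subst hk1
          rw [hg2 _ (mem_iota E ι ha)]
          exact eval2 a ha
      intro x hx
      exact part_unique hC (n+1) (PartFunc.precomp ι g') (f.toPart (n+1)) hag x hx
    have hor' : g'.map E.orig = ED.orig := by
      rw [hg1 _ (by rw [E.dim_orig]; omega), hor]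
    -- the generator cases of the ξ-compatibility
    have kind_iota : ∀ (m' : ℕ) (c : C.Cell), c ∈ gen m' → m' ≤ n →
        g'.map (E.xi (ι.map c)) = ED.xi (g'.map (ι.map c)) := by
      intro m' c hc hmn
      have hdc : C'.dim (ι.map c) = m' := by rw [ι.map_dim]; exact hC.1 _ _ hc
      by_cases hlt : m' + 1 ≤ n
      · rw [hg1 (E.xi (ι.map c)) (by rw [E.dim_xi, hdc]; omega),
          hxi (ι.map c) (by rw [hdc]; omega),
          hg1 (ι.map c) (by rw [hdc]; omega)]
      · have hmeq : m' = n := by omega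
        subst hmeq
        rw [hg2 _ (mem_xi E ι hc), eval1 c hc, hg1 (ι.map c) (by rw [hdc])]
    have kind_xi : ∀ (m' : ℕ) (b : C.Cell), b ∈ gen m' → m' + 1 ≤ n →
        g'.map (E.xi (E.xi (ι.map b))) = ED.xi (g'.map (E.xi (ι.map b))) := by
      intro m' b hb hmn
      have hdb : C'.dim (ι.map b) = m' := by rw [ι.map_dim]; exact hC.1 _ _ hb
      have hgxi : g'.map (E.xi (ι.map b)) = ED.xi (g'.map (ι.map b)) :=
        kind_iota m' b hb (by omega)
      rw [E.xi_xi (ι.map b),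
        g'.map_unit (E.xi (ι.map b)) (by rw [E.dim_xi, hdb]; omega), hgxi]
      exact (ED.xi_xi _).symm
    have kind_orig : g'.map (E.xi E.orig) = ED.xi (g'.map E.orig) := by
      rw [E.xi_orig, g'.map_unit E.orig (by rw [E.dim_orig]; omega), hor',
        ED.xi_orig]
    have hgencase : ∀ (k : ℕ) (a : C'.Cell), a ∈ expandedGens C C' E ι gen k →
        k ≤ n → g'.map (E.xi a) = ED.xi (g'.map a) := by
      intro k a ha hkn
      cases k with
      | zero =>
        rcases ha with ⟨c, hc, rfl⟩ | ho
        · exact kind_iota 0 c hc hkn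
        · have ho' : a = E.orig := ho
          subst ho'
          exact kind_orig
      | succ m' =>
        rcases ha with ⟨c, hc, rfl⟩ | ⟨w, ⟨b, hb, rfl⟩, rfl⟩
        · exact kind_iota (m'+1) c hc hkn
        · exact kind_xi m' b hb hkn
    have hW : ∀ x : C'.Cell, (∀ q, q ≤ C'.dim x → q ≤ n →
        g'.map (E.xi (C'.srcI q x)) = ED.xi (g'.map (C'.srcI q x)) ∧
        g'.map (E.xi (C'.tgtI q x)) = ED.xi (g'.map (C'.tgtI q x))) := by
      apply free_induction hC'
      · intro z hz0 q hq hqn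
        have hq0 : q = 0 := by omega
        subst hq0
        rw [srcI_of_le (by omega), tgtI_of_le (by omega)]
        exact ⟨hgencase 0 z (hC'.2.1 z hz0) (by omega),
          hgencase 0 z (hC'.2.1 z hz0) (by omega)⟩
      · refine ⟨?_, ?_, ?_, ?_⟩
        · intro x hΦ q hq hqn
          by_cases h0 : C'.dim x = 0
          · rw [C'.src_dim0 x h0]
            rw [C'.src_dim0 x h0] at hq
            exact hΦ q hq hqn
          · have hdsx : C'.dim (C'.src x) = C'.dim x - 1 := C'.dim_src x h0
            have hql : q < C'.dim x := by omega
            constructor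
            · rw [srcI_src hql]
              exact (hΦ q (by omega) hqn).1
            · by_cases htop : q = C'.dim x - 1
              · rw [tgtI_of_le (by omega)]
                have hsx : C'.src x = C'.srcI q x := (srcI_succ_eq_src (by omega)).symm
                rw [hsx]
                exact (hΦ q (by omega) hqn).1
              · rw [tgtI_src (by omega)]
                exact (hΦ q (by omega) hqn).2
        · intro x hΦ q hq hqn
          by_cases h0 : C'.dim x = 0
          · rw [C'.tgt_dim0 x h0]
            rw [C'.tgt_dim0 x h0] at hq
            exact hΦ q hq hqn
          · have hdsx : C'.dim (C'.tgt x) = C'.dim x - 1 := C'.dim_tgt x h0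
            have hql : q < C'.dim x := by omega
            constructor
            · by_cases htop : q = C'.dim x - 1
              · rw [srcI_of_le (by omega)]
                have hsx : C'.tgt x = C'.tgtI q x := (tgtI_succ_eq_tgt (by omega)).symm
                rw [hsx]
                exact (hΦ q (by omega) hqn).2
              · rw [srcI_tgt (by omega)]
                exact (hΦ q (by omega) hqn).1
            · rw [tgtI_tgt hql]
              exact (hΦ q (by omega) hqn).2
        · intro x hΦ q hq hqn
          have hdu : C'.dim (C'.unit x) = C'.dim x + 1 := C'.dim_unit x
          by_cases hcase : q ≤ C'.dim x
          · constructor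
            · rw [srcI_unit hcase]
              exact (hΦ q hcase hqn).1
            · rw [tgtI_unit hcase]
              exact (hΦ q hcase hqn).2
          · have hqd : q = C'.dim x + 1 := by omega
            rw [srcI_of_le (by omega), tgtI_of_le (by omega)]
            have hcontent : g'.map (E.xi x) = ED.xi (g'.map x) := by
              have h := (hΦ (C'.dim x) le_rfl (by omega)).1
              rwa [srcI_of_le le_rfl] at h
            have hval : g'.map (E.xi (C'.unit x)) = ED.xi (g'.map (C'.unit x)) := by
              rw [E.xi_unit x, g'.map_unit (E.xi x) (by rw [E.dim_xi]; omega),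
                hcontent, ← ED.xi_unit (g'.map x), ← g'.map_unit x (by omega)]
            exact ⟨hval, hval⟩
        · intro p x y hcxy hΦx hΦy q hq hqn
          have hdc : C'.dim (C'.comp p x y) = C'.dim x := C'.dim_comp p x y hcxy
          have hdy : C'.dim y = C'.dim x := hcxy.2.1
          by_cases hqp : q ≤ p
          · constructor
            · rw [srcI_comp_low hcxy hqp]
              exact (hΦy q (by omega) hqn).1
            · rw [tgtI_comp_low hcxy hqp]
              exact (hΦx q (by omega) hqn).2
          · have hq1 : p + 1 ≤ q := by omega
            have hhighs := srcI_comp_high (C'.dim x - q) x y hcxy hq1 rfl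
            have hhight := tgtI_comp_high (C'.dim x - q) x y hcxy hq1 rfl
            constructor
            · rw [hhighs.1]
              refine map_xi_comp E ED g' hhighs.2
                (by rw [dim_srcI q x (by omega)]; omega)
                (hΦy q (by omega) hqn).1 (hΦx q (by omega) hqn).1 ?_
              intro i hi
              rw [srcI_srcI (by omega)]
              exact (hΦy i (by omega) (by omega)).1
            · rw [hhight.1]
              refine map_xi_comp E ED g' hhight.2
                (by rw [dim_tgtI q x (by omega)]; omega)
                (hΦy q (by omega) hqn).2 (hΦx q (by omega) hqn).2 ?_
              intro i hi
              rw [srcI_tgtI (by omega)]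
              exact (hΦy i (by omega) (by omega)).1
      · intro m' hyp a ha q hq hqn
        have hda : C'.dim a = m' + 1 := hC'.1 _ _ ha
        by_cases hql : q ≤ m'
        · have hds : C'.dim (C'.srcI q a) = q := dim_srcI q a (by omega)
          have hdt : C'.dim (C'.tgtI q a) = q := dim_tgtI q a (by omega)
          have hface := hyp (C'.srcI q a) (by omega)
          have hface' := hyp (C'.tgtI q a) (by omega)
          constructor
          · have h1 := (hface q (by omega) hqn).1
            rwa [srcI_of_le (by omega)] at h1
          · have h1 := (hface' q (by omega) hqn).1
            rwa [srcI_of_le (by omega)] at h1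
        · have hqe : q = m' + 1 := by omega
          rw [srcI_of_le (by omega), tgtI_of_le (by omega)]
          exact ⟨hgencase (m'+1) a ha (by omega), hgencase (m'+1) a ha (by omega)⟩
    have hxi' : ∀ x : C'.Cell, C'.dim x + 1 ≤ n + 1 →
        g'.map (E.xi x) = ED.xi (g'.map x) := by
      intro x hx
      have h := (hW x (C'.dim x) le_rfl (by omega)).1
      rwa [srcI_of_le le_rfl] at h
    exact ⟨g', hio', hor', hxi'⟩

end Main


open OmegaCat CategoryTheory

section Main2

variable {C C' : OmegaCat.{u}} {gen : ℕ → Set C.Cell}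
  (hC : FreelyGeneratedBy C gen) (E : Expansion C') (ι : OmegaFunctor C C')
  (hι : Function.Injective ι.map)
  (hC' : FreelyGeneratedBy C' (expandedGens C C' E ι gen))

include hC hι hC'

set_option maxHeartbeats 2000000 in
/-- part 1 of statement 5: the universal property of `(C', E)` -/
theorem main1 {D : OmegaCat.{u}} (ED : Expansion D) (f : OmegaFunctor C D) :
    ∃! g : OmegaFunctor C' D,
      (∀ x, g.map (ι.map x) = f.map x) ∧
      g.map E.orig = ED.orig ∧
      (∀ x, g.map (E.xi x) = ED.xi (g.map x)) := by
  classical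
  have htw := tower hC E ι hι hC' ED f
  let G : ∀ n, PartFunc C' D n := fun n => (htw n).choose
  have hGio : ∀ n, ∀ x : C.Cell, C.dim x ≤ n → (G n).map (ι.map x) = f.map x :=
    fun n => (htw n).choose_spec.1
  have hGor : ∀ n, (G n).map E.orig = ED.orig := fun n => (htw n).choose_spec.2.1
  have hGxi : ∀ n, ∀ x, C'.dim x + 1 ≤ n →
      (G n).map (E.xi x) = ED.xi ((G n).map x) :=
    fun n => (htw n).choose_spec.2.2
  have hagree : ∀ (n1 n2 : ℕ) (g1 : PartFunc C' D n1) (g2 : PartFunc C' D n2),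
      (∀ x, C.dim x ≤ n1 → g1.map (ι.map x) = f.map x) → g1.map E.orig = ED.orig →
      (∀ x, C'.dim x + 1 ≤ n1 → g1.map (E.xi x) = ED.xi (g1.map x)) →
      (∀ x, C.dim x ≤ n2 → g2.map (ι.map x) = f.map x) → g2.map E.orig = ED.orig →
      (∀ x, C'.dim x + 1 ≤ n2 → g2.map (E.xi x) = ED.xi (g2.map x)) →
      ∀ x : C'.Cell, C'.dim x ≤ n1 → C'.dim x ≤ n2 → g1.map x = g2.map x := by
    intro n1 n2 g1 g2 h1i h1o h1x h2i h2o h2x x hx1 hx2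
    refine part_unique hC' (min n1 n2) (g1.restrict _ (min_le_left _ _))
      (g2.restrict _ (min_le_right _ _)) ?_ x (by omega)
    intro k hk a ha
    show g1.map a = g2.map a
    have hn1 : k ≤ n1 := by omega
    have hn2 : k ≤ n2 := by omega
    cases k with
    | zero =>
      rcases ha with ⟨c, hc, rfl⟩ | ho
      · rw [h1i c (by rw [hC.1 _ _ hc]; omega), h2i c (by rw [hC.1 _ _ hc]; omega)]
      · have ho' : a = E.orig := ho
        subst ho'
        rw [h1o, h2o]
    | succ m =>
      rcases ha with ⟨c, hc, rfl⟩ | ⟨w, ⟨b, hb, rfl⟩, rfl⟩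
      · rw [h1i c (by rw [hC.1 _ _ hc]; omega), h2i c (by rw [hC.1 _ _ hc]; omega)]
      · have hdb : C'.dim (ι.map b) = m := by rw [ι.map_dim]; exact hC.1 _ _ hb
        rw [h1x (ι.map b) (by omega), h2x (ι.map b) (by omega),
          h1i b (by rw [hC.1 _ _ hb]; omega), h2i b (by rw [hC.1 _ _ hb]; omega)]
  let gmap : C'.Cell → D.Cell := fun x => (G (C'.dim x)).map x
  have hag2 : ∀ (n : ℕ) (x : C'.Cell), C'.dim x ≤ n → (G n).map x = gmap x := by
    intro n x hx
    exact hagree n (C'.dim x) (G n) (G (C'.dim x)) (hGio n) (hGor n) (hGxi n)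
      (hGio _) (hGor _) (hGxi _) x hx le_rfl
  refine ⟨⟨gmap, ?_, ?_, ?_, ?_, ?_⟩, ⟨?_, ?_, ?_⟩, ?_⟩
  · intro x
    exact (G (C'.dim x)).map_dim x le_rfl
  · intro x
    show gmap (C'.src x) = D.src (gmap x)
    rw [← hag2 (C'.dim x) (C'.src x) (dim_src_le x), ← hag2 (C'.dim x) x le_rfl]
    exact (G (C'.dim x)).map_src x le_rfl
  · intro x
    show gmap (C'.tgt x) = D.tgt (gmap x)
    rw [← hag2 (C'.dim x) (C'.tgt x) (dim_tgt_le x), ← hag2 (C'.dim x) x le_rfl]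
    exact (G (C'.dim x)).map_tgt x le_rfl
  · intro p x y hcc
    show gmap (C'.comp p x y) = D.comp p (gmap x) (gmap y)
    have hd := C'.dim_comp p x y hcc
    have hdy : C'.dim y = C'.dim x := hcc.2.1
    rw [← hag2 (C'.dim x) (C'.comp p x y) (by omega),
      ← hag2 (C'.dim x) x le_rfl, ← hag2 (C'.dim x) y (by omega)]
    exact (G (C'.dim x)).map_comp p x y le_rfl hcc
  · intro x
    show gmap (C'.unit x) = D.unit (gmap x)
    have hdu := C'.dim_unit x
    rw [← hag2 (C'.dim x + 1) (C'.unit x) (by omega),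
      ← hag2 (C'.dim x + 1) x (by omega)]
    exact (G (C'.dim x + 1)).map_unit x le_rfl
  · intro x
    show gmap (ι.map x) = f.map x
    rw [← hag2 (C.dim x) (ι.map x) (by rw [ι.map_dim])]
    exact hGio (C.dim x) x le_rfl
  · show gmap E.orig = ED.orig
    rw [← hag2 0 E.orig (by rw [E.dim_orig])]
    exact hGor 0
  · intro x
    show gmap (E.xi x) = ED.xi (gmap x)
    rw [← hag2 (C'.dim x + 1) (E.xi x) (by rw [E.dim_xi]),
      ← hag2 (C'.dim x + 1) x (by omega)]
    exact hGxi (C'.dim x + 1) x le_rfl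
  · rintro g2 ⟨h2i, h2o, h2x⟩
    apply OmegaFunctor.ext
    funext x
    show g2.map x = gmap x
    rw [← hag2 (C'.dim x) x le_rfl]
    exact hagree (C'.dim x) (C'.dim x) (g2.toPart (C'.dim x)) (G (C'.dim x))
      (fun z _ => h2i z) h2o (fun z _ => h2x z)
      (hGio _) (hGor _) (hGxi _) x le_rfl le_rfl

set_option maxHeartbeats 2000000 in
/-- part 2 of statement 5: identification of the value of any left adjoint -/
theorem main2 (F : OmegaCat.{u} ⥤ ExpCatObj.{u}) (adj : F ⊣ forgetExp) :
    Nonempty (F.obj C ≅ ExpCatObj.mk C' E) := by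
  obtain ⟨gg, ⟨hp1, hp2, hp3⟩, huniq⟩ :=
    main1 hC E ι hι hC' (F.obj C).exp
      (adj.unit.app C : OmegaFunctor C ((F.obj C).cat))
  let X : ExpCatObj.{u} := ExpCatObj.mk C' E
  let φ : F.obj C ⟶ X := (adj.homEquiv C X).symm (ι : C ⟶ forgetExp.obj X)
  have hφ : adj.unit.app C ≫ forgetExp.map φ = (ι : C ⟶ forgetExp.obj X) := by
    have h := (adj.homEquiv C X).apply_symm_apply (ι : C ⟶ forgetExp.obj X)
    rwa [Adjunction.homEquiv_unit] at h
  have hpt : ∀ x : C.Cell,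
      (expHomOf φ).func.map ((adj.unit.app C).map x) = ι.map x := by
    intro x
    exact congrArg (fun k => homMap k x) hφ
  let gginv : X ⟶ F.obj C := ⟨gg, hp2, hp3⟩
  have hcomp1 : gginv ≫ φ = 𝟙 X := by
    obtain ⟨k₀, _, hkuniq⟩ := main1 hC E ι hι hC' E ι
    have h1 : (gginv ≫ φ).func = k₀ := by
      apply hkuniq
      refine ⟨?_, ?_, ?_⟩
      · intro x
        show (expHomOf φ).func.map (gg.map (ι.map x)) = ι.map x
        rw [hp1 x]
        exact hpt x
      · show (expHomOf φ).func.map (gg.map E.orig) = E.orig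
        rw [hp2]
        exact (expHomOf φ).map_orig
      · intro x
        show (expHomOf φ).func.map (gg.map (E.xi x)) =
          E.xi ((expHomOf φ).func.map (gg.map x))
        rw [hp3 x]
        exact (expHomOf φ).map_xi (gg.map x)
    have h2 : (𝟙 X : X ⟶ X).func = k₀ := by
      apply hkuniq
      exact ⟨fun x => rfl, rfl, fun x => rfl⟩
    apply ExpHom.ext
    exact h1.trans h2.symm
  have hcomp2 : φ ≫ gginv = 𝟙 (F.obj C) := by
    apply (adj.homEquiv C (F.obj C)).injective
    have e1 : adj.homEquiv C (F.obj C) (φ ≫ gginv) = adj.unit.app C := by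
      rw [Adjunction.homEquiv_unit]
      apply OmegaFunctor.ext
      funext x
      show gg.map ((expHomOf φ).func.map ((adj.unit.app C).map x)) =
        (adj.unit.app C).map x
      rw [hpt x]
      exact hp1 x
    have e2 : adj.homEquiv C (F.obj C) (𝟙 (F.obj C)) = adj.unit.app C := by
      rw [Adjunction.homEquiv_unit, CategoryTheory.Functor.map_id]
      exact Category.comp_id _
    exact e1.trans e2.symm
  exact ⟨⟨φ, gginv, hcomp2, hcomp1⟩⟩

end Main2

/-- **Statement 5** (the free expansion on a polygraph).
Let `C = S*` be the free ω-category on a polygraph `gen`, and let `C' = E(S)*`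
be the free ω-category on the polygraph `E(S)` (given by the generators of `S`,
the origin, and the cells `ξ_a` for `a` a generator of `S`), with its canonical
origin and expansion `E` and the inclusion `ι : C → C'`. Then `(C', E)` is the
value at `C` of the left adjoint to the forgetful functor `U : Exp → ωCat`:
for every ω-category with expansion `(D, ED)` and every ω-functor `f : C → D`
there is a unique morphism of ω-categories with expansion `g : (C', E) → (D, ED)`
with `g ∘ ι = f`; consequently, for any left adjoint `F` of `forgetExp`, the
expansion monad takes `C = S*` to `C' = E(S)*`. -/
theorem statement5 (C : OmegaCat.{u}) (gen : ℕ → Set C.Cell)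
    (hC : FreelyGeneratedBy C gen)
    (C' : OmegaCat.{u}) (E : Expansion C') (ι : OmegaFunctor C C')
    (hι : Function.Injective ι.map)
    (hC' : FreelyGeneratedBy C' (expandedGens C C' E ι gen)) :
    (∀ (D : OmegaCat.{u}) (ED : Expansion D) (f : OmegaFunctor C D),
      ∃! g : OmegaFunctor C' D,
        (∀ x, g.map (ι.map x) = f.map x) ∧
        g.map E.orig = ED.orig ∧
        (∀ x, g.map (E.xi x) = ED.xi (g.map x))) ∧
    (∀ (F : OmegaCat.{u} ⥤ ExpCatObj.{u}) (adj : F ⊣ forgetExp),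
      Nonempty (F.obj C ≅ ExpCatObj.mk C' E)) := by
  constructor
  · intro D ED f
    exact main1 hC E ι hι hC' ED f
  · intro F adj
    exact main2 hC E ι hι hC' F adj


end Orientals

end
end

section
/- If S is a polygraph, then the augmented directed complex λ(S*) is free, and its basis consists of the classes [x], where x varies among the generators of S; in particular, for each n ≥ 0, λ(S*)_n is the free abelian group ℤ^(S_n) on the set of n-generators and λ(S*)_n* is the submonoid ℕ^(S_n). -/
/-! Formalization of notions from "Orientals as free algebras" (Ara–Lafont–Métayer),
following Burroni's expansion monad construction. Strict ω-categories are encoded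
as a single set of cells with a dimension function, together with (total) source,
target, composition and unit operations, whose axioms are required to hold on the
appropriate domains of definition. -/

noncomputable section

namespace Orientals

open CategoryTheory

universe u v w

/-- The subgroup of relations defining the `m`-th linearization `λ(C)_m`:
it identifies `[x ∘_p y]` with `[x] + [y]` for composable pairs of `m`-cells,
and kills the classes of cells of dimension `≠ m` (so that the quotient is
exactly the abelian group of `m`-chains of `C`). -/
def lamRel (C : OmegaCat.{u}) (m : ℕ) : AddSubgroup (C.Cell →₀ ℤ) :=
  AddSubgroup.closure
    ({z | ∃ p x y, C.Composable p x y ∧ C.dim x = m ∧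
        z = Finsupp.single (C.comp p x y) 1 - Finsupp.single x 1 - Finsupp.single y 1} ∪
      {z | ∃ x, C.dim x ≠ m ∧ z = Finsupp.single x 1})

/-- The degree `m` part `λ(C)_m` of the linearization of an ω-category:
the free abelian group on the `m`-cells of `C` modulo the relations
`[x ∘_p y] = [x] + [y]`. -/
def lam (C : OmegaCat.{u}) (m : ℕ) : Type u := (C.Cell →₀ ℤ) ⧸ lamRel C m

instance (C : OmegaCat.{u}) (m : ℕ) : AddCommGroup (lam C m) :=
  inferInstanceAs (AddCommGroup ((C.Cell →₀ ℤ) ⧸ lamRel C m))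

/-- The canonical projection onto `λ(C)_m`. -/
def lamMk (C : OmegaCat.{u}) (m : ℕ) : (C.Cell →₀ ℤ) →+ lam C m :=
  QuotientAddGroup.mk' _

/-- The class `[x] ∈ λ(C)_m` of a cell of `C`. -/
def lamCls (C : OmegaCat.{u}) (m : ℕ) (x : C.Cell) : lam C m :=
  lamMk C m (Finsupp.single x 1)

/-- The submonoid `λ(C)_m^*` of `λ(C)_m` generated by the classes of the
`m`-cells. -/
def lamPos (C : OmegaCat.{u}) (m : ℕ) : AddSubmonoid (lam C m) :=
  AddSubmonoid.closure {z | ∃ x, C.dim x = m ∧ z = lamCls C m x}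

/-- `φ` is a system of coordinates for `λ(C)_m` with respect to the generators
`gen m` : an isomorphism of abelian groups sending the canonical basis to the
classes of the generators. (When `C` is free on the polygraph `gen`, such a `φ`
exists and is unique.) -/
def IsCoord (C : OmegaCat.{u}) (gen : ℕ → Set C.Cell) (m : ℕ)
    (φ : ({a : C.Cell // a ∈ gen m} →₀ ℤ) ≃+ lam C m) : Prop :=
  ∀ a : {a : C.Cell // a ∈ gen m}, φ (Finsupp.single a 1) = lamCls C m a.1

/-- The generator `b` belongs to the support of `z ∈ λ(C)_m` (with respect to
the basis given by the generators). -/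
def InSuppG (C : OmegaCat.{u}) (gen : ℕ → Set C.Cell) (m : ℕ)
    (z : lam C m) (b : C.Cell) : Prop :=
  ∀ φ, IsCoord C gen m φ → ∃ hb : b ∈ gen m, (φ.symm z) ⟨b, hb⟩ ≠ 0

/-- `z, w ∈ λ(C)_m` have disjoint supports with respect to the basis given by
the generators. -/
def DisjSupp (C : OmegaCat.{u}) (gen : ℕ → Set C.Cell) (m : ℕ)
    (z w : lam C m) : Prop :=
  ∀ φ, IsCoord C gen m φ → Disjoint (φ.symm z).support (φ.symm w).support

/-- The polygraph `gen` is atomic: for every generator `x` of dimension `n` and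
every `i < n`, the supports of `[s_i x]` and `[t_i x]` are disjoint. -/
def AtomicGen (C : OmegaCat.{u}) (gen : ℕ → Set C.Cell) : Prop :=
  ∀ n, ∀ x ∈ gen n, ∀ i, i < n →
    DisjSupp C gen i (lamCls C i (C.srcI i x)) (lamCls C i (C.tgtI i x))

/-- `x` is a generator (of some dimension). -/
def IsGen (C : OmegaCat.{u}) (gen : ℕ → Set C.Cell) (x : C.Cell) : Prop :=
  ∃ n, x ∈ gen n

/-- The polygraph `gen` is strongly loop-free: there is a partial order on its
generators such that `x ≤ y` whenever `y` belongs to the support of `[t x]`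
or `x` belongs to the support of `[s y]`. -/
def SLFGen (C : OmegaCat.{u}) (gen : ℕ → Set C.Cell) : Prop :=
  ∃ le : C.Cell → C.Cell → Prop,
    (∀ x, IsGen C gen x → le x x) ∧
    (∀ x y z, IsGen C gen x → IsGen C gen y → IsGen C gen z →
      le x y → le y z → le x z) ∧
    (∀ x y, IsGen C gen x → IsGen C gen y → le x y → le y x → x = y) ∧
    (∀ m n x y, x ∈ gen m → y ∈ gen n →
      ((1 ≤ m ∧ InSuppG C gen (m - 1) (lamCls C (m - 1) (C.tgt x)) y) ∨
       (1 ≤ n ∧ InSuppG C gen (n - 1) (lamCls C (n - 1) (C.src y)) x)) → le x y)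

/-- A strong Steiner polygraph: atomic and strongly loop-free. -/
def IsFreeOnStrongSteinerPolygraph (C : OmegaCat.{u}) : Prop :=
  ∃ gen, FreelyGeneratedBy C gen ∧ AtomicGen C gen ∧ SLFGen C gen

section KSection

variable {M : Type u} [AddCommMonoid M] {n : ℕ}

/-- Cells of the labelling ω-category: a dimension and a label, the label being
trivial below dimension `n`. -/
abbrev KC (M : Type u) [AddCommMonoid M] (n : ℕ) : Type u := {p : ℕ × M // p.1 < n → p.2 = 0}

def ksrc (x : KC M n) : KC M n :=
  if x.1.1 = 0 then x else
    ⟨(x.1.1 - 1, if x.1.1 - 1 < n then 0 else x.1.2), fun h => if_pos h⟩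

abbrev kcomp (p : ℕ) (x y : KC M n) : KC M n :=
  ⟨(x.1.1, if x.1.1 < n then 0 else if p < n then x.1.2 + y.1.2 else x.1.2),
    fun h => if_pos h⟩

abbrev kunit (x : KC M n) : KC M n :=
  ⟨(x.1.1 + 1, x.1.2), fun h => x.2 (by omega)⟩

lemma kext {x y : KC M n} (h1 : x.1.1 = y.1.1) (h2 : x.1.2 = y.1.2) : x = y :=
  Subtype.ext (Prod.ext h1 h2)

@[simp] lemma kcomp_fst (p : ℕ) (x y : KC M n) : (kcomp p x y).1.1 = x.1.1 := rfl
@[simp] lemma kcomp_snd (p : ℕ) (x y : KC M n) :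
    (kcomp p x y).1.2 = if x.1.1 < n then 0 else if p < n then x.1.2 + y.1.2 else x.1.2 := rfl
@[simp] lemma kunit_fst (x : KC M n) : (kunit x).1.1 = x.1.1 + 1 := rfl
@[simp] lemma kunit_snd (x : KC M n) : (kunit x).1.2 = x.1.2 := rfl

lemma ksrc_fst (x : KC M n) : (ksrc x).1.1 = x.1.1 - 1 := by
  unfold ksrc; split_ifs <;> first | omega | rfl

lemma ksrc_snd (x : KC M n) : (ksrc x).1.2 = if x.1.1 - 1 < n then 0 else x.1.2 := by
  unfold ksrc; split_ifs <;> first | rfl | (exact x.2 (by omega)) | omega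

lemma ksrc_iter (j : ℕ) (x : KC M n) (hj : j ≤ x.1.1) :
    (ksrc^[j] x).1.1 = x.1.1 - j ∧
      (ksrc^[j] x).1.2 = if x.1.1 - j < n then 0 else x.1.2 := by
  induction j with
  | zero =>
    refine ⟨rfl, ?_⟩
    split_ifs with h
    · exact x.2 (by omega)
    · rfl
  | succ j ih =>
    obtain ⟨h1, h2⟩ := ih (by omega)
    rw [Function.iterate_succ_apply']
    refine ⟨by rw [ksrc_fst, h1]; omega, ?_⟩
    rw [ksrc_snd, h1, h2]
    split_ifs <;> first | rfl | omega

lemma kunit_iter (j : ℕ) (x : KC M n) :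
    ((kunit : KC M n → KC M n)^[j] x).1.1 = x.1.1 + j ∧ (kunit^[j] x).1.2 = x.1.2 := by
  induction j with
  | zero => exact ⟨rfl, rfl⟩
  | succ j ih =>
    rw [Function.iterate_succ_apply']
    exact ⟨by rw [kunit_fst, ih.1]; omega, by rw [kunit_snd, ih.2]⟩

/-- The underlying pre-ω-category of the labelling ω-category. -/
abbrev KPre (M : Type u) [AddCommMonoid M] (n : ℕ) : PreOmegaCat.{u} where
  Cell := KC M n
  dim x := x.1.1
  src := ksrc
  tgt := ksrc
  comp := kcomp
  unit := kunit

@[simp] lemma KPre_dim (x : KC M n) : (KPre M n).dim x = x.1.1 := rfl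
@[simp] lemma KPre_src : (KPre M n).src = ksrc := rfl
@[simp] lemma KPre_tgt : (KPre M n).tgt = ksrc := rfl
@[simp] lemma KPre_comp : (KPre M n).comp = kcomp := rfl
@[simp] lemma KPre_unit : (KPre M n).unit = kunit := rfl

lemma KPre_srcI (p : ℕ) (x : KC M n) (hp : p ≤ x.1.1) :
    ((KPre M n).srcI p x).1.1 = p ∧
      ((KPre M n).srcI p x).1.2 = if p < n then 0 else x.1.2 := by
  have h := ksrc_iter (x.1.1 - p) x (by omega)
  have e : x.1.1 - (x.1.1 - p) = p := by omega
  rw [e] at h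
  exact h

lemma KPre_tgtI (p : ℕ) (x : KC M n) (hp : p ≤ x.1.1) :
    ((KPre M n).tgtI p x).1.1 = p ∧
      ((KPre M n).tgtI p x).1.2 = if p < n then 0 else x.1.2 :=
  KPre_srcI p x hp

lemma kcomposable_dim {p : ℕ} {x y : KC M n} (h : (KPre M n).Composable p x y) :
    p < x.1.1 ∧ y.1.1 = x.1.1 := ⟨h.1, h.2.1⟩

lemma kcomposable_lab {p : ℕ} {x y : KC M n} (h : (KPre M n).Composable p x y)
    (hn : n ≤ p) : x.1.2 = y.1.2 := by
  obtain ⟨h1, h2, h3⟩ := h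
  have hx := (KPre_srcI p x (le_of_lt h1)).2
  have h1' : p < x.1.1 := h1
  have h2' : y.1.1 = x.1.1 := h2
  have hy := (KPre_tgtI p y (by omega)).2
  have e : (if p < n then (0:M) else x.1.2) = if p < n then 0 else y.1.2 := by
    rw [← hx, h3, hy]
  simpa [Nat.not_lt.2 hn] using e

end KSection
section KCatSection

variable {M : Type u} [AddCommMonoid M] {n : ℕ}

/-- The labelling ω-category `K(M, n)`. -/
abbrev KCat (M : Type u) [AddCommMonoid M] (n : ℕ) : OmegaCat.{u} where
  toPreOmegaCat := KPre M n
  dim_src x _ := ksrc_fst x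
  dim_tgt x _ := ksrc_fst x
  src_dim0 x h := if_pos h
  tgt_dim0 x h := if_pos h
  glob_ss x _ := rfl
  glob_tt x _ := rfl
  dim_unit x := rfl
  src_unit x := by
    simp only [KPre_src, KPre_unit]
    apply kext <;>
      simp only [ksrc_fst, ksrc_snd, kunit_fst, kunit_snd, Nat.add_sub_cancel] <;>
      split_ifs <;> first | rfl | (exact (x.2 (by omega)).symm)
  tgt_unit x := by
    simp only [KPre_tgt, KPre_unit]
    apply kext <;>
      simp only [ksrc_fst, ksrc_snd, kunit_fst, kunit_snd, Nat.add_sub_cancel] <;>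
      split_ifs <;> first | rfl | (exact (x.2 (by omega)).symm)
  dim_comp p x y _ := rfl
  src_comp_top p x y hc hd := by
    simp only [KPre_src, KPre_comp]
    have h1 : p < x.1.1 := hc.1
    have hyx : y.1.1 = x.1.1 := hc.2.1
    have hd' : x.1.1 = p + 1 := hd
    have hl : n ≤ p → x.1.2 = y.1.2 := kcomposable_lab hc
    apply kext <;>
      simp only [ksrc_fst, ksrc_snd, kcomp_fst, kcomp_snd, hyx] <;>
      split_ifs <;> first | rfl | omega | (exact hl (by omega))
  tgt_comp_top p x y hc hd := by
    simp only [KPre_tgt, KPre_comp]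
    have h1 : p < x.1.1 := hc.1
    have hyx : y.1.1 = x.1.1 := hc.2.1
    have hd' : x.1.1 = p + 1 := hd
    have hl : n ≤ p → x.1.2 = y.1.2 := kcomposable_lab hc
    apply kext <;>
      simp only [ksrc_fst, ksrc_snd, kcomp_fst, kcomp_snd, hyx] <;>
      split_ifs <;> first | rfl | omega | (exact hl (by omega))
  src_comp p x y hc hd := by
    simp only [KPre_src, KPre_comp]
    have h1 : p < x.1.1 := hc.1
    have hyx : y.1.1 = x.1.1 := hc.2.1
    have hd' : p + 1 < x.1.1 := hd
    apply kext <;>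
      simp only [ksrc_fst, ksrc_snd, kcomp_fst, kcomp_snd, hyx] <;>
      split_ifs <;> first | rfl | omega
  tgt_comp p x y hc hd := by
    simp only [KPre_tgt, KPre_comp]
    have h1 : p < x.1.1 := hc.1
    have hyx : y.1.1 = x.1.1 := hc.2.1
    have hd' : p + 1 < x.1.1 := hd
    apply kext <;>
      simp only [ksrc_fst, ksrc_snd, kcomp_fst, kcomp_snd, hyx] <;>
      split_ifs <;> first | rfl | omega
  comp_assoc p x y z hc1 hc2 := by
    simp only [KPre_comp]
    have h1 : p < x.1.1 := hc1.1
    have hyx : y.1.1 = x.1.1 := hc1.2.1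
    have hzy : z.1.1 = x.1.1 := by have := hc2.2.1; have : z.1.1 = y.1.1 := this; omega
    apply kext <;>
      simp only [kcomp_fst, kcomp_snd, hyx, hzy] <;>
      split_ifs <;> first | rfl | omega | (rw [add_assoc])
  comp_unit_src p x hp := by
    simp only [KPre_comp, KPre_unit]
    have hp' : p < x.1.1 := hp
    have hs := KPre_srcI p x (le_of_lt hp')
    have hu := kunit_iter (x.1.1 - p) ((KPre M n).srcI p x)
    apply kext
    · rw [kcomp_fst]
    · simp only [KPre_dim]
      rw [hu.2, hs.2]
      split_ifs <;> first | rfl | omega | (rw [add_zero]) | (exact (x.2 (by omega)).symm)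
  comp_unit_tgt p x hp := by
    simp only [KPre_comp, KPre_unit]
    have hp' : p < x.1.1 := hp
    have hs := KPre_tgtI p x (le_of_lt hp')
    have hu := kunit_iter (x.1.1 - p) ((KPre M n).tgtI p x)
    apply kext
    · simp only [KPre_dim]
      rw [hu.1, hs.1]; omega
    · simp only [KPre_dim]
      rw [hu.1, hs.1, hu.2, hs.2]
      split_ifs <;> first | rfl | omega | (rw [zero_add]) | (exact (x.2 (by omega)).symm)
  interchange p q x y x' y' hqp hc1 hc2 hc3 hc4 := by
    simp only [KPre_comp]
    have h1 : p < x.1.1 := hc1.1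
    have hq1 : q < x.1.1 := hc3.1
    have hyx : y.1.1 = x.1.1 := hc1.2.1
    have hx'x : x'.1.1 = x.1.1 := hc3.2.1
    have hy'x : y'.1.1 = x.1.1 := by
      have h := hc2.2.1; have h' : y'.1.1 = x'.1.1 := h; omega
    have hl1 : n ≤ p → x.1.2 = y.1.2 := kcomposable_lab hc1
    have hl2 : n ≤ p → x'.1.2 = y'.1.2 := kcomposable_lab hc2
    have hl3 : n ≤ q → x.1.2 = x'.1.2 := kcomposable_lab hc3
    apply kext <;>
      simp only [kcomp_fst, kcomp_snd, hyx, hx'x, hy'x] <;>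
      split_ifs <;>
        first
          | rfl | omega
          | (rw [add_add_add_comm])
          | (rw [hl1 (by omega), hl2 (by omega)])
          | (rw [hl3 (by omega)])
          | (rw [hl1 (by omega)])
  unit_comp p x y hc := by
    simp only [KPre_comp, KPre_unit]
    have h1 : p < x.1.1 := hc.1
    have hyx : y.1.1 = x.1.1 := hc.2.1
    apply kext <;>
      simp only [kunit_fst, kunit_snd, kcomp_fst, kcomp_snd, hyx] <;>
      split_ifs <;>
        first
          | rfl | omega
          | (rw [x.2 (by omega), y.2 (by omega), add_zero])

@[simp] lemma KCat_dim (x : KC M n) : (KCat M n).dim x = x.1.1 := rfl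

end KCatSection
section PushSection

variable {M M' : Type u} [AddCommMonoid M] [AddCommMonoid M'] {n : ℕ}

@[simp] lemma KCat_src (x : KC M n) : (KCat M n).src x = ksrc x := rfl
@[simp] lemma KCat_tgt (x : KC M n) : (KCat M n).tgt x = ksrc x := rfl
@[simp] lemma KCat_comp (p : ℕ) (x y : KC M n) : (KCat M n).comp p x y = kcomp p x y := rfl
@[simp] lemma KCat_unit (x : KC M n) : (KCat M n).unit x = kunit x := rfl

lemma keq_low {c c' : KC M n} (h1 : c.1.1 = c'.1.1) (h2 : c.1.1 < n) : c = c' :=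
  kext h1 (by rw [c.2 h2, c'.2 (by omega)])

/-- Relabelling of cells of `K(M,n)` along an additive monoid hom. -/
abbrev kmap (h : M →+ M') (x : KC M n) : KC M' n :=
  ⟨(x.1.1, h x.1.2), fun hl => by rw [x.2 hl, map_zero]⟩

@[simp] lemma kmap_fst (h : M →+ M') (x : KC M n) : (kmap h x).1.1 = x.1.1 := rfl
@[simp] lemma kmap_snd (h : M →+ M') (x : KC M n) : (kmap h x).1.2 = h x.1.2 := rfl

lemma kmap_src (h : M →+ M') (x : KC M n) : kmap h (ksrc x) = ksrc (kmap h x) := by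
  apply kext <;> simp only [kmap_fst, kmap_snd, ksrc_fst, ksrc_snd] <;>
    split_ifs <;> simp

lemma kmap_comp (h : M →+ M') (p : ℕ) (x y : KC M n) :
    kmap h (kcomp p x y) = kcomp p (kmap h x) (kmap h y) := by
  apply kext <;> simp only [kmap_fst, kmap_snd, kcomp_fst, kcomp_snd] <;>
    split_ifs <;> simp

lemma kmap_unit (h : M →+ M') (x : KC M n) : kmap h (kunit x) = kunit (kmap h x) :=
  rfl

/-- Pushforward of a partial functor into `K(M,n)` along an additive monoid hom. -/
def PartFunc.push {C : OmegaCat.{u}} {m : ℕ} (h : M →+ M')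
    (f : PartFunc C (KCat M n) m) : PartFunc C (KCat M' n) m where
  map x := kmap h (f.map x)
  map_dim x hx := f.map_dim x hx
  map_src x hx := by
    simp only [KCat_src]
    rw [show f.map (C.src x) = ksrc (f.map x) from f.map_src x hx, kmap_src]
  map_tgt x hx := by
    simp only [KCat_tgt]
    rw [show f.map (C.tgt x) = ksrc (f.map x) from f.map_tgt x hx, kmap_src]
  map_comp p x y hx hc := by
    simp only [KCat_comp]
    rw [show f.map (C.comp p x y) = kcomp p (f.map x) (f.map y) from
      f.map_comp p x y hx hc, kmap_comp]
  map_unit x hx := by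
    simp only [KCat_unit]
    rw [show f.map (C.unit x) = kunit (f.map x) from f.map_unit x hx, kmap_unit]

/-- Weakening of a partial functor to a lower level. -/
def PartFunc.weaken {C D : OmegaCat.{u}} {m : ℕ} (k : ℕ) (hk : k ≤ m)
    (f : PartFunc C D m) : PartFunc C D k where
  map := f.map
  map_dim x hx := f.map_dim x (hx.trans hk)
  map_src x hx := f.map_src x (hx.trans hk)
  map_tgt x hx := f.map_tgt x (hx.trans hk)
  map_comp p x y hx hc := f.map_comp p x y (hx.trans hk) hc
  map_unit x hx := f.map_unit x (hx.trans hk)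

end PushSection

section ChainSection

variable (C : OmegaCat.{u}) (gen : ℕ → Set C.Cell) (n : ℕ)

/-- Free commutative monoid on the `n`-generators. -/
abbrev Mplus : Type u := ({a : C.Cell // a ∈ gen n} →₀ ℕ)

open Classical in
/-- The cell of `K(ℕ^(gen n), n)` attached to a generator. -/
noncomputable def gcell (k : ℕ) (a : C.Cell) : KC (Mplus C gen n) n :=
  ⟨(k, if hk : k = n ∧ a ∈ gen n then Finsupp.single ⟨a, hk.2⟩ 1 else 0), by
    intro hl
    rw [dif_neg]
    rintro ⟨rfl, -⟩
    omega⟩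

@[simp] lemma gcell_fst (k : ℕ) (a : C.Cell) : (gcell C gen n k a).1.1 = k := rfl

lemma gcell_snd_gen (a : C.Cell) (ha : a ∈ gen n) :
    (gcell C gen n n a).1.2 = Finsupp.single ⟨a, ha⟩ 1 := by
  simp only [gcell]
  rw [dif_pos (⟨rfl, ha⟩ : n = n ∧ a ∈ gen n)]

/-- Base case of the counting functor. -/
noncomputable def fzero : PartFunc C (KCat (Mplus C gen n) n) 0 where
  map x := gcell C gen n 0 x
  map_dim x hx := by
    show (0 : ℕ) = C.dim x
    omega
  map_src x hx := by
    rw [C.src_dim0 x (by omega)]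
    exact ((KCat (Mplus C gen n) n).src_dim0 (gcell C gen n 0 x) (show (gcell C gen n 0 x).1.1 = 0 from rfl)).symm
  map_tgt x hx := by
    rw [C.tgt_dim0 x (by omega)]
    exact ((KCat (Mplus C gen n) n).tgt_dim0 (gcell C gen n 0 x) (show (gcell C gen n 0 x).1.1 = 0 from rfl)).symm
  map_comp p x y hx hc := absurd hc.1 (by omega)
  map_unit x hx := absurd hx (by omega)

/-- The counting functor on cells of dimension at most `k ≤ n`, built by the
universal property of a free ω-category. -/
noncomputable def chain (hfree : FreelyGeneratedBy C gen) :
    (k : ℕ) → k ≤ n →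
      {f : PartFunc C (KCat (Mplus C gen n) n) k //
        ∀ a ∈ gen k, f.map a = gcell C gen n k a}
  | 0, _ => ⟨fzero C gen n, fun _ _ => rfl⟩
  | (k+1), hk => by
    obtain ⟨prev, hprev⟩ := chain hfree k (by omega)
    have hcond : ∀ a ∈ gen (k+1),
        (KCat (Mplus C gen n) n).dim (gcell C gen n (k+1) a) = k + 1 ∧
        (KCat (Mplus C gen n) n).src (gcell C gen n (k+1) a) = prev.map (C.src a) ∧
        (KCat (Mplus C gen n) n).tgt (gcell C gen n (k+1) a) = prev.map (C.tgt a) := by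
      intro a ha
      have hda : C.dim a = k + 1 := hfree.1 (k+1) a ha
      have hds : C.dim (C.src a) = k := by
        rw [C.dim_src a (by omega), hda]; omega
      have hdt : C.dim (C.tgt a) = k := by
        rw [C.dim_tgt a (by omega), hda]; omega
      have hms : (prev.map (C.src a)).1.1 = C.dim (C.src a) :=
        prev.map_dim _ (by omega)
      have hmt : (prev.map (C.tgt a)).1.1 = C.dim (C.tgt a) :=
        prev.map_dim _ (by omega)
      refine ⟨rfl, ?_, ?_⟩
      · apply keq_low
        · rw [KCat_src, ksrc_fst, gcell_fst, hms, hds]; omega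
        · rw [KCat_src, ksrc_fst, gcell_fst]; omega
      · apply keq_low
        · rw [KCat_tgt, ksrc_fst, gcell_fst, hmt, hdt]; omega
        · rw [KCat_tgt, ksrc_fst, gcell_fst]; omega
    have hex := (hfree.2.2 k (KCat (Mplus C gen n) n) prev (gcell C gen n (k+1)) hcond).1
    exact ⟨hex.choose, fun a ha => hex.choose_spec.2 a ha⟩

end ChainSection
section LamLemmas

variable (C : OmegaCat.{u})

lemma lamCls_eq_zero {m : ℕ} {x : C.Cell} (hx : C.dim x ≠ m) : lamCls C m x = 0 := by
  have hmem : Finsupp.single x (1 : ℤ) ∈ lamRel C m :=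
    AddSubgroup.subset_closure (Or.inr ⟨x, hx, rfl⟩)
  exact (QuotientAddGroup.eq_zero_iff _).2 hmem

lemma lamCls_comp {m p : ℕ} {x y : C.Cell} (hc : C.Composable p x y)
    (hd : C.dim x = m) :
    lamCls C m (C.comp p x y) = lamCls C m x + lamCls C m y := by
  have hmem : (Finsupp.single (C.comp p x y) (1 : ℤ)
      - Finsupp.single x 1 - Finsupp.single y 1) ∈ lamRel C m :=
    AddSubgroup.subset_closure (Or.inl ⟨p, x, y, hc, hd, rfl⟩)
  have h0 : lamMk C m (Finsupp.single (C.comp p x y) (1 : ℤ)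
      - Finsupp.single x 1 - Finsupp.single y 1) = 0 :=
    (QuotientAddGroup.eq_zero_iff _).2 hmem
  rw [map_sub, map_sub, sub_sub, sub_eq_zero] at h0
  exact h0

lemma lamCls_unit {m : ℕ} {x : C.Cell} (hm : C.dim x + 1 = m) :
    lamCls C m (C.unit x) = 0 := by
  have hdu : C.dim (C.unit x) = C.dim x + 1 := C.dim_unit x
  have hc : C.Composable (C.dim x) (C.unit x) (C.unit x) := by
    refine ⟨by rw [hdu]; omega, rfl, ?_⟩
    show C.src^[C.dim (C.unit x) - C.dim x] (C.unit x)
        = C.tgt^[C.dim (C.unit x) - C.dim x] (C.unit x)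
    rw [hdu]
    simp only [Nat.add_sub_cancel_left, Function.iterate_one, C.src_unit, C.tgt_unit]
  have hcomp : C.comp (C.dim x) (C.unit x) (C.unit x) = C.unit x := by
    have h := C.comp_unit_src (C.dim x) (C.unit x) (by rw [hdu]; omega)
    unfold PreOmegaCat.srcI at h
    rw [hdu] at h
    simp only [Nat.add_sub_cancel_left, Function.iterate_one, C.src_unit] at h
    exact h
  have h2 := lamCls_comp C hc (hdu.trans hm)
  rw [hcomp] at h2
  have h3 : lamCls C m (C.unit x) + 0
      = lamCls C m (C.unit x) + lamCls C m (C.unit x) := by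
    rw [add_zero]; exact h2
  exact (add_left_cancel h3).symm

end LamLemmas

section G2Section

variable (C : OmegaCat.{u}) (n : ℕ)

/-- The tautological labelling of cells by their classes in `λ(C)_n`. -/
def g2map (x : C.Cell) : KC (lam C n) n :=
  ⟨(C.dim x, if C.dim x = n then lamCls C n x else 0), fun hl => if_neg (by omega)⟩

@[simp] lemma g2map_fst (x : C.Cell) : (g2map C n x).1.1 = C.dim x := rfl
@[simp] lemma g2map_snd (x : C.Cell) :
    (g2map C n x).1.2 = if C.dim x = n then lamCls C n x else 0 := rfl

/-- The tautological partial functor into `K(λ(C)_n, n)`. -/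
def g2part : PartFunc C (KCat (lam C n) n) n where
  map := g2map C n
  map_dim x _ := rfl
  map_src x hx := by
    by_cases h0 : C.dim x = 0
    · rw [C.src_dim0 x h0]
      exact ((KCat (lam C n) n).src_dim0 (g2map C n x)
        (show (g2map C n x).1.1 = 0 from h0)).symm
    · have hds : C.dim (C.src x) = C.dim x - 1 := C.dim_src x h0
      apply keq_low
      · rw [KCat_src, ksrc_fst, g2map_fst, g2map_fst, hds]
      · rw [g2map_fst, hds]; omega
  map_tgt x hx := by
    by_cases h0 : C.dim x = 0
    · rw [C.tgt_dim0 x h0]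
      exact ((KCat (lam C n) n).tgt_dim0 (g2map C n x)
        (show (g2map C n x).1.1 = 0 from h0)).symm
    · have hdt : C.dim (C.tgt x) = C.dim x - 1 := C.dim_tgt x h0
      apply keq_low
      · rw [KCat_tgt, ksrc_fst, g2map_fst, g2map_fst, hdt]
      · rw [g2map_fst, hdt]; omega
  map_comp p x y hx hc := by
    have hdc : C.dim (C.comp p x y) = C.dim x := C.dim_comp p x y hc
    have h1 : p < C.dim x := hc.1
    have hdy : C.dim y = C.dim x := hc.2.1
    by_cases hn : C.dim x = n
    · apply kext
      · rw [KCat_comp, kcomp_fst p (g2map C n x) (g2map C n y), g2map_fst, g2map_fst, hdc]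
      · rw [KCat_comp, kcomp_snd, g2map_snd, g2map_snd, g2map_snd, g2map_fst,
          hdc, hdy]
        split_ifs <;> first | omega | (exact lamCls_comp C hc hn)
    · apply keq_low
      · rw [KCat_comp, kcomp_fst p (g2map C n x) (g2map C n y), g2map_fst, g2map_fst, hdc]
      · rw [g2map_fst, hdc]; omega
  map_unit x hx := by
    have hdu : C.dim (C.unit x) = C.dim x + 1 := C.dim_unit x
    by_cases hn : C.dim x + 1 = n
    · apply kext
      · rw [KCat_unit, kunit_fst, g2map_fst, g2map_fst, hdu]
      · rw [KCat_unit, kunit_snd, g2map_snd, g2map_snd, hdu]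
        split_ifs <;> first | omega | (exact lamCls_unit C hn)
    · apply keq_low
      · rw [KCat_unit, kunit_fst, g2map_fst, g2map_fst, hdu]
      · rw [g2map_fst, hdu]; omega

end G2Section
section CompareSection

variable (C : OmegaCat.{u}) (gen : ℕ → Set C.Cell) (n : ℕ)
  (hfree : FreelyGeneratedBy C gen)

/-- Evaluation of nonnegative combinations of generators in `λ(C)_n`. -/
noncomputable def theta : Mplus C gen n →+ lam C n :=
  Finsupp.liftAddHom fun a => (multiplesHom (lam C n)) (lamCls C n a.1)

lemma theta_single (a : {a : C.Cell // a ∈ gen n}) :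
    theta C gen n (Finsupp.single a 1) = lamCls C n a.1 := by
  rw [theta, Finsupp.liftAddHom_apply_single, multiplesHom_apply, one_nsmul]

/-- The counting functor at level `n`. -/
noncomputable def fplus : PartFunc C (KCat (Mplus C gen n) n) n :=
  (chain C gen n hfree n le_rfl).1

lemma fplus_gen : ∀ a ∈ gen n,
    (fplus C gen n hfree).map a = gcell C gen n n a :=
  (chain C gen n hfree n le_rfl).2

/-- The counting functor with values in `λ(C)_n`. -/
noncomputable def gone : PartFunc C (KCat (lam C n) n) n :=
  PartFunc.push (theta C gen n) (fplus C gen n hfree)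

lemma gone_map (x : C.Cell) :
    (gone C gen n hfree).map x = kmap (theta C gen n) ((fplus C gen n hfree).map x) :=
  rfl

lemma gone_eq_g2 : ∀ k, k ≤ n → ∀ x, C.dim x ≤ k →
    (gone C gen n hfree).map x = g2map C n x := by
  intro k
  induction k with
  | zero =>
    intro _ x hx
    have hx0 : C.dim x = 0 := by omega
    by_cases hn : n = 0
    · subst hn
      have hgen : x ∈ gen 0 := hfree.2.1 x hx0
      rw [gone_map, fplus_gen C gen 0 hfree x hgen]
      apply kext
      · rw [kmap_fst, gcell_fst, g2map_fst, hx0]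
      · rw [kmap_snd, g2map_snd, gcell_snd_gen C gen 0 x hgen, theta_single,
          if_pos hx0]
    · have hfd : ((fplus C gen n hfree).map x).1.1 = C.dim x :=
        (fplus C gen n hfree).map_dim x (by omega)
      apply keq_low
      · rw [gone_map, kmap_fst, g2map_fst, hfd]
      · rw [gone_map, kmap_fst, hfd]; omega
  | succ k ih =>
    intro hk x hx
    have hkn : k ≤ n := by omega
    -- agreement on the new generators
    have hgen_agree : ∀ a ∈ gen (k + 1),
        (gone C gen n hfree).map a = g2map C n a := by
      intro a ha
      have hda : C.dim a = k + 1 := hfree.1 (k + 1) a ha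
      by_cases hn : k + 1 = n
      · have hagen : a ∈ gen n := by rw [← hn]; exact ha
        rw [gone_map, fplus_gen C gen n hfree a (hagen)]
        apply kext
        · rw [kmap_fst, gcell_fst, g2map_fst, hda, hn]
        · rw [kmap_snd, g2map_snd, gcell_snd_gen C gen n a hagen, theta_single,
            if_pos (by omega : C.dim a = n)]
      · have hfd : ((fplus C gen n hfree).map a).1.1 = C.dim a :=
          (fplus C gen n hfree).map_dim a (by omega)
        apply keq_low
        · rw [gone_map, kmap_fst, g2map_fst, hfd]
        · rw [gone_map, kmap_fst, hfd]; omega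
    -- conditions for the universal property, based at the weakened g2part
    have hcond : ∀ a ∈ gen (k + 1),
        (KCat (lam C n) n).dim (g2map C n a) = k + 1 ∧
        (KCat (lam C n) n).src (g2map C n a)
          = (PartFunc.weaken k hkn (g2part C n)).map (C.src a) ∧
        (KCat (lam C n) n).tgt (g2map C n a)
          = (PartFunc.weaken k hkn (g2part C n)).map (C.tgt a) := by
      intro a ha
      have hda : C.dim a = k + 1 := hfree.1 (k + 1) a ha
      refine ⟨hda, ?_, ?_⟩
      · exact ((g2part C n).map_src a (by omega)).symm
      · exact ((g2part C n).map_tgt a (by omega)).symm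
    have huniq := (hfree.2.2 k (KCat (lam C n) n)
      (PartFunc.weaken k hkn (g2part C n)) (g2map C n) hcond).2
    exact huniq (PartFunc.weaken (k+1) hk (gone C gen n hfree))
      (PartFunc.weaken (k+1) hk (g2part C n))
      ⟨fun y hy => ih hkn y hy, hgen_agree⟩
      ⟨fun y _ => rfl, fun a _ => rfl⟩ x hx

lemma theta_lab (x : C.Cell) (hx : C.dim x = n) :
    theta C gen n ((fplus C gen n hfree).map x).1.2 = lamCls C n x := by
  have h := gone_eq_g2 C gen n hfree n le_rfl x (le_of_eq hx)
  have h2 := congrArg (fun c : KC (lam C n) n => c.1.2) h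
  simp only [gone_map, kmap_snd, g2map_snd] at h2
  rw [h2, if_pos hx]

end CompareSection
section PsiSection

variable (C : OmegaCat.{u}) (gen : ℕ → Set C.Cell) (n : ℕ)
  (hfree : FreelyGeneratedBy C gen)

/-- The free abelian group on the `n`-generators. -/
abbrev MZ : Type u := ({a : C.Cell // a ∈ gen n} →₀ ℤ)

/-- Inclusion of nonnegative combinations. -/
noncomputable def iota : Mplus C gen n →+ MZ C gen n :=
  Finsupp.mapRange.addMonoidHom (Nat.castAddMonoidHom ℤ)

/-- The coordinate vector of a cell. -/
noncomputable def labz (x : C.Cell) : MZ C gen n :=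
  if C.dim x = n then iota C gen n ((fplus C gen n hfree).map x).1.2 else 0

/-- Lift of the coordinate map to the free abelian group on all cells. -/
noncomputable def Fhom : (C.Cell →₀ ℤ) →+ MZ C gen n :=
  Finsupp.liftAddHom fun x => (zmultiplesHom (MZ C gen n)) (labz C gen n hfree x)

lemma Fhom_single (x : C.Cell) :
    Fhom C gen n hfree (Finsupp.single x 1) = labz C gen n hfree x := by
  rw [Fhom, Finsupp.liftAddHom_apply_single, zmultiplesHom_apply, one_zsmul]

lemma labz_comp {p : ℕ} {x y : C.Cell} (hc : C.Composable p x y)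
    (hd : C.dim x = n) :
    labz C gen n hfree (C.comp p x y)
      = labz C gen n hfree x + labz C gen n hfree y := by
  have hdc : C.dim (C.comp p x y) = C.dim x := C.dim_comp p x y hc
  have hdy : C.dim y = C.dim x := hc.2.1
  have hcm := (fplus C gen n hfree).map_comp p x y (by omega) hc
  have hfx : ((fplus C gen n hfree).map x).1.1 = C.dim x :=
    (fplus C gen n hfree).map_dim x (by omega)
  have hlab := congrArg (fun c : KC (Mplus C gen n) n => c.1.2) hcm
  simp only [KCat_comp, kcomp_snd, hfx] at hlab
  rw [if_neg (by omega), if_pos (by omega : p < n)] at hlab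
  rw [labz, labz, labz, if_pos (by omega : C.dim (C.comp p x y) = n),
    if_pos (by omega : C.dim x = n), if_pos (by omega : C.dim y = n),
    hlab, map_add]

lemma Fhom_ker : lamRel C n ≤ (Fhom C gen n hfree).ker := by
  rw [lamRel]
  rw [AddSubgroup.closure_le]
  rintro z (⟨p, x, y, hc, hd, rfl⟩ | ⟨x, hx, rfl⟩) <;>
      rw [SetLike.mem_coe, AddMonoidHom.mem_ker]
  · rw [map_sub, map_sub, Fhom_single, Fhom_single, Fhom_single,
      labz_comp C gen n hfree hc hd]
    abel
  · rw [Fhom_single, labz, if_neg hx]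

/-- The coordinate homomorphism `λ(C)_n →+ ℤ^(gen n)`. -/
noncomputable def psi : lam C n →+ MZ C gen n :=
  QuotientAddGroup.lift (lamRel C n) (Fhom C gen n hfree) (Fhom_ker C gen n hfree)

lemma psi_cls (x : C.Cell) :
    psi C gen n hfree (lamCls C n x) = labz C gen n hfree x := by
  show QuotientAddGroup.lift (lamRel C n) (Fhom C gen n hfree)
    (Fhom_ker C gen n hfree) ((QuotientAddGroup.mk' _) (Finsupp.single x 1))
      = _
  rw [QuotientAddGroup.mk'_apply, QuotientAddGroup.lift_mk', Fhom_single]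

/-- The homomorphism `ℤ^(gen n) →+ λ(C)_n` sending basis vectors to classes of
generators. -/
noncomputable def phi0 : MZ C gen n →+ lam C n :=
  Finsupp.liftAddHom fun a => (zmultiplesHom (lam C n)) (lamCls C n a.1)

lemma phi0_single (a : {a : C.Cell // a ∈ gen n}) (z : ℤ) :
    phi0 C gen n (Finsupp.single a z) = z • lamCls C n a.1 := by
  rw [phi0, Finsupp.liftAddHom_apply_single, zmultiplesHom_apply]

lemma labz_gen (a : {a : C.Cell // a ∈ gen n}) :
    labz C gen n hfree a.1 = Finsupp.single a 1 := by
  have hda : C.dim a.1 = n := hfree.1 n a.1 a.2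
  rw [labz, if_pos hda, fplus_gen C gen n hfree a.1 a.2,
    gcell_snd_gen C gen n a.1 a.2]
  rw [iota, Finsupp.mapRange.addMonoidHom_apply, Finsupp.mapRange_single]
  norm_num

lemma psi_phi0 (z : MZ C gen n) :
    psi C gen n hfree (phi0 C gen n z) = z := by
  have key : (psi C gen n hfree).comp (phi0 C gen n) = AddMonoidHom.id _ := by
    apply Finsupp.addHom_ext'
    intro a
    apply AddMonoidHom.ext_int
    show psi C gen n hfree (phi0 C gen n (Finsupp.single a 1))
      = Finsupp.single a 1
    rw [phi0_single, one_zsmul, psi_cls, labz_gen]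
  exact DFunLike.congr_fun key z

lemma phi0_iota (v : Mplus C gen n) :
    phi0 C gen n (iota C gen n v) = theta C gen n v := by
  have key : (phi0 C gen n).comp (iota C gen n) = theta C gen n := by
    apply Finsupp.addHom_ext'
    intro a
    apply AddMonoidHom.ext_nat
    show phi0 C gen n (iota C gen n (Finsupp.single a 1))
      = theta C gen n (Finsupp.single a 1)
    rw [theta_single, iota, Finsupp.mapRange.addMonoidHom_apply,
      Finsupp.mapRange_single]
    norm_num
    rw [phi0_single, one_zsmul]
  exact DFunLike.congr_fun key v

lemma phi0_psi (w : lam C n) :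
    phi0 C gen n (psi C gen n hfree w) = w := by
  obtain ⟨v, rfl⟩ := QuotientAddGroup.mk'_surjective (lamRel C n) w
  have key : ((phi0 C gen n).comp (psi C gen n hfree)).comp
      (QuotientAddGroup.mk' (lamRel C n)) = QuotientAddGroup.mk' (lamRel C n) := by
    apply Finsupp.addHom_ext'
    intro x
    apply AddMonoidHom.ext_int
    show phi0 C gen n (psi C gen n hfree (lamCls C n x))
      = lamMk C n (Finsupp.single x 1)
    rw [psi_cls]
    by_cases hx : C.dim x = n
    · rw [labz, if_pos hx, phi0_iota, theta_lab C gen n hfree x hx]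
      rfl
    · rw [labz, if_neg hx, map_zero]
      exact (lamCls_eq_zero C hx).symm
  exact DFunLike.congr_fun key v

lemma psi_nonneg (w : lam C n) (hw : w ∈ lamPos C n)
    (a : {a : C.Cell // a ∈ gen n}) : 0 ≤ psi C gen n hfree w a := by
  refine AddSubmonoid.closure_induction
    (motive := fun w _ => ∀ a, 0 ≤ psi C gen n hfree w a) ?_ ?_ ?_ hw a
  · rintro z ⟨x, hx, rfl⟩ b
    rw [psi_cls, labz, if_pos hx, iota, Finsupp.mapRange.addMonoidHom_apply,
      Finsupp.mapRange_apply]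
    exact Int.natCast_nonneg _
  · intro b
    rw [map_zero, Finsupp.coe_zero, Pi.zero_apply]
  · intro w w' _ _ h1 h2 b
    rw [map_add, Finsupp.add_apply]
    exact add_nonneg (h1 b) (h2 b)

lemma phi0_mem (hfg : FreelyGeneratedBy C gen) (z : MZ C gen n) (hz : ∀ a, 0 ≤ z a) :
    phi0 C gen n z ∈ lamPos C n := by
  induction z using Finsupp.induction with
  | zero => rw [map_zero]; exact (lamPos C n).zero_mem
  | single_add a b f hf hb ih =>
    have hfa : f a = 0 := Finsupp.notMem_support_iff.1 hf
    have hb0 : 0 ≤ b := by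
      have := hz a
      rwa [Finsupp.add_apply, Finsupp.single_eq_same, hfa, add_zero] at this
    have hfz : ∀ c, 0 ≤ f c := by
      intro c
      by_cases hc : c = a
      · rw [hc, hfa]
      · have := hz c
        rwa [Finsupp.add_apply, Finsupp.single_eq_of_ne hc, zero_add] at this
    rw [map_add, phi0_single]
    refine (lamPos C n).add_mem ?_ (ih hfz)
    rw [← Int.toNat_of_nonneg hb0, natCast_zsmul]
    have hmem : lamCls C n a.1 ∈ lamPos C n :=
      AddSubmonoid.subset_closure ⟨a.1, hfg.1 n a.1 a.2, rfl⟩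
    exact AddSubmonoid.nsmul_mem _ hmem _

end PsiSection
/-- **Statement 14.** If `S` is a polygraph (with `C = S*` the free ω-category
it generates), then the augmented directed complex `λ(S*)` is free, with basis
the classes `[x]` of the generators of `S`: in each degree `n`, `λ(S*)_n` is
isomorphic to the free abelian group `ℤ^(S_n)` on the `n`-generators, by an
isomorphism matching the canonical basis with the classes of the generators and
the nonnegative combinations `ℕ^(S_n)` with the submonoid `λ(S*)_n^*`. -/
theorem statement14 (C : OmegaCat.{u}) (gen : ℕ → Set C.Cell)
    (h : FreelyGeneratedBy C gen) (n : ℕ) :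
    ∃ φ : ({a : C.Cell // a ∈ gen n} →₀ ℤ) ≃+ lam C n,
      IsCoord C gen n φ ∧ ∀ z, (∀ a, 0 ≤ z a) ↔ φ z ∈ lamPos C n := by
  refine ⟨AddEquiv.mk'
    (⟨⇑(phi0 C gen n), ⇑(psi C gen n h), psi_phi0 C gen n h, phi0_psi C gen n h⟩ :
      ({a : C.Cell // a ∈ gen n} →₀ ℤ) ≃ lam C n)
    (fun x y => map_add (phi0 C gen n) x y), fun a => ?_, fun z => ?_⟩
  · show phi0 C gen n (Finsupp.single a 1) = lamCls C n a.1
    rw [phi0_single, one_zsmul]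
  · show (∀ a, 0 ≤ z a) ↔ phi0 C gen n z ∈ lamPos C n
    constructor
    · exact phi0_mem C gen n h z
    · intro hmem a
      have h2 := psi_nonneg C gen n h _ hmem a
      rwa [psi_phi0 C gen n h z] at h2

end Orientals

end
end
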